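/- arXiv:2309.03757 — 4 statements merged into one kernel-verified Lean document; each statement's English description precedes it below -/
import Mathlib

section
/- There exists a compact geodesic metric space X whose cop number is infinite, i.e. for every k ∈ ℕ, k cops do not have a winning strategy in the game of Cops and Robber on X. Moreover, for every k ∈ ℕ the robber has a strategy against k cops that uses a constant agility function and guarantees that inf_n min_{i≤k} d(r^n, c^n_i) > 0 against every cop play. -/
/-!
Game of Cops and Robber on metric spaces, following Mohar, formalized relative to an
explicit distance function `d : Y → Y → ℝ`.
-/

open Set Filter Topology

/-- The length of (the restriction to `[0,1]` of) a map `p : ℝ → Y` with respect to an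
extended-real-valued cost function `c`, defined as the supremum over all finite monotone
partitions of `[0,1]` of the sums of the costs of consecutive points. -/
noncomputable def elen {Y : Type*} (c : Y → Y → ENNReal) (p : ℝ → Y) : ENNReal :=
  ⨆ q : ℕ × {u : ℕ → ℝ // Monotone u ∧ ∀ i, u i ∈ Set.Icc (0 : ℝ) 1},
    ∑ i ∈ Finset.range q.1, c (p (q.2.1 i)) (p (q.2.1 (i + 1)))

/-- Continuity on `[0,1]` of a map `p : ℝ → Y` with respect to a cost function `c`,
stated in `ε`-`δ` form. -/
def econt {Y : Type*} (c : Y → Y → ENNReal) (p : ℝ → Y) : Prop :=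
  ∀ t ∈ Set.Icc (0 : ℝ) 1, ∀ ε : ENNReal, 0 < ε →
    ∃ δ : ℝ, 0 < δ ∧ ∀ t' ∈ Set.Icc (0 : ℝ) 1, |t' - t| < δ → c (p t) (p t') < ε

/-- `d` is a metric on `Y`. -/
def IsMetricD (Y : Type*) (d : Y → Y → ℝ) : Prop :=
  (∀ x, d x x = 0) ∧ (∀ x y, d x y = 0 → x = y) ∧
    (∀ x y, d x y = d y x) ∧ (∀ x y z, d x z ≤ d x y + d y z)

/-- Compactness of the metric space `(Y,d)`, in its sequential form: every sequence has a
convergent subsequence. -/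
def CompactD (Y : Type*) (d : Y → Y → ℝ) : Prop :=
  ∀ u : ℕ → Y, ∃ (x : Y) (φ : ℕ → ℕ), StrictMono φ ∧
    Filter.Tendsto (fun n => d (u (φ n)) x) Filter.atTop (nhds 0)

/-- `(Y,d)` is a geodesic metric space: any two points `x, y` are joined by a continuous
path `p : [0,1] → Y` whose length equals `d x y`. -/
def IsGeodesicD (Y : Type*) (d : Y → Y → ℝ) : Prop :=
  ∀ x y : Y, ∃ p : ℝ → Y,
    econt (fun a b => ENNReal.ofReal (d a b)) p ∧ p 0 = x ∧ p 1 = y ∧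
      elen (fun a b => ENNReal.ofReal (d a b)) p = ENNReal.ofReal (d x y)

/-- A game space is a (nonempty) compact geodesic metric space. -/
def GameSpaceD (Y : Type*) (d : Y → Y → ℝ) : Prop :=
  Nonempty Y ∧ IsMetricD Y d ∧ CompactD Y d ∧ IsGeodesicD Y d

/-- An agility function: positive, with divergent sum. -/
def IsAgility (τ : ℕ → ℝ) : Prop := (∀ n, 0 < τ n) ∧ ¬ Summable τ

/-- The trajectory of the `k` cops determined by initial positions `c0`, a cop strategy `σ`
(where `σ n` computes the cops' positions at step `n+1` from the robber's positions
`r^0, …, r^(n+1)`), and a robber trajectory `r`. -/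
def copTraj {Y : Type*} {k : ℕ} (c0 : Fin k → Y)
    (σ : (n : ℕ) → (Fin (n + 2) → Y) → Fin k → Y) (r : ℕ → Y) : ℕ → Fin k → Y
  | 0 => c0
  | n + 1 => σ n fun i => r i

/-- The trajectory of the robber determined by his initial position `r0`, a robber strategy
`ρ` (where `ρ n` computes the robber's position at step `n+1` from the cops' positions
`c^0, …, c^n`), and a cop trajectory `c`. -/
def robTraj {Y : Type*} {k : ℕ} (r0 : Y)
    (ρ : (n : ℕ) → (Fin (n + 1) → Fin k → Y) → Y) (c : ℕ → Fin k → Y) : ℕ → Y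
  | 0 => r0
  | n + 1 => ρ n fun i => c i

/-- `k` cops have a winning strategy on `(Y,d)`: for every agility function and every initial
position chosen by the robber there is a cop strategy `σ`, assigning legal cop moves to every
history, such that against every legal robber trajectory the cops come arbitrarily close to
the robber. -/
def CopsWinWith (Y : Type*) (d : Y → Y → ℝ) (k : ℕ) : Prop :=
  ∀ τ : ℕ → ℝ, IsAgility τ → ∀ r0 : Y, ∀ c0 : Fin k → Y,
    ∃ σ : (n : ℕ) → (Fin (n + 2) → Y) → Fin k → Y,
      ∀ r : ℕ → Y, r 0 = r0 → (∀ n, d (r n) (r (n + 1)) ≤ τ (n + 1)) →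
        (∀ n i, d (copTraj c0 σ r n i) (copTraj c0 σ r (n + 1) i) ≤ τ (n + 1)) ∧
          (∀ ε : ℝ, 0 < ε → ∃ n i, d (r n) (copTraj c0 σ r n i) < ε)

/-- The cop number of `(Y,d)`, as an extended natural number: the least `k` such that `k`
cops have a winning strategy (`⊤` if there is no such `k`). -/
noncomputable def copNumber (Y : Type*) (d : Y → Y → ℝ) : ℕ∞ :=
  sInf {m : ℕ∞ | ∃ k : ℕ, m = (k : ℕ∞) ∧ CopsWinWith Y d k}

/-- The robber has a strategy against `k` cops on `(Y,d)` with agility function `τ` which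
guarantees that his moves are legal and that every cop always stays at distance `> ε` from
him, against every legal cop play. -/
def RobberWins (Y : Type*) (d : Y → Y → ℝ) (k : ℕ) (τ : ℕ → ℝ) (ε : ℝ) : Prop :=
  ∃ (r0 : Y) (c0 : Fin k → Y) (ρ : (n : ℕ) → (Fin (n + 1) → Fin k → Y) → Y),
    ∀ c : ℕ → Fin k → Y, c 0 = c0 → (∀ n i, d (c n i) (c (n + 1) i) ≤ τ (n + 1)) →
      (∀ n, d (robTraj r0 ρ c n) (robTraj r0 ρ c (n + 1)) ≤ τ (n + 1)) ∧
        (∀ n i, ε < d (robTraj r0 ρ c n) (c n i))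


/-! ### Auxiliary construction: the space `ℕ → UnitAddCircle` with a sup metric -/

namespace MoharAux

noncomputable section

abbrev XX : Type := ℕ → UnitAddCircle

lemma cdist_le_half (a b : UnitAddCircle) : dist a b ≤ 1/2 := by
  obtain ⟨x, hx⟩ := QuotientAddGroup.mk_surjective (a - b)
  rw [dist_eq_norm, ← hx]
  have : ‖(x : UnitAddCircle)‖ = |x - round x| := UnitAddCircle.norm_eq
  rw [show (QuotientAddGroup.mk x : UnitAddCircle) = (x : UnitAddCircle) from rfl, this]
  exact abs_sub_round x

lemma norm_coe_le (r : ℝ) : ‖(r : UnitAddCircle)‖ ≤ |r| := by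
  rw [UnitAddCircle.norm_eq]
  simpa using round_le r 0

lemma norm_half : ‖((1/2 : ℝ) : UnitAddCircle)‖ = 1/2 := by
  rw [UnitAddCircle.norm_eq]
  rw [show round ((1:ℝ)/2) = 1 by rw [show (1:ℝ)/2 = 2⁻¹ by norm_num]; exact round_two_inv]
  norm_num

lemma exists_lift (z : UnitAddCircle) : ∃ v : ℝ, (v : UnitAddCircle) = z ∧ |v| = ‖z‖ := by
  obtain ⟨x, rfl⟩ := QuotientAddGroup.mk_surjective z
  refine ⟨x - round x, ?_, by rw [UnitAddCircle.norm_eq]⟩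
  have : ((round x : ℝ) : UnitAddCircle) = 0 := by
    rw [QuotientAddGroup.eq_zero_iff]
    exact ⟨round x, by simp⟩
  rw [AddCircle.coe_sub, this, sub_zero]

def fD (x y : XX) (n : ℕ) : ℝ := (1/2:ℝ)^n * dist (x n) (y n)

def D (x y : XX) : ℝ := ⨆ n, fD x y n

lemma fD_nonneg (x y : XX) (n : ℕ) : 0 ≤ fD x y n :=
  mul_nonneg (by positivity) dist_nonneg

lemma fD_le_half (x y : XX) (n : ℕ) : fD x y n ≤ 1/2 :=
  le_trans (mul_le_of_le_one_left dist_nonneg (pow_le_one₀ (by norm_num) (by norm_num)))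
    (cdist_le_half _ _)

lemma bddD (x y : XX) : BddAbove (Set.range (fD x y)) :=
  ⟨1/2, by rintro _ ⟨n, rfl⟩; exact fD_le_half x y n⟩

lemma le_D (x y : XX) (n : ℕ) : fD x y n ≤ D x y := le_ciSup (bddD x y) n

lemma D_le {x y : XX} {B : ℝ} (h : ∀ n, fD x y n ≤ B) : D x y ≤ B := ciSup_le h

lemma D_nonneg (x y : XX) : 0 ≤ D x y := le_trans (fD_nonneg x y 0) (le_D x y 0)

lemma D_self (x : XX) : D x x = 0 :=
  le_antisymm (D_le fun n => by simp [fD]) (D_nonneg x x)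

lemma D_comm (x y : XX) : D x y = D y x := by
  unfold D fD; simp_rw [dist_comm]

lemma D_triangle (x y z : XX) : D x z ≤ D x y + D y z := by
  refine D_le fun n => ?_
  calc fD x z n ≤ fD x y n + fD y z n := by
        unfold fD; rw [← mul_add]
        exact mul_le_mul_of_nonneg_left (dist_triangle _ _ _) (by positivity)
    _ ≤ D x y + D y z := add_le_add (le_D x y n) (le_D y z n)

lemma D_eq_zero {x y : XX} (h : D x y = 0) : x = y := by
  funext n
  have h1 : fD x y n ≤ 0 := h ▸ le_D x y n
  have h2 := fD_nonneg x y n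
  have : dist (x n) (y n) = 0 := by
    have := le_antisymm h1 h2
    unfold fD at this
    have hp : (0:ℝ) < (1/2:ℝ)^n := by positivity
    nlinarith [dist_nonneg (x := x n) (y := y n)]
  exact eq_of_dist_eq_zero this

lemma metricD : IsMetricD XX D :=
  ⟨D_self, fun _ _ => D_eq_zero, D_comm, D_triangle⟩

/-! #### Geodesics -/

lemma geodesicD : IsGeodesicD XX D := by
  intro x y
  choose v hv hvn using fun n => exists_lift (y n - x n)
  set p : ℝ → XX := fun t n => x n + ((t * v n : ℝ) : UnitAddCircle) with hp
  have hp0 : p 0 = x := by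
    funext n; simp [hp]
  have hp1 : p 1 = y := by
    funext n; simp [hp, hv n]
  have key : ∀ s t : ℝ, D (p s) (p t) ≤ |s - t| * D x y := by
    intro s t
    refine D_le fun n => ?_
    have h1 : dist (p s n) (p t n) ≤ |s - t| * dist (x n) (y n) := by
      have e1 : dist (p s n) (p t n) = ‖(((s - t) * v n : ℝ) : UnitAddCircle)‖ := by
        simp only [hp]
        rw [dist_add_left, dist_eq_norm, ← AddCircle.coe_sub, ← sub_mul]
      rw [e1]
      calc ‖(((s - t) * v n : ℝ) : UnitAddCircle)‖ ≤ |(s - t) * v n| := norm_coe_le _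
        _ = |s - t| * |v n| := abs_mul _ _
        _ = |s - t| * dist (x n) (y n) := by
            rw [hvn n, ← dist_eq_norm, dist_comm]
    calc fD (p s) (p t) n = (1/2:ℝ)^n * dist (p s n) (p t n) := rfl
      _ ≤ (1/2:ℝ)^n * (|s - t| * dist (x n) (y n)) :=
          mul_le_mul_of_nonneg_left h1 (by positivity)
      _ = |s - t| * fD x y n := by unfold fD; ring
      _ ≤ |s - t| * D x y := mul_le_mul_of_nonneg_left (le_D x y n) (abs_nonneg _)
  refine ⟨p, ?_, hp0, hp1, ?_⟩
  · -- econt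
    intro t _ ε hε
    obtain ⟨e, he, hlt⟩ : ∃ e : ℝ, 0 < e ∧ ENNReal.ofReal e < ε := by
      rcases eq_or_ne ε ⊤ with rfl | hne
      · exact ⟨1, one_pos, by simp⟩
      · have hpos : 0 < ε.toReal := ENNReal.toReal_pos hε.ne' hne
        refine ⟨ε.toReal / 2, by linarith, ?_⟩
        rw [ENNReal.ofReal_lt_iff_lt_toReal (by linarith) hne]
        linarith
    have hD := D_nonneg x y
    refine ⟨e / (D x y + 1), div_pos he (by linarith), fun t' _ ht' => ?_⟩
    have h2 : D (p t) (p t') < e := by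
      have := key t t'
      have h3 : |t - t'| * D x y ≤ |t' - t| * (D x y + 1) := by
        rw [abs_sub_comm]
        exact mul_le_mul_of_nonneg_left (by linarith [D_nonneg x y]) (abs_nonneg _)
      have h4 : |t' - t| * (D x y + 1) < (e / (D x y + 1)) * (D x y + 1) :=
        mul_lt_mul_of_pos_right ht' (by linarith)
      have h5 : (e / (D x y + 1)) * (D x y + 1) = e :=
        div_mul_cancel₀ e (by linarith)
      linarith
    exact lt_trans ((ENNReal.ofReal_lt_ofReal_iff he).2 h2) hlt
  · -- elen
    apply le_antisymm
    · refine iSup_le fun q => ?_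
      obtain ⟨m, u, hu, hmem⟩ := q
      calc ∑ i ∈ Finset.range m, ENNReal.ofReal (D (p (u i)) (p (u (i+1))))
          ≤ ∑ i ∈ Finset.range m, ENNReal.ofReal ((u (i+1) - u i) * D x y) := by
            refine Finset.sum_le_sum fun i _ => ENNReal.ofReal_le_ofReal ?_
            have := key (u i) (u (i+1))
            rwa [abs_sub_comm, abs_of_nonneg (sub_nonneg.2 (hu (Nat.le_succ i)))] at this
        _ = ENNReal.ofReal (∑ i ∈ Finset.range m, (u (i+1) - u i) * D x y) := by
            rw [ENNReal.ofReal_sum_of_nonneg]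
            intro i _
            exact mul_nonneg (sub_nonneg.2 (hu (Nat.le_succ i))) (D_nonneg x y)
        _ = ENNReal.ofReal ((u m - u 0) * D x y) := by
            rw [← Finset.sum_mul, Finset.sum_range_sub]
        _ ≤ ENNReal.ofReal (D x y) := by
            refine ENNReal.ofReal_le_ofReal ?_
            have h1 : u m - u 0 ≤ 1 := by
              have := (hmem m).2; have := (hmem 0).1; linarith
            nlinarith [D_nonneg x y, (hmem m).2, (hmem 0).1]
    · have hmono : Monotone (fun i : ℕ => min (i:ℝ) 1) :=
        Monotone.min (fun a b hab => by exact_mod_cast Nat.cast_le.2 hab) monotone_const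
      have hmem : ∀ i : ℕ, min (i:ℝ) 1 ∈ Set.Icc (0:ℝ) 1 :=
        fun i => ⟨le_min (Nat.cast_nonneg i) zero_le_one, min_le_right _ _⟩
      have := le_iSup (fun q : ℕ × {u : ℕ → ℝ // Monotone u ∧ ∀ i, u i ∈ Set.Icc (0 : ℝ) 1} =>
        ∑ i ∈ Finset.range q.1, ENNReal.ofReal (D (p (q.2.1 i)) (p (q.2.1 (i + 1)))))
        (⟨1, ⟨fun i => min (i:ℝ) 1, hmono, hmem⟩⟩)
      unfold elen
      simpa [hp0, hp1] using this

/-! #### Compactness -/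

lemma compactD : CompactD XX D := by
  haveI : Fact ((0:ℝ) < 1) := ⟨one_pos⟩
  intro u
  obtain ⟨x, -, φ, hφ, hconv⟩ :=
    isCompact_univ.tendsto_subseq (x := u) (fun n => Set.mem_univ _)
  refine ⟨x, φ, hφ, ?_⟩
  rw [Metric.tendsto_atTop]
  intro ε hε
  have hcoord : ∀ m : ℕ, Tendsto (fun j => dist (u (φ j) m) (x m)) atTop (nhds 0) := by
    intro m
    have h1 : Tendsto (fun j => u (φ j) m) atTop (nhds (x m)) :=
      ((continuous_apply m).continuousAt.tendsto).comp hconv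
    simpa using h1.dist (tendsto_const_nhds : Tendsto (fun _ : ℕ => x m) atTop (nhds (x m)))
  obtain ⟨N, hN⟩ : ∃ N : ℕ, (1/2:ℝ)^N < ε/2 :=
    exists_pow_lt_of_lt_one (by linarith) (by norm_num)
  have hev : ∀ᶠ j in atTop, ∀ m ∈ Finset.range N, dist (u (φ j) m) (x m) < ε/2 := by
    rw [Filter.eventually_all_finset]
    intro m _
    exact (hcoord m).eventually (gt_mem_nhds (by linarith))
  obtain ⟨N₀, hN₀⟩ := Filter.eventually_atTop.1 hev
  refine ⟨N₀, fun j hj => ?_⟩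
  have hDle : D (u (φ j)) x ≤ ε/2 := by
    refine D_le fun m => ?_
    by_cases hm : m < N
    · have := hN₀ j hj m (Finset.mem_range.2 hm)
      calc fD (u (φ j)) x m ≤ dist (u (φ j) m) (x m) :=
            mul_le_of_le_one_left dist_nonneg (pow_le_one₀ (by norm_num) (by norm_num))
        _ ≤ ε/2 := this.le
    · calc fD (u (φ j)) x m ≤ (1/2:ℝ)^m * (1/2) :=
            mul_le_mul_of_nonneg_left (cdist_le_half _ _) (by positivity)
        _ ≤ (1/2:ℝ)^N := by
            have h1 : (1/2:ℝ)^m ≤ (1/2:ℝ)^N :=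
              pow_le_pow_of_le_one (by norm_num) (by norm_num) (not_lt.1 hm)
            nlinarith [pow_pos (by norm_num : (0:ℝ) < 1/2) m]
        _ ≤ ε/2 := hN.le
  rw [Real.dist_eq, sub_zero, abs_of_nonneg (D_nonneg _ _)]
  linarith

/-! #### The robber's evasion strategy -/

variable {k : ℕ}

/-- The half-way point of the circle. -/
def hf : UnitAddCircle := ((1/2 : ℝ) : UnitAddCircle)

/-- The robber's target position: in coordinate `j < k` he stands antipodally (on the `j`-th
circle) to the `j`-th coordinate of cop `j`'s current position. -/
def target (k : ℕ) (C : Fin k → XX) : XX :=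
  fun j => if h : j < k then C ⟨j, h⟩ j + hf else 0

lemma cdist_half (a : UnitAddCircle) : dist (a + hf) a = 1/2 := by
  rw [dist_eq_norm, add_sub_cancel_left]
  exact norm_half

lemma target_dist_le {C C' : Fin k → XX} {t : ℝ} (ht : 0 ≤ t)
    (h : ∀ i, D (C i) (C' i) ≤ t) : D (target k C) (target k C') ≤ t := by
  refine D_le fun j => ?_
  by_cases hj : j < k
  · have e : fD (target k C) (target k C') j
        = (1/2:ℝ)^j * dist (C ⟨j, hj⟩ j) (C' ⟨j, hj⟩ j) := by
      unfold fD target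
      rw [dif_pos hj, dif_pos hj, dist_add_right]
    rw [e]
    exact le_trans (le_D (C ⟨j, hj⟩) (C' ⟨j, hj⟩) j) (h _)
  · have e : fD (target k C) (target k C') j = 0 := by
      unfold fD target
      rw [dif_neg hj, dif_neg hj, dist_self, mul_zero]
    rw [e]; exact ht

lemma target_evade {C C' : Fin k → XX} {t : ℝ} (i : Fin k)
    (h : D (C i) (C' i) ≤ t) :
    (1/2:ℝ)^(i:ℕ) * (1/2) - t ≤ D (target k C) (C' i) := by
  have hd : (1/2:ℝ) - dist (C i (i:ℕ)) (C' i (i:ℕ))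
      ≤ dist (C i (i:ℕ) + hf) (C' i (i:ℕ)) := by
    have := dist_triangle (C i (i:ℕ) + hf) (C' i (i:ℕ)) (C i (i:ℕ))
    rw [cdist_half] at this
    have hc : dist (C' i (i:ℕ)) (C i (i:ℕ)) = dist (C i (i:ℕ)) (C' i (i:ℕ)) := dist_comm _ _
    linarith
  have e : fD (target k C) (C' i) (i:ℕ)
      = (1/2:ℝ)^(i:ℕ) * dist (C i (i:ℕ) + hf) (C' i (i:ℕ)) := by
    unfold fD target
    rw [dif_pos i.isLt]
  have h1 : (1/2:ℝ)^(i:ℕ) * dist (C i (i:ℕ)) (C' i (i:ℕ)) ≤ t :=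
    le_trans (le_D (C i) (C' i) (i:ℕ)) h
  have h2 := le_D (target k C) (C' i) (i:ℕ)
  rw [e] at h2
  have h3 : (1/2:ℝ)^(i:ℕ) * ((1/2:ℝ) - dist (C i (i:ℕ)) (C' i (i:ℕ)))
      ≤ (1/2:ℝ)^(i:ℕ) * dist (C i (i:ℕ) + hf) (C' i (i:ℕ)) :=
    mul_le_mul_of_nonneg_left hd (by positivity)
  nlinarith [pow_pos (by norm_num : (0:ℝ) < 1/2) (i:ℕ)]

lemma evade_num (k : ℕ) (i : Fin k) :
    (1/2:ℝ)^(k+1) < (1/2:ℝ)^(i:ℕ) * (1/2) - (1/2:ℝ)^(k+2) := by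
  have h1 : (1/2:ℝ)^(i:ℕ) * (1/2) = (1/2:ℝ)^((i:ℕ)+1) := (pow_succ _ _).symm
  have h2 : (1/2:ℝ)^((i:ℕ)+1) ≥ (1/2:ℝ)^k :=
    pow_le_pow_of_le_one (by norm_num) (by norm_num) i.isLt
  have h3 : (1/2:ℝ)^(k+1) = (1/2:ℝ)^k * (1/2) := pow_succ _ _
  have h4 : (1/2:ℝ)^(k+2) = (1/2:ℝ)^k * (1/4) := by
    rw [pow_add]; norm_num
  nlinarith [pow_pos (by norm_num : (0:ℝ) < 1/2) k]

lemma agility_const {t : ℝ} (ht : 0 < t) : IsAgility (fun _ => t) := by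
  refine ⟨fun _ => ht, fun h => ?_⟩
  have h1 := h.tendsto_atTop_zero
  have h2 : Tendsto (fun _ : ℕ => t) atTop (nhds t) := tendsto_const_nhds
  exact ht.ne' (tendsto_nhds_unique h1 h2).symm

lemma robberWins (k : ℕ) :
    RobberWins XX D k (fun _ => (1/2:ℝ)^(k+2)) ((1/2:ℝ)^(k+1)) := by
  set t : ℝ := (1/2:ℝ)^(k+2) with htdef
  have ht : 0 < t := by positivity
  refine ⟨target k (fun _ _ => 0), (fun _ _ => 0),
    (fun n h => target k (h (Fin.last n))), ?_⟩
  intro c hc0 hstep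
  have hrob : ∀ n, robTraj (target k fun _ _ => 0)
      (fun n h => target k (h (Fin.last n))) c n = target k (c (n - 1)) := by
    intro n
    cases n with
    | zero => simp [robTraj, hc0]
    | succ m => simp [robTraj]
  have hprev : ∀ n (i : Fin k), D (c (n-1) i) (c n i) ≤ t := by
    intro n i
    cases n with
    | zero => simpa [D_self] using ht.le
    | succ m => simpa using hstep m i
  constructor
  · intro n
    rw [hrob n, hrob (n+1)]
    simp only [Nat.add_sub_cancel]
    exact target_dist_le ht.le (fun i => hprev n i)
  · intro n i
    rw [hrob n]
    exact lt_of_lt_of_le (evade_num k i) (target_evade i (hprev n i))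

/-! #### Refutation of any winning cop strategy -/

/-- Move from `a` towards `b` — all the way if that is a legal move, else stay at `a`. -/
def clampD (t : ℝ) (a b : XX) : XX := if D a b ≤ t then b else a

lemma clampD_le {t : ℝ} (ht : 0 ≤ t) (a b : XX) : D a (clampD t a b) ≤ t := by
  unfold clampD; split
  · assumption
  · rw [D_self]; exact ht

lemma clampD_eq {t : ℝ} {a b : XX} (h : D a b ≤ t) : clampD t a b = b := if_pos h

variable (σ : (n : ℕ) → (Fin (n + 2) → XX) → Fin k → XX)

/-- The cops' position at step `n`, as a function of the robber's history `r^0, …, r^n`. -/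
def copsAt (σ : (n : ℕ) → (Fin (n + 2) → XX) → Fin k → XX) :
    (n : ℕ) → (Fin (n+1) → XX) → Fin k → XX
  | 0, _ => fun _ _ => 0
  | n+1, h => σ n h

/-- The robber's history `r^0, …, r^n` when playing the (clamped) antipodal strategy
against the cop strategy `σ`. -/
def pre (σ : (n : ℕ) → (Fin (n + 2) → XX) → Fin k → XX) (t : ℝ) :
    (n : ℕ) → (Fin (n+1) → XX)
  | 0 => fun _ => target k (fun _ _ => 0)
  | n+1 => Fin.snoc (pre σ t n)
      (clampD t (pre σ t n (Fin.last n)) (target k (copsAt σ n (pre σ t n))))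

/-- The robber's trajectory against the cop strategy `σ`. -/
def rtraj (σ : (n : ℕ) → (Fin (n + 2) → XX) → Fin k → XX) (t : ℝ) (n : ℕ) : XX :=
  pre σ t n (Fin.last n)

lemma pre_eq (t : ℝ) : ∀ n, pre σ t n = fun i : Fin (n+1) => rtraj σ t i := by
  intro n
  induction n with
  | zero =>
    funext i
    have hi : (i : ℕ) = 0 := Nat.lt_one_iff.mp i.isLt
    rw [show rtraj σ t (i:ℕ) = rtraj σ t 0 by rw [hi]]
    rfl
  | succ n ih =>
    funext i
    refine Fin.lastCases ?_ ?_ i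
    · rw [Fin.val_last]; rfl
    · intro j
      show (Fin.snoc (pre σ t n) _ : Fin (n+2) → XX) (Fin.castSucc j)
        = rtraj σ t (Fin.castSucc j : Fin (n+2))
      rw [Fin.snoc_castSucc, ih, Fin.coe_castSucc]

lemma rtraj_zero (t : ℝ) : rtraj σ t 0 = target k (fun _ _ => 0) := rfl

lemma copTraj_eq (t : ℝ) (n : ℕ) :
    copTraj (fun _ _ => (0:UnitAddCircle)) σ (rtraj σ t) n = copsAt σ n (pre σ t n) := by
  rw [pre_eq]
  cases n with
  | zero => rfl
  | succ m => rfl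

lemma rtraj_succ (t : ℝ) (n : ℕ) :
    rtraj σ t (n+1) = clampD t (rtraj σ t n)
      (target k (copTraj (fun _ _ => (0:UnitAddCircle)) σ (rtraj σ t) n)) := by
  rw [copTraj_eq]
  show (Fin.snoc (pre σ t n) _ : Fin (n+2) → XX) (Fin.last (n+1)) = _
  rw [Fin.snoc_last]
  rfl

lemma copsDontWin (k : ℕ) : ¬ CopsWinWith XX D k := by
  intro hw
  set t : ℝ := (1/2:ℝ)^(k+2) with htdef
  have ht : 0 < t := by positivity
  obtain ⟨σ, hσ⟩ := hw (fun _ => t) (agility_const ht)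
    (target k (fun _ _ => 0)) (fun _ _ => 0)
  set r : ℕ → XX := rtraj σ t with hrdef
  set C : ℕ → Fin k → XX := copTraj (fun _ _ => (0:UnitAddCircle)) σ r with hCdef
  have hrlegal : ∀ n, D (r n) (r (n+1)) ≤ t := by
    intro n
    rw [hrdef, rtraj_succ]
    exact clampD_le ht.le _ _
  obtain ⟨hcop, hclose⟩ := hσ r rfl hrlegal
  have hprev : ∀ n (i : Fin k), D (C (n-1) i) (C n i) ≤ t := by
    intro n i
    cases n with
    | zero => simpa [D_self] using ht.le
    | succ m => simpa using hcop m i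
  have hmain : ∀ n, r n = target k (C (n-1)) := by
    intro n
    induction n with
    | zero =>
      show r 0 = target k (C 0)
      rw [hrdef, rtraj_zero]
      rfl
    | succ n ih =>
      have hcond : D (r n) (target k (C n)) ≤ t := by
        rw [ih]
        exact target_dist_le ht.le (fun i => hprev n i)
      have : r (n+1) = clampD t (r n) (target k (C n)) := rtraj_succ σ t n
      rw [this, clampD_eq hcond]
      simp
  obtain ⟨n, i, hni⟩ := hclose ((1/2:ℝ)^(k+1)) (by positivity)
  have hlow : (1/2:ℝ)^(k+1) < D (r n) (C n i) := by
    rw [hmain n]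
    exact lt_of_lt_of_le (evade_num k i) (target_evade i (hprev n i))
  exact absurd hni (not_lt.2 hlow.le)

end

end MoharAux

/-- There exists a compact geodesic metric space `X` with infinite cop
number: for every `k`, `k` cops do not have a winning strategy. Moreover for every `k` the
robber has a strategy against `k` cops using a constant agility function which keeps all
cops at distance bounded away from `0`. -/
theorem exists_game_space_with_infinite_cop_number :
    ∃ (X : Type) (d : X → X → ℝ), GameSpaceD X d ∧
      copNumber X d = ⊤ ∧ (∀ k : ℕ, ¬ CopsWinWith X d k) ∧
      (∀ k : ℕ, ∃ t ε : ℝ, 0 < t ∧ 0 < ε ∧ RobberWins X d k (fun _ => t) ε) := by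
  refine ⟨MoharAux.XX, MoharAux.D, ⟨⟨fun _ => 0⟩, MoharAux.metricD, MoharAux.compactD,
    MoharAux.geodesicD⟩, ?_, MoharAux.copsDontWin, ?_⟩
  · rw [copNumber, sInf_eq_top]
    rintro a ⟨k, rfl, hw⟩
    exact absurd hw (MoharAux.copsDontWin k)
  · intro k
    exact ⟨(1/2:ℝ)^(k+2), (1/2:ℝ)^(k+1), by positivity, by positivity,
      MoharAux.robberWins k⟩
end

section
/- For every game space (X,d) and every nonempty compact subset S ⊆ X, there exists h > 0 such that c(X_{h,S}) ≥ c(X), where the inequality is read in ℕ ∪ {∞}. -/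
/-!
Game of Cops and Robber on metric spaces, following Mohar, formalized relative to an
explicit distance function `d : Y → Y → ℝ`.
-/

open Set Filter Topology

/-!
The hat construction `X_{h,S}` of the paper: given a metric space `X`, a subset `S ⊆ X` and
`h > 0`, we glue onto `X` the hat over `S`, consisting of the cylinder `S × [0,h]` with the
`ℓ₁` metric and the top, a cone over `S` of height `H = h + diam S`.  The resulting space is
equipped with the induced length metric: distances are infima of lengths of piecewise paths,
each piece lying in one part and measured with that part's metric.
-/

section Hat

variable {X : Type*} [MetricSpace X]

/-- Points of the cylinder `S × [0,h]`. -/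
abbrev CylPt (S : Set X) (h : ℝ) : Type _ := ↥S × ↥(Set.Icc (0 : ℝ) h)

/-- Points of the (un-collapsed) top `S × [0, h + diam S]`. -/
abbrev TopPt (S : Set X) (h : ℝ) : Type _ := ↥S × ↥(Set.Icc (0 : ℝ) (h + Metric.diam S))

/-- The disjoint union of the three parts of `X_{h,S}`: the space `X`, the cylinder, and
the top. -/
abbrev PrePt (S : Set X) (h : ℝ) : Type _ := X ⊕ (CylPt S h ⊕ TopPt S h)

/-- The `ℓ₁` metric `d₁` on the cylinder. -/
noncomputable def cylDist {S : Set X} {h : ℝ} (p q : CylPt S h) : ℝ :=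
  dist (p.1 : X) (q.1 : X) + |(p.2 : ℝ) - (q.2 : ℝ)|

/-- The metric `d₂` on the top: the quotient pseudometric of the `ℓ₁` metric on
`S × [0,H]`, `H = h + diam S`, under collapsing the layer `S × {H}` to a point. -/
noncomputable def topDist {S : Set X} {h : ℝ} (p q : TopPt S h) : ℝ :=
  min (dist (p.1 : X) (q.1 : X) + |(p.2 : ℝ) - (q.2 : ℝ)|)
    ((h + Metric.diam S - (p.2 : ℝ)) + (h + Metric.diam S - (q.2 : ℝ)))

/-- The part-wise cost on the disjoint union: within one part, the metric of that part;
`⊤` across different parts. -/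
noncomputable def preDist (S : Set X) (h : ℝ) : PrePt S h → PrePt S h → ENNReal
  | Sum.inl x, Sum.inl y => ENNReal.ofReal (dist x y)
  | Sum.inr (Sum.inl p), Sum.inr (Sum.inl q) => ENNReal.ofReal (cylDist p q)
  | Sum.inr (Sum.inr p), Sum.inr (Sum.inr q) => ENNReal.ofReal (topDist p q)
  | _, _ => ⊤

/-- The gluing relation defining `X_{h,S}`: each `s ∈ S` is identified with the point
`(s,0)` of the cylinder; the layer `S × {h}` of the cylinder is identified with the layer
`S × {0}` of the top; and the whole layer `S × {H}` of the top is collapsed to one point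
(the cone point `z`). -/
inductive Glue (S : Set X) (h : ℝ) : PrePt S h → PrePt S h → Prop
  | base (s : ↥S) (t : ↥(Set.Icc (0 : ℝ) h)) (ht : (t : ℝ) = 0) :
      Glue S h (Sum.inl (s : X)) (Sum.inr (Sum.inl (s, t)))
  | mid (s : ↥S) (t : ↥(Set.Icc (0 : ℝ) h)) (u : ↥(Set.Icc (0 : ℝ) (h + Metric.diam S)))
      (ht : (t : ℝ) = h) (hu : (u : ℝ) = 0) :
      Glue S h (Sum.inr (Sum.inl (s, t))) (Sum.inr (Sum.inr (s, u)))
  | apex (p q : TopPt S h) (hp : (p.2 : ℝ) = h + Metric.diam S)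
      (hq : (q.2 : ℝ) = h + Metric.diam S) :
      Glue S h (Sum.inr (Sum.inr p)) (Sum.inr (Sum.inr q))

/-- The underlying set of `X_{h,S}`: the quotient of the disjoint union by the gluing. -/
abbrev GlueSp (S : Set X) (h : ℝ) : Type _ := Quot (Glue S h)

end Hat

/-- A piecewise path between two points of a glued space `Quot R`: a finite sequence of
paths, each continuous within a single part (with respect to the part-wise cost `c`), with
consecutive endpoints glued. -/
structure PiecewisePath {Y : Type*} (c : Y → Y → ENNReal) (R : Y → Y → Prop)
    (a b : Quot R) where
  m : ℕ
  piece : Fin (m + 1) → ℝ → Y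
  cont : ∀ i, econt c (piece i)
  first : Quot.mk R (piece 0 0) = a
  last : Quot.mk R (piece (Fin.last m) 1) = b
  link : ∀ i : Fin m, Quot.mk R (piece i.castSucc 1) = Quot.mk R (piece i.succ 0)

/-- The length of a piecewise path: the sum of the lengths of its pieces, each measured with
the corresponding part's metric. -/
noncomputable def PiecewisePath.len {Y : Type*} {c : Y → Y → ENNReal} {R : Y → Y → Prop}
    {a b : Quot R} (P : PiecewisePath c R a b) : ENNReal :=
  ∑ i : Fin (P.m + 1), elen c (P.piece i)

/-- The induced length metric on a glued space: the infimum of lengths of piecewise paths. -/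
noncomputable def glueDist {Y : Type*} (c : Y → Y → ENNReal) (R : Y → Y → Prop)
    (a b : Quot R) : ENNReal :=
  ⨅ P : PiecewisePath c R a b, P.len

section Hat2

variable {X : Type*} [MetricSpace X]

/-- The induced length metric `d'` on `X_{h,S}`, with values in `[0,∞]`. -/
noncomputable def hatDistE (S : Set X) (h : ℝ) (a b : GlueSp S h) : ENNReal :=
  glueDist (preDist S h) (Glue S h) a b

/-- The induced length metric `d'` on `X_{h,S}`, as a real-valued function. -/
noncomputable def hatDist (S : Set X) (h : ℝ) (a b : GlueSp S h) : ℝ :=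
  (hatDistE S h a b).toReal

/-- The canonical inclusion `X ↪ X_{h,S}`. -/
def iotaX (S : Set X) (h : ℝ) (x : X) : GlueSp S h := Quot.mk _ (Sum.inl x)

end Hat2

open Set Filter Topology

namespace CopsHat

variable {Y : Type*}

lemma elen_ge_pair (c : Y → Y → ENNReal) (p : ℝ → Y) (θ : ℝ) (hθ : θ ∈ Set.Icc (0:ℝ) 1) :
    c (p 0) (p θ) + c (p θ) (p 1) ≤ elen c p := by
  classical
  obtain ⟨h0, h1⟩ := hθ
  set u : ℕ → ℝ := fun j => if j = 0 then 0 else if j = 1 then θ else 1 with hu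
  have hmono : Monotone u := by
    intro a b hab
    simp only [hu]
    split_ifs <;> first | rfl | linarith | omega
  have hmem : ∀ i, u i ∈ Set.Icc (0:ℝ) 1 := by
    intro i
    simp only [hu]
    split_ifs <;> constructor <;> norm_num <;> linarith
  have hle := le_iSup (fun q : ℕ × {u : ℕ → ℝ // Monotone u ∧ ∀ i, u i ∈ Set.Icc (0:ℝ) 1} =>
      ∑ i ∈ Finset.range q.1, c (p (q.2.1 i)) (p (q.2.1 (i + 1)))) (⟨2, ⟨u, hmono, hmem⟩⟩)
  refine le_trans ?_ hle
  rw [Finset.sum_range_succ, Finset.sum_range_one]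
  have e0 : u 0 = 0 := by simp [hu]
  have e1 : u 1 = θ := by simp [hu]
  have e2 : u 2 = 1 := by simp [hu]
  simp only [e0, e1, e2]
  exact le_rfl

lemma elen_ge_ends (c : Y → Y → ENNReal) (p : ℝ → Y) :
    c (p 0) (p 1) ≤ elen c p := by
  refine le_trans ?_ (elen_ge_pair c p 0 (by norm_num))
  exact self_le_add_left _ _

lemma econt_of_lip {c : Y → Y → ENNReal} {p : ℝ → Y} (L : ℝ)
    (hl : ∀ s ∈ Set.Icc (0:ℝ) 1, ∀ t ∈ Set.Icc (0:ℝ) 1,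
      c (p s) (p t) ≤ ENNReal.ofReal (L * |t - s|)) :
    econt c p := by
  intro t ht ε hε
  rcases eq_or_ne ε ⊤ with rfl | hεt
  · exact ⟨1, one_pos, fun t' ht' _ =>
      lt_of_le_of_lt (hl t ht t' ht') ENNReal.ofReal_lt_top⟩
  · have h0 : 0 < ε.toReal := ENNReal.toReal_pos hε.ne' hεt
    refine ⟨ε.toReal / (|L| + 1), by positivity, fun t' ht' hd => ?_⟩
    refine lt_of_le_of_lt (hl t ht t' ht') ?_
    have hL1 : (0:ℝ) < |L| + 1 := by positivity
    have h2 : L * |t' - t| ≤ |L| * |t' - t| :=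
      mul_le_mul_of_nonneg_right (le_abs_self L) (abs_nonneg _)
    have h3 : |L| * |t' - t| < ε.toReal := by
      have : |L| * |t' - t| ≤ |L| * (ε.toReal / (|L| + 1)) :=
        mul_le_mul_of_nonneg_left hd.le (abs_nonneg _)
      have h4 : |L| * (ε.toReal / (|L| + 1)) < ε.toReal := by
        rw [mul_div_assoc']
        rw [div_lt_iff₀ hL1]
        nlinarith [abs_nonneg L]
      linarith
    calc ENNReal.ofReal (L * |t' - t|) ≤ ENNReal.ofReal (|L| * |t' - t|) :=
          ENNReal.ofReal_le_ofReal h2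
      _ < ε := by
          rw [ENNReal.ofReal_lt_iff_lt_toReal (by positivity) hεt]
          exact h3

lemma elen_le_of_lip {c : Y → Y → ENNReal} {p : ℝ → Y} (L : ℝ) (hL : 0 ≤ L)
    (hl : ∀ s ∈ Set.Icc (0:ℝ) 1, ∀ t ∈ Set.Icc (0:ℝ) 1, s ≤ t →
      c (p s) (p t) ≤ ENNReal.ofReal (L * (t - s))) :
    elen c p ≤ ENNReal.ofReal L := by
  refine iSup_le fun q => ?_
  obtain ⟨n, u, hmono, hmem⟩ := q
  have key : ∀ i ∈ Finset.range n,
      c (p ((fun j => u j) i)) (p (u (i+1))) ≤ ENNReal.ofReal (L * u (i+1) - L * u i) := by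
    intro i _
    have := hl (u i) (hmem i) (u (i+1)) (hmem (i+1)) (hmono (Nat.le_succ i))
    rwa [mul_sub] at this
  calc ∑ i ∈ Finset.range n, c (p (u i)) (p (u (i+1)))
      ≤ ∑ i ∈ Finset.range n, ENNReal.ofReal (L * u (i+1) - L * u i) :=
        Finset.sum_le_sum key
    _ = ENNReal.ofReal (∑ i ∈ Finset.range n, (L * u (i+1) - L * u i)) := by
        rw [ENNReal.ofReal_sum_of_nonneg]
        intro i _
        have := hmono (Nat.le_succ i)
        nlinarith
    _ = ENNReal.ofReal (L * u n - L * u 0) := by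
        rw [Finset.sum_range_sub (fun i => L * u i)]
    _ ≤ ENNReal.ofReal L := by
        apply ENNReal.ofReal_le_ofReal
        have h1 := (hmem n).2
        have h2 := (hmem 0).1
        nlinarith

end CopsHat
namespace CopsHat

lemma tele : ∀ (m : ℕ) (x y : Fin (m+1) → ℝ),
    (∀ i : Fin m, y i.castSucc = x i.succ) →
    ENNReal.ofReal |x 0 - y (Fin.last m)| ≤ ∑ j : Fin (m+1), ENNReal.ofReal |x j - y j| := by
  intro m
  induction m with
  | zero =>
    intro x y _
    simp [Fin.last]
  | succ m ih =>
    intro x y hlink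
    rw [Fin.sum_univ_castSucc]
    have h1 := ih (fun j => x j.castSucc) (fun j => y j.castSucc) (fun i => by
      show y (i.castSucc.castSucc) = x (i.succ.castSucc)
      rw [← Fin.succ_castSucc]
      exact hlink i.castSucc)
    have hmid : y ((Fin.last m).castSucc) = x (Fin.last (m+1)) := by
      have := hlink (Fin.last m)
      rwa [Fin.succ_last] at this
    have habs : |x 0 - y (Fin.last (m+1))| ≤
        |x 0 - y ((Fin.last m).castSucc)| + |x (Fin.last (m+1)) - y (Fin.last (m+1))| := by
      rw [hmid]
      exact abs_sub_le _ _ _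
    calc ENNReal.ofReal |x 0 - y (Fin.last (m+1))|
        ≤ ENNReal.ofReal (|x 0 - y ((Fin.last m).castSucc)| +
            |x (Fin.last (m+1)) - y (Fin.last (m+1))|) := ENNReal.ofReal_le_ofReal habs
      _ ≤ ENNReal.ofReal (|x 0 - y ((Fin.last m).castSucc)|) +
            ENNReal.ofReal (|x (Fin.last (m+1)) - y (Fin.last (m+1))|) := ENNReal.ofReal_add_le
      _ ≤ (∑ j : Fin (m+1), ENNReal.ofReal |x j.castSucc - y j.castSucc|) +
            ENNReal.ofReal (|x (Fin.last (m+1)) - y (Fin.last (m+1))|) := by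
          refine add_le_add ?_ le_rfl
          have h0 : x (0 : Fin (m+2)) = x ((0 : Fin (m+1)).castSucc) := by
            norm_num
          rw [h0]
          exact h1
      _ = _ := rfl

variable {X : Type*} [MetricSpace X] {S : Set X} {h : ℝ}

lemma dist_lower (φ : PrePt S h → ℝ)
    (hg : ∀ a b, Glue S h a b → φ a = φ b)
    (hl : ∀ a b, ENNReal.ofReal |φ a - φ b| ≤ preDist S h a b)
    (a b : PrePt S h) :
    ENNReal.ofReal |φ a - φ b| ≤ hatDistE S h (Quot.mk _ a) (Quot.mk _ b) := by
  refine le_iInf fun P => ?_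
  have hq : ∀ (y z : PrePt S h), Quot.mk (Glue S h) y = Quot.mk (Glue S h) z → φ y = φ z := by
    intro y z hyz
    have : Quot.lift φ hg (Quot.mk (Glue S h) y) = Quot.lift φ hg (Quot.mk (Glue S h) z) := by
      rw [hyz]
    simpa using this
  have piece_bd : ∀ i, ENNReal.ofReal |φ (P.piece i 0) - φ (P.piece i 1)| ≤
      elen (preDist S h) (P.piece i) :=
    fun i => le_trans (hl _ _) (elen_ge_ends _ _)
  have hT := tele P.m (fun j => φ (P.piece j 0)) (fun j => φ (P.piece j 1)) (fun i =>
    hq _ _ (P.link i))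
  have hfirst : φ (P.piece 0 0) = φ a := by
    have h2 : Quot.mk (Glue S h) (P.piece 0 0) = Quot.mk (Glue S h) a := by
      rw [P.first]
    exact hq _ _ h2
  have hlast : φ (P.piece (Fin.last P.m) 1) = φ b := by
    have h2 : Quot.mk (Glue S h) (P.piece (Fin.last P.m) 1) = Quot.mk (Glue S h) b := by
      rw [P.last]
    exact hq _ _ h2
  show ENNReal.ofReal |φ a - φ b| ≤ P.len
  unfold PiecewisePath.len
  rw [← hfirst, ← hlast]
  exact le_trans hT (Finset.sum_le_sum fun j _ => piece_bd j)

lemma dist_lower_real (φ : PrePt S h → ℝ)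
    (hg : ∀ a b, Glue S h a b → φ a = φ b)
    (hl : ∀ a b, ENNReal.ofReal |φ a - φ b| ≤ preDist S h a b)
    {A B : GlueSp S h} (hfin : hatDistE S h A B ≠ ⊤)
    {a b : PrePt S h} (ha : Quot.mk _ a = A) (hb : Quot.mk _ b = B) :
    |φ a - φ b| ≤ hatDist S h A B := by
  subst ha; subst hb
  have h1 := dist_lower φ hg hl a b
  have := ENNReal.toReal_mono hfin h1
  rwa [ENNReal.toReal_ofReal (abs_nonneg _)] at this

end CopsHat
namespace CopsHat

variable {X : Type*} [MetricSpace X] {S : Set X} {h : ℝ}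

def baseP (S : Set X) (h : ℝ) : PrePt S h → X
  | Sum.inl x => x
  | Sum.inr (Sum.inl p) => p.1
  | Sum.inr (Sum.inr p) => p.1

noncomputable def depthP (S : Set X) (h : ℝ) : PrePt S h → ℝ
  | Sum.inl _ => 0
  | Sum.inr (Sum.inl p) => p.2
  | Sum.inr (Sum.inr p) => h + p.2

noncomputable def phiY (S : Set X) (h : ℝ) (y : X) : PrePt S h → ℝ
  | Sum.inl x => dist x y
  | Sum.inr (Sum.inl p) => dist (p.1 : X) y + p.2
  | Sum.inr (Sum.inr p) => min (dist (p.1 : X) y + h + p.2)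
      (2 * (h + Metric.diam S) + h - p.2)

lemma depthP_nonneg (a : PrePt S h) (hh : 0 ≤ h) : 0 ≤ depthP S h a := by
  rcases a with x | p | p
  · exact le_rfl
  · exact p.2.2.1
  · have := p.2.2.1; simp only [depthP]; linarith

lemma phiY_glue {DX : ℝ} (hDX : ∀ x z : X, dist x z ≤ DX) (hh : DX + 1 ≤ h)
    (y : X) : ∀ a b, Glue S h a b → phiY S h y a = phiY S h y b := by
  have hD : 0 ≤ Metric.diam S := Metric.diam_nonneg
  have hDX0 : 0 ≤ DX := le_trans dist_nonneg (hDX y y)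
  intro a b g
  cases g with
  | base s t ht =>
    show dist (s : X) y = dist (s : X) y + (t : ℝ)
    rw [ht]; ring
  | mid s t u ht hu =>
    show dist (s : X) y + (t : ℝ) =
      min (dist (s : X) y + h + (u : ℝ)) (2 * (h + Metric.diam S) + h - (u : ℝ))
    rw [ht, hu]
    have hd := hDX (s : X) y
    rw [min_eq_left (by linarith)]
    ring
  | apex p q hp hq =>
    show min (dist (p.1 : X) y + h + (p.2 : ℝ)) (2 * (h + Metric.diam S) + h - (p.2 : ℝ)) =
      min (dist (q.1 : X) y + h + (q.2 : ℝ)) (2 * (h + Metric.diam S) + h - (q.2 : ℝ))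
    rw [hp, hq]
    have h1 := dist_nonneg (x := (p.1 : X)) (y := y)
    have h2 := dist_nonneg (x := (q.1 : X)) (y := y)
    rw [min_eq_right (by linarith), min_eq_right (by linarith)]

lemma phiY_lip (y : X) : ∀ a b : PrePt S h,
    ENNReal.ofReal |phiY S h y a - phiY S h y b| ≤ preDist S h a b := by
  intro a b
  rcases a with x | p | p <;> rcases b with x' | p' | p' <;>
    try { exact le_top }
  · -- X / X
    exact ENNReal.ofReal_le_ofReal (abs_dist_sub_le x x' y)
  · -- cyl / cyl
    show ENNReal.ofReal |dist (p.1 : X) y + (p.2 : ℝ) - (dist (p'.1 : X) y + (p'.2 : ℝ))|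
      ≤ ENNReal.ofReal (cylDist p p')
    refine ENNReal.ofReal_le_ofReal ?_
    unfold cylDist
    have h1 := abs_dist_sub_le (p.1 : X) (p'.1 : X) y
    have h2 : |dist (p.1 : X) y + (p.2 : ℝ) - (dist (p'.1 : X) y + (p'.2 : ℝ))| ≤
        |dist (p.1 : X) y - dist (p'.1 : X) y| + |(p.2 : ℝ) - (p'.2 : ℝ)| := by
      have := abs_add_le (dist (p.1 : X) y - dist (p'.1 : X) y) ((p.2 : ℝ) - (p'.2 : ℝ))
      calc |dist (p.1 : X) y + (p.2 : ℝ) - (dist (p'.1 : X) y + (p'.2 : ℝ))|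
          = |(dist (p.1 : X) y - dist (p'.1 : X) y) + ((p.2 : ℝ) - (p'.2 : ℝ))| := by ring_nf
        _ ≤ _ := this
    linarith
  · -- top / top
    show ENNReal.ofReal |phiY S h y (Sum.inr (Sum.inr p)) - phiY S h y (Sum.inr (Sum.inr p'))|
      ≤ ENNReal.ofReal (topDist p p')
    refine ENNReal.ofReal_le_ofReal ?_
    unfold topDist
    set H := h + Metric.diam S with hH
    set A := dist (p.1 : X) y + h + (p.2 : ℝ) with hA
    set B := 2 * H + h - (p.2 : ℝ) with hB
    set A' := dist (p'.1 : X) y + h + (p'.2 : ℝ) with hA'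
    set B' := 2 * H + h - (p'.2 : ℝ) with hB'
    show |min A B - min A' B'| ≤
      min (dist (p.1 : X) (p'.1 : X) + |(p.2 : ℝ) - (p'.2 : ℝ)|) ((H - p.2) + (H - p'.2))
    refine le_min ?_ ?_
    · refine le_trans (abs_min_sub_min_le_max _ _ _ _) (max_le ?_ ?_)
      · have h1 := abs_dist_sub_le (p.1 : X) (p'.1 : X) y
        have : |A - A'| ≤ |dist (p.1 : X) y - dist (p'.1 : X) y| + |(p.2 : ℝ) - (p'.2 : ℝ)| := by
          have := abs_add_le (dist (p.1 : X) y - dist (p'.1 : X) y) ((p.2 : ℝ) - (p'.2 : ℝ))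
          calc |A - A'| = |(dist (p.1 : X) y - dist (p'.1 : X) y) + ((p.2 : ℝ) - (p'.2 : ℝ))| := by
                rw [hA, hA']; ring_nf
            _ ≤ _ := this
        linarith
      · have : |B - B'| = |(p.2 : ℝ) - (p'.2 : ℝ)| := by
          rw [hB, hB', abs_sub_comm]; ring_nf
        rw [this]
        have := dist_nonneg (x := (p.1 : X)) (y := (p'.1 : X))
        linarith
    · have hu : (p.2 : ℝ) ≤ H := p.2.2.2
      have hu' : (p'.2 : ℝ) ≤ H := p'.2.2.2
      have hd1 := dist_nonneg (x := (p.1 : X)) (y := y)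
      have hd2 := dist_nonneg (x := (p'.1 : X)) (y := y)
      have l1 : min A B ≤ B := min_le_right _ _
      have l2 : min A' B' ≤ B' := min_le_right _ _
      have g1 : h + (p.2 : ℝ) ≤ min A B := le_min (by rw [hA]; linarith) (by rw [hB]; linarith)
      have g2 : h + (p'.2 : ℝ) ≤ min A' B' := le_min (by rw [hA']; linarith) (by rw [hB']; linarith)
      rw [abs_le]
      constructor
      · rw [hB'] at l2; linarith
      · rw [hB] at l1; linarith

lemma phiY_nonneg (hh : 0 ≤ h) (y : X) (a : PrePt S h) : 0 ≤ phiY S h y a := by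
  have hD : 0 ≤ Metric.diam S := Metric.diam_nonneg
  rcases a with x | p | p
  · exact dist_nonneg
  · have := p.2.2.1; have := dist_nonneg (x := (p.1 : X)) (y := y)
    simp only [phiY]; linarith
  · have h2 := p.2.2.2
    have hd := dist_nonneg (x := (p.1 : X)) (y := y)
    have h1 := p.2.2.1
    show 0 ≤ min (dist (p.1 : X) y + h + (p.2 : ℝ)) (2 * (h + Metric.diam S) + h - (p.2 : ℝ))
    refine le_min (by linarith) (by linarith)

end CopsHat
namespace CopsHat

variable {X : Type*} [MetricSpace X] {S : Set X} {h : ℝ}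

lemma preDist_self (a : PrePt S h) : preDist S h a a = 0 := by
  rcases a with x | p | p
  · show ENNReal.ofReal (dist x x) = 0
    simp
  · show ENNReal.ofReal (cylDist p p) = 0
    unfold cylDist; simp
  · show ENNReal.ofReal (topDist p p) = 0
    unfold topDist
    rw [ENNReal.ofReal_eq_zero]
    refine le_trans (min_le_left _ _) (le_of_eq ?_)
    simp

lemma econt_const (a : PrePt S h) : econt (preDist S h) (fun _ => a) := by
  intro t ht ε hε
  exact ⟨1, one_pos, fun t' _ _ => by rw [preDist_self]; exact hε⟩

lemma elen_const (a : PrePt S h) : elen (preDist S h) (fun _ => a) ≤ ENNReal.ofReal 0 :=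
  elen_le_of_lip 0 le_rfl (fun s _ t _ _ => by rw [preDist_self]; exact zero_le)

/-- vertical path in the cylinder -/
noncomputable def cylVert (S : Set X) {h : ℝ} (hh : 0 ≤ h) (s : ↥S) (t0 t1 : ℝ) :
    ℝ → PrePt S h :=
  fun θ => Sum.inr (Sum.inl (s, Set.projIcc 0 h hh (t0 + θ * (t1 - t0))))

lemma cylVert_cost (hh : 0 ≤ h) (s : ↥S) (t0 t1 : ℝ) (θ θ' : ℝ) :
    preDist S h (cylVert S hh s t0 t1 θ) (cylVert S hh s t0 t1 θ') ≤
      ENNReal.ofReal (|t1 - t0| * |θ' - θ|) := by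
  show ENNReal.ofReal (cylDist _ _) ≤ _
  refine ENNReal.ofReal_le_ofReal ?_
  unfold cylDist
  simp only [dist_self, zero_add]
  have hl := (LipschitzWith.projIcc (a := (0:ℝ)) (b := h) hh).dist_le_mul
    (t0 + θ * (t1 - t0)) (t0 + θ' * (t1 - t0))
  rw [Subtype.dist_eq] at hl
  simp only [Real.dist_eq, NNReal.coe_one, one_mul] at hl
  calc |(↑(Set.projIcc 0 h hh (t0 + θ * (t1 - t0))) : ℝ) -
        ↑(Set.projIcc 0 h hh (t0 + θ' * (t1 - t0)))| ≤
      |(t0 + θ * (t1 - t0)) - (t0 + θ' * (t1 - t0))| := hl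
    _ = |t1 - t0| * |θ' - θ| := by
        rw [← abs_mul, abs_sub_comm]
        ring_nf
    _ ≤ _ := le_rfl

lemma cylVert_econt (hh : 0 ≤ h) (s : ↥S) (t0 t1 : ℝ) :
    econt (preDist S h) (cylVert S hh s t0 t1) :=
  econt_of_lip (|t1 - t0|) (fun a _ b _ => by
    refine le_trans (cylVert_cost hh s t0 t1 a b) (ENNReal.ofReal_le_ofReal ?_)
    exact le_rfl)

lemma cylVert_elen (hh : 0 ≤ h) (s : ↥S) (t0 t1 : ℝ) :
    elen (preDist S h) (cylVert S hh s t0 t1) ≤ ENNReal.ofReal |t1 - t0| :=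
  elen_le_of_lip (|t1 - t0|) (abs_nonneg _) (fun a _ b _ hab => by
    refine le_trans (cylVert_cost hh s t0 t1 a b) (ENNReal.ofReal_le_ofReal ?_)
    rw [abs_of_nonneg (by linarith : (0:ℝ) ≤ b - a)])

/-- vertical path in the top -/
noncomputable def topVert (S : Set X) (h : ℝ) (hH : 0 ≤ h + Metric.diam S) (s : ↥S)
    (u0 u1 : ℝ) : ℝ → PrePt S h :=
  fun θ => Sum.inr (Sum.inr (s, Set.projIcc 0 (h + Metric.diam S) hH (u0 + θ * (u1 - u0))))

lemma topVert_cost (hH : 0 ≤ h + Metric.diam S) (s : ↥S) (u0 u1 : ℝ) (θ θ' : ℝ) :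
    preDist S h (topVert S h hH s u0 u1 θ) (topVert S h hH s u0 u1 θ') ≤
      ENNReal.ofReal (|u1 - u0| * |θ' - θ|) := by
  show ENNReal.ofReal (topDist _ _) ≤ _
  refine ENNReal.ofReal_le_ofReal ?_
  refine le_trans (min_le_left _ _) ?_
  simp only [dist_self, zero_add]
  have hl := (LipschitzWith.projIcc (a := (0:ℝ)) (b := h + Metric.diam S) hH).dist_le_mul
    (u0 + θ * (u1 - u0)) (u0 + θ' * (u1 - u0))
  rw [Subtype.dist_eq] at hl
  simp only [Real.dist_eq, NNReal.coe_one, one_mul] at hl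
  calc |(↑(Set.projIcc 0 (h + Metric.diam S) hH (u0 + θ * (u1 - u0))) : ℝ) -
        ↑(Set.projIcc 0 (h + Metric.diam S) hH (u0 + θ' * (u1 - u0)))| ≤
      |(u0 + θ * (u1 - u0)) - (u0 + θ' * (u1 - u0))| := hl
    _ = |u1 - u0| * |θ' - θ| := by
        rw [← abs_mul, abs_sub_comm]
        ring_nf
    _ ≤ _ := le_rfl

lemma topVert_econt (hH : 0 ≤ h + Metric.diam S) (s : ↥S) (u0 u1 : ℝ) :
    econt (preDist S h) (topVert S h hH s u0 u1) :=
  econt_of_lip (|u1 - u0|) (fun a _ b _ => topVert_cost hH s u0 u1 a b)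

lemma topVert_elen (hH : 0 ≤ h + Metric.diam S) (s : ↥S) (u0 u1 : ℝ) :
    elen (preDist S h) (topVert S h hH s u0 u1) ≤ ENNReal.ofReal |u1 - u0| :=
  elen_le_of_lip (|u1 - u0|) (abs_nonneg _) (fun a _ b _ hab => by
    refine le_trans (topVert_cost hH s u0 u1 a b) (ENNReal.ofReal_le_ofReal ?_)
    rw [abs_of_nonneg (by linarith : (0:ℝ) ≤ b - a)])

/-- single-piece piecewise path -/
def singlePath {Y : Type*} {c : Y → Y → ENNReal} {R : Y → Y → Prop} (p : ℝ → Y)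
    (hc : econt c p) {A B : Quot R} (h0 : Quot.mk R (p 0) = A) (h1 : Quot.mk R (p 1) = B) :
    PiecewisePath c R A B where
  m := 0
  piece := fun _ => p
  cont := fun _ => hc
  first := h0
  last := h1
  link := fun i => i.elim0

lemma singlePath_len {Y : Type*} {c : Y → Y → ENNReal} {R : Y → Y → Prop} (p : ℝ → Y)
    (hc : econt c p) {A B : Quot R} (h0 : Quot.mk R (p 0) = A) (h1 : Quot.mk R (p 1) = B) :
    (singlePath p hc h0 h1).len = elen c p := by
  unfold PiecewisePath.len singlePath
  simp

end CopsHat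
namespace CopsHat

def ppTrans {Y : Type*} {c : Y → Y → ENNReal} {R : Y → Y → Prop} {a b d : Quot R}
    (P : PiecewisePath c R a b) (Q : PiecewisePath c R b d) : PiecewisePath c R a d where
  m := P.m + Q.m + 1
  piece := fun i => if hi : (i : ℕ) < P.m + 1 then P.piece ⟨i, hi⟩
    else Q.piece ⟨(i : ℕ) - (P.m + 1), by omega⟩
  cont := fun i => by
    split_ifs with hi
    · exact P.cont _
    · exact Q.cont _
  first := by
    have h0 : ((0 : Fin (P.m + Q.m + 1 + 1)) : ℕ) < P.m + 1 := Nat.succ_pos _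
    rw [dif_pos h0]
    exact P.first
  last := by
    have hn : ¬ ((Fin.last (P.m + Q.m + 1) : ℕ) < P.m + 1) := by
      simp [Fin.last]
    rw [dif_neg hn]
    have he : (⟨(Fin.last (P.m + Q.m + 1) : ℕ) - (P.m + 1), by omega⟩ : Fin (Q.m + 1)) =
        Fin.last Q.m := by
      apply Fin.ext
      simp [Fin.last]
    rw [he]
    exact Q.last
  link := fun i => by
    rcases lt_trichotomy (i : ℕ) P.m with hi | hi | hi
    · have h1 : ((i.castSucc : ℕ)) < P.m + 1 := by simp; omega
      have h2 : ((i.succ : ℕ)) < P.m + 1 := by simp; omega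
      rw [dif_pos h1, dif_pos h2]
      exact P.link ⟨(i : ℕ), hi⟩
    · have h1 : ((i.castSucc : ℕ)) < P.m + 1 := by simp; omega
      have h2 : ¬ ((i.succ : ℕ) < P.m + 1) := by simp; omega
      rw [dif_pos h1, dif_neg h2]
      have e1 : (⟨(i.castSucc : ℕ), h1⟩ : Fin (P.m + 1)) = Fin.last P.m := by
        apply Fin.ext
        first
          | (simp only [Fin.coe_castSucc, Fin.val_succ, Fin.val_last, Fin.val_zero]; omega)
          | (simp only [Fin.coe_castSucc, Fin.val_succ, Fin.val_last, Fin.val_zero])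
          | omega
      have e2 : (⟨(i.succ : ℕ) - (P.m + 1), by omega⟩ : Fin (Q.m + 1)) = 0 := by
        apply Fin.ext
        first
          | (simp only [Fin.coe_castSucc, Fin.val_succ, Fin.val_last, Fin.val_zero]; omega)
          | (simp only [Fin.coe_castSucc, Fin.val_succ, Fin.val_last, Fin.val_zero])
          | omega
      rw [e1, e2]
      exact P.last.trans Q.first.symm
    · have h1 : ¬ ((i.castSucc : ℕ) < P.m + 1) := by simp; omega
      have h2 : ¬ ((i.succ : ℕ) < P.m + 1) := by simp; omega
      rw [dif_neg h1, dif_neg h2]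
      have hlt : (i : ℕ) - (P.m + 1) < Q.m := by
        have := i.2; simp at this; omega
      have e1 : (⟨(i.castSucc : ℕ) - (P.m + 1), by omega⟩ : Fin (Q.m + 1)) =
          (⟨(i : ℕ) - (P.m + 1), hlt⟩ : Fin Q.m).castSucc := by
        apply Fin.ext
        first
          | (simp only [Fin.coe_castSucc, Fin.val_succ, Fin.val_last, Fin.val_zero]; omega)
          | (simp only [Fin.coe_castSucc, Fin.val_succ, Fin.val_last, Fin.val_zero])
          | omega
      have e2 : (⟨(i.succ : ℕ) - (P.m + 1), by omega⟩ : Fin (Q.m + 1)) =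
          (⟨(i : ℕ) - (P.m + 1), hlt⟩ : Fin Q.m).succ := by
        apply Fin.ext
        first
          | (simp only [Fin.coe_castSucc, Fin.val_succ, Fin.val_last, Fin.val_zero]; omega)
          | (simp only [Fin.coe_castSucc, Fin.val_succ, Fin.val_last, Fin.val_zero])
          | omega
      rw [e1, e2]
      exact Q.link _

lemma piece_le_len {Y : Type*} {c : Y → Y → ENNReal} {R : Y → Y → Prop} {a b : Quot R}
    (P : PiecewisePath c R a b) (i : Fin (P.m + 1)) : elen c (P.piece i) ≤ P.len := by
  have := Finset.single_le_sum (f := fun j : Fin (P.m + 1) => elen c (P.piece j))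
    (fun _ _ => zero_le) (Finset.mem_univ i)
  simpa [PiecewisePath.len] using this

lemma trans_len_ne_top {Y : Type*} {c : Y → Y → ENNReal} {R : Y → Y → Prop} {a b d : Quot R}
    {P : PiecewisePath c R a b} {Q : PiecewisePath c R b d}
    (hP : P.len ≠ ⊤) (hQ : Q.len ≠ ⊤) : (ppTrans P Q).len ≠ ⊤ := by
  rw [← lt_top_iff_ne_top]
  have hrw : (ppTrans P Q).len = ∑ i : Fin (P.m + Q.m + 1 + 1), elen c ((ppTrans P Q).piece i) :=
    rfl
  rw [hrw, ENNReal.sum_lt_top]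
  intro i _
  rcases lt_or_ge (i : ℕ) (P.m + 1) with hi | hi
  · have he : (ppTrans P Q).piece i = P.piece ⟨(i : ℕ), hi⟩ := by
      show dite _ _ _ = _
      rw [dif_pos hi]
    rw [he]
    exact lt_of_le_of_lt (piece_le_len P _) hP.lt_top
  · have hb : (i : ℕ) - (P.m + 1) < Q.m + 1 := by
      have := i.2; omega
    have he : (ppTrans P Q).piece i = Q.piece ⟨(i : ℕ) - (P.m + 1), hb⟩ := by
      show dite _ _ _ = _
      rw [dif_neg (not_lt.mpr hi)]
    rw [he]
    exact lt_of_le_of_lt (piece_le_len Q _) hQ.lt_top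

variable {X : Type*} [MetricSpace X] {S : Set X} {h : ℝ}

/-- the geodesic path inside `X`, as a path in the glued space -/
lemma exists_path_iota (hgeo : IsGeodesicD X (fun x y => dist x y)) (x y : X) :
    ∃ P : PiecewisePath (preDist S h) (Glue S h) (iotaX S h x) (iotaX S h y),
      P.len = ENNReal.ofReal (dist x y) := by
  obtain ⟨p, hc, h0, h1, hlen⟩ := hgeo x y
  have hc' : econt (preDist S h) (fun θ => (Sum.inl (p θ) : PrePt S h)) := hc
  refine ⟨singlePath _ hc' (by rw [h0]; rfl) (by rw [h1]; rfl), ?_⟩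
  rw [singlePath_len]
  have : elen (preDist S h) (fun θ => (Sum.inl (p θ) : PrePt S h)) =
      elen (fun a b => ENNReal.ofReal (dist a b)) p := rfl
  rw [this, hlen]

lemma hatDistE_le_dist (hgeo : IsGeodesicD X (fun x y => dist x y)) (x y : X) :
    hatDistE S h (iotaX S h x) (iotaX S h y) ≤ ENNReal.ofReal (dist x y) := by
  obtain ⟨P, hP⟩ := exists_path_iota (S := S) (h := h) hgeo x y
  exact le_trans (iInf_le _ P) (le_of_eq hP)

lemma exists_path_to_base (hh : 0 < h) (a : PrePt S h) :
    ∃ P : PiecewisePath (preDist S h) (Glue S h) (Quot.mk _ a)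
      (iotaX S h (baseP S h a)), P.len ≠ ⊤ := by
  have hH : (0:ℝ) ≤ h + Metric.diam S := by
    have := Metric.diam_nonneg (s := S); linarith
  rcases a with x | ⟨s, t⟩ | ⟨s, u⟩
  · refine ⟨singlePath (fun _ => (Sum.inl x : PrePt S h)) (econt_const _) rfl rfl, ?_⟩
    exact (((singlePath_len _ _ _ _).le.trans (elen_const _)).trans_lt ENNReal.ofReal_lt_top).ne
  · -- cylinder point: vertical path down then glue to X
    have e0 : cylVert S hh.le s (t : ℝ) 0 0 = Sum.inr (Sum.inl (s, t)) := by
      unfold cylVert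
      have : (t : ℝ) + 0 * (0 - (t : ℝ)) = (t : ℝ) := by ring
      rw [this, Set.projIcc_of_mem hh.le t.2]
    have e1 : cylVert S hh.le s (t : ℝ) 0 1 = Sum.inr (Sum.inl (s, ⟨0, le_rfl, hh.le⟩)) := by
      unfold cylVert
      have : (t : ℝ) + 1 * (0 - (t : ℝ)) = 0 := by ring
      rw [this, Set.projIcc_of_mem hh.le ⟨le_rfl, hh.le⟩]
    refine ⟨singlePath (cylVert S hh.le s (t : ℝ) 0) (cylVert_econt hh.le s _ _)
      (by rw [e0]) ?_, ?_⟩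
    · rw [e1]
      exact (Quot.sound (Glue.base s ⟨0, le_rfl, hh.le⟩ rfl)).symm
    · rw [singlePath_len]
      exact ((cylVert_elen hh.le s _ _).trans_lt ENNReal.ofReal_lt_top).ne
  · -- top point: vertical down in the top, then down the cylinder
    have e0 : topVert S h hH s (u : ℝ) 0 0 = Sum.inr (Sum.inr (s, u)) := by
      unfold topVert
      have : (u : ℝ) + 0 * (0 - (u : ℝ)) = (u : ℝ) := by ring
      rw [this, Set.projIcc_of_mem hH u.2]
    have e1 : topVert S h hH s (u : ℝ) 0 1 = Sum.inr (Sum.inr (s, ⟨0, le_rfl, hH⟩)) := by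
      unfold topVert
      have : (u : ℝ) + 1 * (0 - (u : ℝ)) = 0 := by ring
      rw [this, Set.projIcc_of_mem hH ⟨le_rfl, hH⟩]
    have f0 : cylVert S hh.le s h 0 0 = Sum.inr (Sum.inl (s, ⟨h, hh.le, le_rfl⟩)) := by
      unfold cylVert
      have : h + 0 * (0 - h) = h := by ring
      rw [this, Set.projIcc_of_mem hh.le ⟨hh.le, le_rfl⟩]
    have f1 : cylVert S hh.le s h 0 1 = Sum.inr (Sum.inl (s, ⟨0, le_rfl, hh.le⟩)) := by
      unfold cylVert
      have : h + 1 * (0 - h) = 0 := by ring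
      rw [this, Set.projIcc_of_mem hh.le ⟨le_rfl, hh.le⟩]
    refine ⟨ppTrans
      (singlePath (B := Quot.mk _ (Sum.inr (Sum.inl (s, (⟨h, hh.le, le_rfl⟩ : ↥(Set.Icc (0:ℝ) h))))))
        (topVert S h hH s (u : ℝ) 0) (topVert_econt hH s _ _)
        (by rw [e0])
        (by rw [e1]
            exact (Quot.sound (Glue.mid s ⟨h, hh.le, le_rfl⟩ ⟨0, le_rfl, hH⟩ rfl rfl)).symm))
      (singlePath (cylVert S hh.le s h 0) (cylVert_econt hh.le s _ _)
        (by rw [f0])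
        (by rw [f1]
            exact (Quot.sound (Glue.base s ⟨0, le_rfl, hh.le⟩ rfl)).symm)),
      trans_len_ne_top ?_ ?_⟩
    · rw [singlePath_len]
      exact ((topVert_elen hH s _ _).trans_lt ENNReal.ofReal_lt_top).ne
    · rw [singlePath_len]
      exact ((cylVert_elen hh.le s _ _).trans_lt ENNReal.ofReal_lt_top).ne

lemma exists_path_from_base (hh : 0 < h) (a : PrePt S h) :
    ∃ P : PiecewisePath (preDist S h) (Glue S h) (iotaX S h (baseP S h a))
      (Quot.mk _ a), P.len ≠ ⊤ := by
  have hH : (0:ℝ) ≤ h + Metric.diam S := by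
    have := Metric.diam_nonneg (s := S); linarith
  rcases a with x | ⟨s, t⟩ | ⟨s, u⟩
  · refine ⟨singlePath (fun _ => (Sum.inl x : PrePt S h)) (econt_const _) rfl rfl, ?_⟩
    exact (((singlePath_len _ _ _ _).le.trans (elen_const _)).trans_lt ENNReal.ofReal_lt_top).ne
  · have e0 : cylVert S hh.le s 0 (t : ℝ) 0 = Sum.inr (Sum.inl (s, ⟨0, le_rfl, hh.le⟩)) := by
      unfold cylVert
      have : (0:ℝ) + 0 * ((t:ℝ) - 0) = 0 := by ring
      rw [this, Set.projIcc_of_mem hh.le ⟨le_rfl, hh.le⟩]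
    have e1 : cylVert S hh.le s 0 (t : ℝ) 1 = Sum.inr (Sum.inl (s, t)) := by
      unfold cylVert
      have : (0:ℝ) + 1 * ((t:ℝ) - 0) = (t : ℝ) := by ring
      rw [this, Set.projIcc_of_mem hh.le t.2]
    refine ⟨singlePath (cylVert S hh.le s 0 (t : ℝ)) (cylVert_econt hh.le s _ _)
      (by rw [e0]; exact (Quot.sound (Glue.base s ⟨0, le_rfl, hh.le⟩ rfl)).symm) (by rw [e1]), ?_⟩
    rw [singlePath_len]
    exact ((cylVert_elen hh.le s _ _).trans_lt ENNReal.ofReal_lt_top).ne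
  · have f0 : cylVert S hh.le s 0 h 0 = Sum.inr (Sum.inl (s, ⟨0, le_rfl, hh.le⟩)) := by
      unfold cylVert
      have : (0:ℝ) + 0 * (h - 0) = 0 := by ring
      rw [this, Set.projIcc_of_mem hh.le ⟨le_rfl, hh.le⟩]
    have f1 : cylVert S hh.le s 0 h 1 = Sum.inr (Sum.inl (s, ⟨h, hh.le, le_rfl⟩)) := by
      unfold cylVert
      have : (0:ℝ) + 1 * (h - 0) = h := by ring
      rw [this, Set.projIcc_of_mem hh.le ⟨hh.le, le_rfl⟩]
    have e0 : topVert S h hH s 0 (u : ℝ) 0 = Sum.inr (Sum.inr (s, ⟨0, le_rfl, hH⟩)) := by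
      unfold topVert
      have : (0:ℝ) + 0 * ((u:ℝ) - 0) = 0 := by ring
      rw [this, Set.projIcc_of_mem hH ⟨le_rfl, hH⟩]
    have e1 : topVert S h hH s 0 (u : ℝ) 1 = Sum.inr (Sum.inr (s, u)) := by
      unfold topVert
      have : (0:ℝ) + 1 * ((u:ℝ) - 0) = (u : ℝ) := by ring
      rw [this, Set.projIcc_of_mem hH u.2]
    refine ⟨ppTrans
      (singlePath (B := Quot.mk _ (Sum.inr (Sum.inl (s, (⟨h, hh.le, le_rfl⟩ : ↥(Set.Icc (0:ℝ) h))))))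
        (cylVert S hh.le s 0 h) (cylVert_econt hh.le s _ _)
        (by rw [f0]; exact (Quot.sound (Glue.base s ⟨0, le_rfl, hh.le⟩ rfl)).symm)
        (by rw [f1]))
      (singlePath (topVert S h hH s 0 (u : ℝ)) (topVert_econt hH s _ _)
        (by rw [e0]; exact Quot.sound (Glue.mid s ⟨h, hh.le, le_rfl⟩ ⟨0, le_rfl, hH⟩ rfl rfl) |>.symm)
        (by rw [e1])),
      trans_len_ne_top ?_ ?_⟩
    · rw [singlePath_len]
      exact ((cylVert_elen hh.le s _ _).trans_lt ENNReal.ofReal_lt_top).ne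
    · rw [singlePath_len]
      exact ((topVert_elen hH s _ _).trans_lt ENNReal.ofReal_lt_top).ne

lemma hatDistE_ne_top (hh : 0 < h) (hgeo : IsGeodesicD X (fun x y => dist x y))
    (A B : GlueSp S h) : hatDistE S h A B ≠ ⊤ := by
  obtain ⟨P1, hP1⟩ := exists_path_to_base (S := S) hh A.out
  obtain ⟨P2, hP2⟩ := exists_path_iota (S := S) (h := h) hgeo (baseP S h A.out) (baseP S h B.out)
  obtain ⟨P3, hP3⟩ := exists_path_from_base (S := S) hh B.out
  have hfin : (ppTrans (ppTrans P1 P2) P3).len ≠ ⊤ :=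
    trans_len_ne_top (trans_len_ne_top hP1 (by rw [hP2]; exact ENNReal.ofReal_ne_top)) hP3
  have hle : hatDistE S h (Quot.mk _ A.out) (Quot.mk _ B.out) ≤
      (ppTrans (ppTrans P1 P2) P3).len := iInf_le _ _
  have heq : hatDistE S h A B = hatDistE S h (Quot.mk _ A.out) (Quot.mk _ B.out) := by
    rw [A.out_eq, B.out_eq]
  rw [heq]
  exact fun htop => hfin (top_le_iff.mp (htop ▸ hle))

end CopsHat
namespace CopsHat

variable {X : Type*} [MetricSpace X]

lemma exists_DX (hcomp : CompactD X (fun x y => dist x y)) :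
    ∃ DX : ℝ, 0 ≤ DX ∧ ∀ x y : X, dist x y ≤ DX := by
  have hseq : IsSeqCompact (Set.univ : Set X) := by
    intro u _
    obtain ⟨x, φ, hφ, hconv⟩ := hcomp u
    exact ⟨x, Set.mem_univ x, φ, hφ, tendsto_iff_dist_tendsto_zero.mpr hconv⟩
  have hcompact : IsCompact (Set.univ : Set X) := hseq.isCompact
  refine ⟨max 0 (Metric.diam (Set.univ : Set X)), le_max_left _ _, fun x y => ?_⟩
  exact le_trans (Metric.dist_le_diam_of_mem hcompact.isBounded trivial trivial)
    (le_max_right _ _)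

lemma exists_step (hgeo : IsGeodesicD X (fun x y => dist x y)) :
    ∀ x y : X, ∀ t : ℝ, 0 ≤ t → t ≤ dist x y →
      ∃ w : X, dist x w ≤ t ∧ dist w y ≤ dist x y - t := by
  intro x y t ht hty
  obtain ⟨p, hc, h0, h1, hlen⟩ := hgeo x y
  have hcont : ContinuousOn (fun θ => dist x (p θ)) (Set.Icc (0:ℝ) 1) := by
    rw [Metric.continuousOn_iff]
    intro θ hθ ε hε
    obtain ⟨δ, hδ, hδ'⟩ := hc θ hθ (ENNReal.ofReal ε) (ENNReal.ofReal_pos.mpr hε)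
    refine ⟨δ, hδ, fun θ' hθ' hd => ?_⟩
    have h2 := hδ' θ' hθ' (by rwa [Real.dist_eq] at hd)
    rw [ENNReal.ofReal_lt_ofReal_iff hε] at h2
    have h3 : |dist x (p θ') - dist x (p θ)| ≤ dist (p θ) (p θ') := by
      have := abs_dist_sub_le (p θ') (p θ) x
      rwa [dist_comm (p θ') x, dist_comm (p θ) x, dist_comm (p θ') (p θ)] at this
    rw [Real.dist_eq]
    linarith [abs_le.mp h3]
  have hmem : t ∈ Set.Icc ((fun θ => dist x (p θ)) 0) ((fun θ => dist x (p θ)) 1) := by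
    constructor
    · show dist x (p 0) ≤ t
      rw [h0, dist_self]; exact ht
    · show t ≤ dist x (p 1)
      rwa [h1]
  obtain ⟨θ0, hθ0, hfθ0⟩ := intermediate_value_Icc zero_le_one hcont hmem
  refine ⟨p θ0, le_of_eq hfθ0, ?_⟩
  have hp := elen_ge_pair (fun a b => ENNReal.ofReal (dist a b)) p θ0 hθ0
  rw [hlen, ← ENNReal.ofReal_add dist_nonneg dist_nonneg,
    ENNReal.ofReal_le_ofReal_iff dist_nonneg, h0, h1] at hp
  have hfθ0' : dist x (p θ0) = t := hfθ0
  linarith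

lemma exists_move (hgeo : IsGeodesicD X (fun x y => dist x y)) :
    ∀ x y : X, ∀ t : ℝ, ∃ w : X, dist x w ≤ max 0 t ∧
      dist w y ≤ dist x y - min (max 0 t) (dist x y) := by
  intro x y t
  obtain ⟨w, hw1, hw2⟩ := exists_step hgeo x y (min (max 0 t) (dist x y))
    (le_min (le_max_left _ _) dist_nonneg) (min_le_right _ _)
  exact ⟨w, le_trans hw1 (min_le_left _ _), hw2⟩

variable {S : Set X} {h : ℝ}

lemma phi_eq_of_lt (hh0 : 0 ≤ h) (r : X) (a : PrePt S h)
    (hφ : phiY S h r a < h) :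
    phiY S h r a = dist (baseP S h a) r + depthP S h a := by
  have hD0 : 0 ≤ Metric.diam S := Metric.diam_nonneg
  rcases a with x | ⟨s, t⟩ | ⟨s, u⟩
  · show dist x r = dist x r + 0; ring
  · rfl
  · exfalso
    have h1 : (u : ℝ) ≤ h + Metric.diam S := u.2.2
    have h2 : (0:ℝ) ≤ (u : ℝ) := u.2.1
    have hd := dist_nonneg (x := (s : X)) (y := r)
    have hmin : h ≤ phiY S h r (Sum.inr (Sum.inr (s, u))) := by
      show h ≤ min (dist (s : X) r + h + (u : ℝ)) (2 * (h + Metric.diam S) + h - (u : ℝ))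
      refine le_min (by linarith) (by linarith)
    linarith

lemma invariant_core2 {DX : ℝ} (hhh : DX + 1 ≤ h)
    (yA yB : X) (dA dB t : ℝ) (ξ w : X)
    (h1 : dist yA yB + dA - dB ≤ t)
    (h2 : dist yB yA + dB - dA ≤ t)
    (hinv : dist ξ yA ≤ max 0 (DX + dA - h))
    (hw1 : dist w yB ≤ dist ξ yB - t)
    (hd0 : t < dist ξ yB) :
    dist w yB ≤ max 0 (DX + dB - h) := by
  have htri := dist_triangle ξ yA yB
  have hcomm : dist yB yA = dist yA yB := dist_comm _ _
  rcases le_or_gt (DX + dA - h) 0 with hM | hM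
  · rw [max_eq_left hM] at hinv
    exfalso
    have hd := dist_nonneg (x := ξ) (y := yA)
    linarith
  · rw [max_eq_right hM.le] at hinv
    refine le_trans ?_ (le_max_right _ _)
    linarith

lemma invariant_core {DX : ℝ} (hDX : ∀ x z : X, dist x z ≤ DX) (hhh : DX + 1 ≤ h)
    (a : PrePt S h) (t : ℝ) (yB : X) (dB : ℝ) (ξ w : X)
    (hbd1 : dB ≤ h)
    (hphiB : ∀ z : X, |phiY S h z a - (dist yB z + dB)| ≤ t)
    (hinv : dist ξ (baseP S h a) ≤ max 0 (DX + depthP S h a - h))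
    (hw1 : dist w yB ≤ dist ξ yB - t)
    (hd0 : t < dist ξ yB) :
    dist w yB ≤ max 0 (DX + dB - h) := by
  have hDX0 : 0 ≤ DX := le_trans dist_nonneg (hDX ξ ξ)
  have hD0 : 0 ≤ Metric.diam S := Metric.diam_nonneg
  have htDX : t < DX := lt_of_lt_of_le hd0 (hDX ξ yB)
  rcases a with x | ⟨s, tc⟩ | ⟨s, u⟩
  · refine invariant_core2 hhh x yB 0 dB t ξ w ?_ ?_ ?_ hw1 hd0
    · have := abs_le.mp (hphiB yB)
      have he : phiY S h yB (Sum.inl x : PrePt S h) = dist x yB := rfl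
      rw [he, dist_self] at this
      linarith [this.2]
    · have := abs_le.mp (hphiB x)
      have he : phiY S h x (Sum.inl x : PrePt S h) = dist x x := rfl
      rw [he, dist_self] at this
      linarith [this.1]
    · exact hinv
  · refine invariant_core2 hhh (s : X) yB (tc : ℝ) dB t ξ w ?_ ?_ ?_ hw1 hd0
    · have := abs_le.mp (hphiB yB)
      have he : phiY S h yB (Sum.inr (Sum.inl (s, tc)) : PrePt S h) =
          dist (s : X) yB + (tc : ℝ) := rfl
      rw [he, dist_self] at this
      linarith [this.2]
    · have := abs_le.mp (hphiB (s : X))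
      have he : phiY S h (s : X) (Sum.inr (Sum.inl (s, tc)) : PrePt S h) =
          dist (s : X) (s : X) + (tc : ℝ) := rfl
      rw [he, dist_self] at this
      linarith [this.1]
    · exact hinv
  · -- a in the top
    have hu1 : (u : ℝ) ≤ h + Metric.diam S := u.2.2
    have hu2 : (0:ℝ) ≤ (u : ℝ) := u.2.1
    have hiy := abs_le.mp (hphiB yB)
    have he : phiY S h yB (Sum.inr (Sum.inr (s, u)) : PrePt S h) =
        min (dist (s : X) yB + h + (u : ℝ)) (2 * (h + Metric.diam S) + h - (u : ℝ)) := rfl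
    rw [he, dist_self] at hiy
    obtain ⟨hiy1, hiy2⟩ := hiy
    rcases le_or_gt (dist (s : X) yB + h + (u : ℝ))
        (2 * (h + Metric.diam S) + h - (u : ℝ)) with hmin | hmin
    · rw [min_eq_left hmin] at hiy2
      have htri : dist ξ yB ≤ dist ξ (s : X) + dist (s : X) yB := dist_triangle _ _ _
      have hxis : dist ξ (s : X) ≤ DX := hDX _ _
      refine le_trans ?_ (le_max_right _ _)
      linarith
    · rw [min_eq_right hmin.le] at hiy2
      exfalso
      linarith

lemma invariant_step {DX : ℝ} (hDX : ∀ x z : X, dist x z ≤ DX) (hhh : DX + 1 ≤ h)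
    (a b : PrePt S h) (t : ℝ)
    (hphi : ∀ y : X, |phiY S h y a - phiY S h y b| ≤ t)
    (ξ w : X)
    (hinv : dist ξ (baseP S h a) ≤ max 0 (DX + depthP S h a - h))
    (hw1 : dist w (baseP S h b) ≤
      dist ξ (baseP S h b) - min t (dist ξ (baseP S h b))) :
    dist w (baseP S h b) ≤ max 0 (DX + depthP S h b - h) := by
  have hDX0 : 0 ≤ DX := le_trans dist_nonneg (hDX ξ ξ)
  have hD0 : 0 ≤ Metric.diam S := Metric.diam_nonneg
  rcases le_or_gt (dist ξ (baseP S h b)) t with hd0 | hd0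
  · rw [min_eq_right hd0] at hw1
    exact le_trans (by linarith : dist w (baseP S h b) ≤ 0) (le_max_left _ _)
  rw [min_eq_left hd0.le] at hw1
  rcases b with x' | ⟨s', t'⟩ | ⟨s', u'⟩
  · refine invariant_core hDX hhh a t x' 0 ξ w (by linarith) ?_ hinv hw1 hd0
    intro z
    have he : phiY S h z (Sum.inl x' : PrePt S h) = dist x' z := rfl
    have := hphi z
    rw [he] at this
    simpa using this
  · refine invariant_core hDX hhh a t (s' : X) (t' : ℝ) ξ w t'.2.2 ?_ hinv hw1 hd0
    intro z
    exact hphi z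
  · -- b in the top: the bound is at least DX
    have h2 : (0:ℝ) ≤ (u' : ℝ) := u'.2.1
    have hDepth : depthP S h (Sum.inr (Sum.inr (s', u')) : PrePt S h) = h + (u' : ℝ) := rfl
    refine le_trans (hDX w _) (le_trans ?_ (le_max_right _ _))
    rw [hDepth]; linarith

end CopsHat
namespace CopsHat

variable {X : Type*} [MetricSpace X] (S : Set X) (h : ℝ) {k : ℕ}

noncomputable def chF (σh : (n : ℕ) → (Fin (n + 2) → GlueSp S h) → Fin k → GlueSp S h)
    (c0 : Fin k → X) (r : ℕ → X) : ℕ → Fin k → GlueSp S h :=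
  copTraj (fun i => iotaX S h (c0 i)) σh (fun m => iotaX S h (r m))

noncomputable def TfF (σh : (n : ℕ) → (Fin (n + 2) → GlueSp S h) → Fin k → GlueSp S h)
    (c0 : Fin k → X) (r : ℕ → X) (i : Fin k) (n : ℕ) : X :=
  baseP S h (Quot.out (chF S h σh c0 r n i))

noncomputable def xiF (σh : (n : ℕ) → (Fin (n + 2) → GlueSp S h) → Fin k → GlueSp S h)
    (c0 : Fin k → X) (mv : X → X → ℝ → X) (τ : ℕ → ℝ) (r : ℕ → X) (i : Fin k) : ℕ → X
  | 0 => c0 i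
  | n + 1 => mv (xiF σh c0 mv τ r i n) (TfF S h σh c0 r i (n + 1)) (τ (n + 1))

def extF {n : ℕ} (hist : Fin (n + 2) → X) : ℕ → X :=
  fun m => if hm : m < n + 2 then hist ⟨m, hm⟩ else hist 0

lemma chF_congr (σh : (n : ℕ) → (Fin (n + 2) → GlueSp S h) → Fin k → GlueSp S h)
    (c0 : Fin k → X) (r1 r2 : ℕ → X) (j : ℕ) (hr : ∀ l, l ≤ j → r1 l = r2 l) (i : Fin k) :
    chF S h σh c0 r1 j i = chF S h σh c0 r2 j i := by
  cases j with
  | zero => rfl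
  | succ m =>
    show σh m (fun jj => iotaX S h (r1 jj)) i = σh m (fun jj => iotaX S h (r2 jj)) i
    have he : (fun jj : Fin (m + 2) => iotaX S h (r1 jj)) =
        (fun jj : Fin (m + 2) => iotaX S h (r2 jj)) := by
      funext jj
      rw [hr jj (by omega)]
    rw [he]

lemma xiF_congr (σh : (n : ℕ) → (Fin (n + 2) → GlueSp S h) → Fin k → GlueSp S h)
    (c0 : Fin k → X) (mv : X → X → ℝ → X) (τ : ℕ → ℝ) (r1 r2 : ℕ → X) (i : Fin k)
    (m : ℕ) (hr : ∀ l, l ≤ m → r1 l = r2 l) :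
    xiF S h σh c0 mv τ r1 i m = xiF S h σh c0 mv τ r2 i m := by
  induction m with
  | zero => rfl
  | succ n ih =>
    simp only [xiF]
    rw [ih (fun l hl => hr l (by omega))]
    unfold TfF
    rw [chF_congr S h σh c0 r1 r2 (n + 1) (fun l hl => hr l hl) i]

end CopsHat

/-- Theorem `lem hat` of the paper. For every game space `(X,d)` and every
nonempty compact subset `S ⊆ X` there is `h > 0` such that `c(X_{h,S}) ≥ c(X)` in `ℕ∞`. -/
theorem copNumber_le_copNumber_hat {X : Type*} [MetricSpace X]
    (hX : GameSpaceD X (fun x y => dist x y)) (S : Set X) (hS : IsCompact S)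
    (hSne : S.Nonempty) :
    ∃ h : ℝ, 0 < h ∧
      copNumber X (fun x y => dist x y) ≤ copNumber (GlueSp S h) (hatDist S h) := by
  classical
  obtain ⟨hne, hmet, hcomp, hgeo⟩ := hX
  obtain ⟨DX, hDX0, hDX⟩ := CopsHat.exists_DX hcomp
  have hD0 : (0:ℝ) ≤ Metric.diam S := Metric.diam_nonneg
  refine ⟨DX + Metric.diam S + 1, by linarith, ?_⟩
  set h : ℝ := DX + Metric.diam S + 1 with hhdef
  have hh0 : (0:ℝ) < h := by rw [hhdef]; linarith
  have hhh : DX + 1 ≤ h := by rw [hhdef]; linarith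
  have h1le : (1:ℝ) ≤ h := by rw [hhdef]; linarith
  refine le_sInf ?_
  rintro m ⟨k, rfl, hk⟩
  refine sInf_le ⟨k, rfl, ?_⟩
  intro τ hτ r0 c0
  obtain ⟨σh, hσh⟩ := hk τ hτ (iotaX S h r0) (fun i => iotaX S h (c0 i))
  choose mv hmv1 hmv2 using CopsHat.exists_move hgeo
  set σX : (n : ℕ) → (Fin (n + 2) → X) → Fin k → X :=
    fun n hist i => CopsHat.xiF S h σh c0 mv τ (CopsHat.extF hist) i (n + 1) with hσX
  refine ⟨σX, ?_⟩
  intro r hr0 hrleg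
  -- trajectory identification
  have hsim : ∀ n, copTraj c0 σX r n = fun i => CopsHat.xiF S h σh c0 mv τ r i n := by
    intro n
    cases n with
    | zero => rfl
    | succ n =>
      funext i
      show CopsHat.xiF S h σh c0 mv τ (CopsHat.extF (fun j : Fin (n + 2) => r j)) i (n + 1)
          = CopsHat.xiF S h σh c0 mv τ r i (n + 1)
      apply CopsHat.xiF_congr
      intro l hl
      show (if hm : l < n + 2 then r (⟨l, hm⟩ : Fin (n + 2)) else r ((0 : Fin (n+2)))) = r l
      rw [dif_pos (by omega : l < n + 2)]
  -- hat robber is legal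
  have hrh0 : (fun m' => iotaX S h (r m')) 0 = iotaX S h r0 := by
    show iotaX S h (r 0) = iotaX S h r0
    rw [hr0]
  have hrleg' : ∀ n, hatDist S h ((fun m' => iotaX S h (r m')) n)
      ((fun m' => iotaX S h (r m')) (n + 1)) ≤ τ (n + 1) := by
    intro n
    have h1 := CopsHat.hatDistE_le_dist (S := S) (h := h) hgeo (r n) (r (n + 1))
    have h2 := ENNReal.toReal_mono ENNReal.ofReal_ne_top h1
    rw [ENNReal.toReal_ofReal dist_nonneg] at h2
    exact le_trans h2 (hrleg n)
  obtain ⟨hcleg, hcapt⟩ := hσh (fun m' => iotaX S h (r m')) hrh0 hrleg'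
  have hfin : ∀ A B : GlueSp S h, hatDistE S h A B ≠ ⊤ :=
    fun A B => CopsHat.hatDistE_ne_top hh0 hgeo A B
  -- cop legality bound, transported to representatives via φ
  have hphiAB : ∀ (y : X) (n : ℕ) (i : Fin k),
      |CopsHat.phiY S h y (Quot.out (CopsHat.chF S h σh c0 r n i)) -
       CopsHat.phiY S h y (Quot.out (CopsHat.chF S h σh c0 r (n + 1) i))| ≤ τ (n + 1) := by
    intro y n i
    refine le_trans (CopsHat.dist_lower_real (CopsHat.phiY S h y)
      (CopsHat.phiY_glue hDX hhh y) (CopsHat.phiY_lip y) (hfin _ _)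
      (Quot.out_eq _) (Quot.out_eq _)) ?_
    exact hcleg n i
  -- the invariant
  have hinv : ∀ n (i : Fin k),
      dist (CopsHat.xiF S h σh c0 mv τ r i n) (CopsHat.TfF S h σh c0 r i n)
        ≤ max 0 (DX + CopsHat.depthP S h (Quot.out (CopsHat.chF S h σh c0 r n i)) - h) := by
    intro n
    induction n with
    | zero =>
      intro i
      have hphi0 : |CopsHat.phiY S h (c0 i) (Quot.out (CopsHat.chF S h σh c0 r 0 i)) -
          CopsHat.phiY S h (c0 i) (Sum.inl (c0 i))| ≤
            hatDist S h (CopsHat.chF S h σh c0 r 0 i) (iotaX S h (c0 i)) :=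
        CopsHat.dist_lower_real (CopsHat.phiY S h (c0 i))
          (CopsHat.phiY_glue hDX hhh (c0 i)) (CopsHat.phiY_lip (c0 i)) (hfin _ _)
          (Quot.out_eq _) rfl
      have hdd : hatDist S h (CopsHat.chF S h σh c0 r 0 i) (iotaX S h (c0 i)) ≤ 0 := by
        have h1 : hatDistE S h (iotaX S h (c0 i)) (iotaX S h (c0 i)) ≤
            ENNReal.ofReal (dist (c0 i) (c0 i)) := CopsHat.hatDistE_le_dist hgeo _ _
        rw [dist_self, ENNReal.ofReal_zero, le_zero_iff] at h1
        show (hatDistE S h (CopsHat.chF S h σh c0 r 0 i) (iotaX S h (c0 i))).toReal ≤ 0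
        have : CopsHat.chF S h σh c0 r 0 i = iotaX S h (c0 i) := rfl
        rw [this, h1]
        simp
      have hval : CopsHat.phiY S h (c0 i) (Sum.inl (c0 i) : PrePt S h) = 0 := by
        show dist (c0 i) (c0 i) = 0
        simp
      rw [hval, sub_zero] at hphi0
      have hφ0 : CopsHat.phiY S h (c0 i) (Quot.out (CopsHat.chF S h σh c0 r 0 i)) = 0 := by
        have hnn := CopsHat.phiY_nonneg hh0.le (c0 i) (Quot.out (CopsHat.chF S h σh c0 r 0 i))
        rw [abs_of_nonneg hnn] at hphi0
        linarith [le_trans hphi0 hdd]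
      have heq := CopsHat.phi_eq_of_lt hh0.le (c0 i)
        (Quot.out (CopsHat.chF S h σh c0 r 0 i)) (by rw [hφ0]; exact hh0)
      rw [hφ0] at heq
      have hd1 := dist_nonneg (x := CopsHat.baseP S h (Quot.out (CopsHat.chF S h σh c0 r 0 i)))
        (y := c0 i)
      have hd2 := CopsHat.depthP_nonneg (Quot.out (CopsHat.chF S h σh c0 r 0 i)) hh0.le
      have hz : dist (CopsHat.baseP S h (Quot.out (CopsHat.chF S h σh c0 r 0 i))) (c0 i) = 0 := by
        linarith
      show dist (c0 i) (CopsHat.baseP S h (Quot.out (CopsHat.chF S h σh c0 r 0 i)))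
        ≤ max 0 (DX + CopsHat.depthP S h (Quot.out (CopsHat.chF S h σh c0 r 0 i)) - h)
      rw [dist_comm, hz]
      exact le_max_left _ _
    | succ n ih =>
      intro i
      have hτpos : (0:ℝ) ≤ τ (n + 1) := (hτ.1 (n + 1)).le
      have hstep2 := hmv2 (CopsHat.xiF S h σh c0 mv τ r i n) (CopsHat.TfF S h σh c0 r i (n + 1))
        (τ (n + 1))
      rw [max_eq_right hτpos] at hstep2
      exact CopsHat.invariant_step hDX hhh
        (Quot.out (CopsHat.chF S h σh c0 r n i)) (Quot.out (CopsHat.chF S h σh c0 r (n + 1) i))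
        (τ (n + 1)) (fun y => hphiAB y n i) _ _ (ih i) hstep2
  constructor
  · -- legality of the simulated cops
    intro n i
    rw [hsim n, hsim (n + 1)]
    show dist (CopsHat.xiF S h σh c0 mv τ r i n) (CopsHat.xiF S h σh c0 mv τ r i (n + 1)) ≤ τ (n + 1)
    have hτpos : (0:ℝ) ≤ τ (n + 1) := (hτ.1 (n + 1)).le
    have := hmv1 (CopsHat.xiF S h σh c0 mv τ r i n) (CopsHat.TfF S h σh c0 r i (n + 1)) (τ (n + 1))
    rw [max_eq_right hτpos] at this
    exact this
  · -- capture
    intro ε hε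
    obtain ⟨n, i, hni⟩ := hcapt (min ε 1) (by positivity)
    refine ⟨n, i, ?_⟩
    rw [hsim n]
    show dist (r n) (CopsHat.xiF S h σh c0 mv τ r i n) < ε
    have hphin : |CopsHat.phiY S h (r n) (Sum.inl (r n)) -
        CopsHat.phiY S h (r n) (Quot.out (CopsHat.chF S h σh c0 r n i))| ≤
          hatDist S h (iotaX S h (r n)) (CopsHat.chF S h σh c0 r n i) :=
      CopsHat.dist_lower_real (CopsHat.phiY S h (r n))
        (CopsHat.phiY_glue hDX hhh (r n)) (CopsHat.phiY_lip (r n)) (hfin _ _)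
        rfl (Quot.out_eq _)
    have hval : CopsHat.phiY S h (r n) (Sum.inl (r n) : PrePt S h) = 0 := by
      show dist (r n) (r n) = 0
      simp
    rw [hval, zero_sub, abs_neg,
      abs_of_nonneg (CopsHat.phiY_nonneg hh0.le _ _)] at hphin
    have hφlt : CopsHat.phiY S h (r n) (Quot.out (CopsHat.chF S h σh c0 r n i)) < min ε 1 :=
      lt_of_le_of_lt hphin hni
    have hm1 : min ε 1 ≤ 1 := min_le_right _ _
    have hφh : CopsHat.phiY S h (r n) (Quot.out (CopsHat.chF S h σh c0 r n i)) < h :=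
      lt_of_lt_of_le hφlt (le_trans hm1 h1le)
    have heq := CopsHat.phi_eq_of_lt hh0.le (r n) (Quot.out (CopsHat.chF S h σh c0 r n i)) hφh
    have hd1 := dist_nonneg (x := CopsHat.baseP S h (Quot.out (CopsHat.chF S h σh c0 r n i)))
      (y := r n)
    have hd2 := CopsHat.depthP_nonneg (Quot.out (CopsHat.chF S h σh c0 r n i)) hh0.le
    have hdep : CopsHat.depthP S h (Quot.out (CopsHat.chF S h σh c0 r n i)) < 1 := by
      rw [heq] at hφlt
      linarith
    have hM : max 0 (DX + CopsHat.depthP S h (Quot.out (CopsHat.chF S h σh c0 r n i)) - h) = 0 :=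
      max_eq_left (by linarith)
    have hxi := hinv n i
    rw [hM] at hxi
    have hxz : dist (CopsHat.xiF S h σh c0 mv τ r i n) (CopsHat.TfF S h σh c0 r i n) = 0 :=
      le_antisymm hxi dist_nonneg
    have htr : dist (r n) (CopsHat.xiF S h σh c0 mv τ r i n) ≤
        dist (r n) (CopsHat.TfF S h σh c0 r i n) +
          dist (CopsHat.TfF S h σh c0 r i n) (CopsHat.xiF S h σh c0 mv τ r i n) :=
      dist_triangle _ _ _
    have hbase : dist (r n) (CopsHat.TfF S h σh c0 r i n) < min ε 1 := by
      rw [heq] at hφlt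
      have : dist (r n) (CopsHat.TfF S h σh c0 r i n) =
          dist (CopsHat.baseP S h (Quot.out (CopsHat.chF S h σh c0 r n i))) (r n) :=
        dist_comm _ _
      rw [this]
      linarith
    have hε1 : min ε 1 ≤ ε := min_le_left _ _
    rw [dist_comm (CopsHat.TfF S h σh c0 r i n) _] at htr
    rw [hxz] at htr
    linarith
end

section
/- Let (X,d) be a game space, S ⊆ X a nonempty compact subset, k ∈ ℕ, M > 0 and ε ∈ (0, h], where h ≥ M + diam(X). Suppose the robber has a strategy in the game against k cops on X, with an agility function τ satisfying τ(n) ≤ M for all n (and Σ_n τ(n)=∞), which guarantees d(r^n, c^n_i) > ε for all n and all i ≤ k against every cop play. Then the robber has a strategy in the game against k cops on X_{h,S}, with the same agility function τ, which guarantees d'(r^n, c^n_i) > ε/3 for all n and all i ≤ k against every cop play. In particular, k cops do not have a winning strategy on X_{h,S}. -/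
/-!
Game of Cops and Robber on metric spaces, following Mohar, formalized relative to an
explicit distance function `d : Y → Y → ℝ`.
-/

open Set Filter Topology

section GenLemmas

variable {Y : Type*} {c : Y → Y → ENNReal} {p : ℝ → Y}

lemma elen_ge_partition (q : ℕ) (u : ℕ → ℝ) (hu : Monotone u)
    (hmem : ∀ i, u i ∈ Set.Icc (0:ℝ) 1) :
    ∑ i ∈ Finset.range q, c (p (u i)) (p (u (i+1))) ≤ elen c p :=
  le_iSup (fun q : ℕ × {u : ℕ → ℝ // Monotone u ∧ ∀ i, u i ∈ Set.Icc (0 : ℝ) 1} =>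
    ∑ i ∈ Finset.range q.1, c (p (q.2.1 i)) (p (q.2.1 (i + 1)))) (q, ⟨u, hu, hmem⟩)

lemma elen_ge_pair : c (p 0) (p 1) ≤ elen c p := by
  have h := elen_ge_partition (c := c) (p := p) 1 (fun i => if i = 0 then 0 else 1)
    (fun i j hij => by by_cases hi : i = 0 <;> by_cases hj : j = 0 <;> simp [hi, hj] <;> omega)
    (fun i => by by_cases hi : i = 0 <;> simp [hi])
  simpa using h

lemma elen_ge_two {t₀ : ℝ} (h0 : 0 ≤ t₀) (h1 : t₀ ≤ 1) :
    c (p 0) (p t₀) + c (p t₀) (p 1) ≤ elen c p := by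
  have h := elen_ge_partition (c := c) (p := p) 2
    (fun i => if i = 0 then 0 else if i = 1 then t₀ else 1)
    (fun i j hij => by
      rcases Nat.lt_or_ge i 1 with hi | hi
      · interval_cases i <;> by_cases hj : j = 0 <;> by_cases hj1 : j = 1 <;>
          simp [hj, hj1, h0] <;> omega
      · rcases Nat.lt_or_ge i 2 with hi2 | hi2
        · interval_cases i <;> by_cases hj : j = 0 <;> by_cases hj1 : j = 1 <;>
            simp [hj, hj1, h1] <;> omega
        · have hj : j ≠ 0 := by omega
          have hj1 : j ≠ 1 := by omega
          have hi0 : i ≠ 0 := by omega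
          have hi1 : i ≠ 1 := by omega
          simp [hj, hj1, hi0, hi1])
    (fun i => by by_cases hi : i = 0 <;> by_cases hi1 : i = 1 <;>
      simp [hi, hi1, h0, h1])
  simpa [Finset.sum_range_succ] using h

lemma elen_le_of_mono (g : ℝ → ℝ) (hg : MonotoneOn g (Set.Icc (0:ℝ) 1))
    (hc : ∀ s ∈ Set.Icc (0:ℝ) 1, ∀ t ∈ Set.Icc (0:ℝ) 1, s ≤ t →
      c (p s) (p t) ≤ ENNReal.ofReal (g t - g s)) :
    elen c p ≤ ENNReal.ofReal (g 1 - g 0) := by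
  refine iSup_le ?_
  rintro ⟨q, u, hu, hmem⟩
  calc ∑ i ∈ Finset.range q, c (p (u i)) (p (u (i+1)))
      ≤ ∑ i ∈ Finset.range q, ENNReal.ofReal (g (u (i+1)) - g (u i)) := by
        refine Finset.sum_le_sum fun i _ => ?_
        exact hc _ (hmem i) _ (hmem (i+1)) (hu (Nat.le_succ i))
    _ = ENNReal.ofReal (∑ i ∈ Finset.range q, (g (u (i+1)) - g (u i))) := by
        rw [ENNReal.ofReal_sum_of_nonneg]
        intro i _
        have := hg (hmem i) (hmem (i+1)) (hu (Nat.le_succ i))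
        linarith
    _ = ENNReal.ofReal (g (u q) - g (u 0)) := by
        rw [Finset.sum_range_sub (fun i => g (u i))]
    _ ≤ ENNReal.ofReal (g 1 - g 0) := by
        apply ENNReal.ofReal_le_ofReal
        have h1 : g (u q) ≤ g 1 := hg (hmem q) (by constructor <;> norm_num) (hmem q).2
        have h0 : g 0 ≤ g (u 0) := hg (by constructor <;> norm_num) (hmem 0) (hmem 0).1
        linarith

lemma econt_of_lip (L : ℝ)
    (hc : ∀ s ∈ Set.Icc (0:ℝ) 1, ∀ t ∈ Set.Icc (0:ℝ) 1,
      c (p s) (p t) ≤ ENNReal.ofReal (L * |t - s|)) :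
    econt c p := by
  intro t ht ε hε
  rcases eq_or_ne ε ⊤ with rfl | hne
  · exact ⟨1, one_pos, fun t' ht' _ =>
      lt_of_le_of_lt (hc _ ht _ ht') ENNReal.ofReal_lt_top⟩
  · have hεt : 0 < ε.toReal := ENNReal.toReal_pos hε.ne' hne
    refine ⟨ε.toReal / (|L| + 1), by positivity, fun t' ht' hlt => ?_⟩
    refine lt_of_le_of_lt (hc _ ht _ ht') ?_
    rcases le_or_gt (L * |t' - t|) 0 with hL | hL
    · rw [ENNReal.ofReal_eq_zero.2 hL]; exact hε
    · rw [ENNReal.ofReal_lt_iff_lt_toReal hL.le hne]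
      have h1 : L * |t' - t| ≤ |L| * |t' - t| :=
        mul_le_mul_of_nonneg_right (le_abs_self L) (abs_nonneg _)
      have h2 : |L| * |t' - t| < |L| * (ε.toReal / (|L| + 1)) ∨ |L| = 0 := by
        rcases eq_or_lt_of_le (abs_nonneg L) with h | h
        · exact Or.inr h.symm
        · exact Or.inl (by exact mul_lt_mul_of_pos_left hlt h)
      rcases h2 with h2 | h2
      · have : |L| * (ε.toReal / (|L| + 1)) < ε.toReal := by
          rw [mul_div_assoc']
          rw [div_lt_iff₀ (by positivity)]
          nlinarith [abs_nonneg L]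
        linarith
      · exfalso; rw [h2, zero_mul] at h1; linarith

lemma econt_const {y : Y} (h : c y y = 0) : econt c (fun _ => y) :=
  fun _ _ ε hε => ⟨1, one_pos, fun _ _ _ => by simpa [h] using hε⟩

lemma elen_const {y : Y} (h : c y y = 0) : elen c (fun _ => y) = 0 := by
  refine le_antisymm (iSup_le ?_) zero_le
  rintro ⟨q, u, hu, hmem⟩
  simp [h]

lemma glueDist_le_len {R : Y → Y → Prop} {a b : Quot R} (P : PiecewisePath c R a b) :
    glueDist c R a b ≤ P.len := iInf_le _ P

/-- single-piece path -/
def PiecewisePath.single {R : Y → Y → Prop} {a b : Quot R} (p : ℝ → Y)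
    (hcont : econt c p) (ha : Quot.mk R (p 0) = a) (hb : Quot.mk R (p 1) = b) :
    PiecewisePath c R a b where
  m := 0
  piece := fun _ => p
  cont := fun _ => hcont
  first := ha
  last := hb
  link := fun i => i.elim0

lemma PiecewisePath.single_len {R : Y → Y → Prop} {a b : Quot R} (p : ℝ → Y)
    (hcont : econt c p) (ha : Quot.mk R (p 0) = a) (hb : Quot.mk R (p 1) = b) :
    (PiecewisePath.single p hcont ha hb).len = elen c p := by
  show ∑ _i : Fin 1, elen c p = elen c p
  simp

/-- telescoping a glue-respecting part-wise Lipschitz function along piecewise paths -/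
lemma abs_lift_sub_le_glueDist {R : Y → Y → Prop}
    (F : Y → ℝ) (hR : ∀ p q, R p q → F p = F q)
    (hL : ∀ p q, ENNReal.ofReal |F p - F q| ≤ c p q)
    (a b : Quot R) :
    ENNReal.ofReal |Quot.lift F hR a - Quot.lift F hR b| ≤ glueDist c R a b := by
  refine le_iInf fun P => ?_
  set G := Quot.lift F hR with hG
  have hGmk : ∀ w, G (Quot.mk R w) = F w := fun w => rfl
  -- truncated piece function
  set pc : ℕ → ℝ → Y := fun j => P.piece ⟨min j P.m, by omega⟩ with hpc
  have key : ∀ n, n ≤ P.m →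
      ENNReal.ofReal |G a - F (pc n 1)| ≤ ∑ j ∈ Finset.range (n+1), elen c (pc j) := by
    intro n
    induction n with
    | zero =>
      intro _
      have hpc0 : pc 0 = P.piece 0 := by
        rw [hpc]; congr 1
      have ha : G a = F (pc 0 0) := by
        rw [← P.first, hGmk, hpc0]
      rw [ha]
      calc ENNReal.ofReal |F (pc 0 0) - F (pc 0 1)| ≤ c (pc 0 0) (pc 0 1) := hL _ _
        _ ≤ elen c (pc 0) := elen_ge_pair
        _ = ∑ j ∈ Finset.range 1, elen c (pc j) := by simp
    | succ n ih =>
      intro hn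
      have hn' : n ≤ P.m := by omega
      have hlink : F (pc n 1) = F (pc (n+1) 0) := by
        have hl := P.link ⟨n, by omega⟩
        have h1 : (⟨n, by omega⟩ : Fin P.m).castSucc = (⟨min n P.m, by omega⟩ : Fin (P.m+1)) := by
          ext; simp [Nat.min_eq_left hn']
        have h2 : (⟨n, by omega⟩ : Fin P.m).succ = (⟨min (n+1) P.m, by omega⟩ : Fin (P.m+1)) := by
          ext; simp [Nat.min_eq_left hn]
        rw [h1, h2] at hl
        have := congrArg G hl
        simpa [hGmk] using this
      have tri : |G a - F (pc (n+1) 1)| ≤ |G a - F (pc n 1)| + |F (pc (n+1) 0) - F (pc (n+1) 1)| := by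
        rw [hlink]
        exact abs_sub_le _ _ _
      calc ENNReal.ofReal |G a - F (pc (n+1) 1)|
          ≤ ENNReal.ofReal (|G a - F (pc n 1)| + |F (pc (n+1) 0) - F (pc (n+1) 1)|) :=
            ENNReal.ofReal_le_ofReal tri
        _ ≤ ENNReal.ofReal |G a - F (pc n 1)| + ENNReal.ofReal |F (pc (n+1) 0) - F (pc (n+1) 1)| :=
            ENNReal.ofReal_add_le
        _ ≤ (∑ j ∈ Finset.range (n+1), elen c (pc j)) + elen c (pc (n+1)) := by
            refine add_le_add (ih hn') ?_
            exact le_trans (hL _ _) elen_ge_pair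
        _ = ∑ j ∈ Finset.range (n+2), elen c (pc j) := by
            rw [Finset.sum_range_succ (fun j => elen c (pc j)) (n+1),
              Finset.sum_range_succ (fun j => elen c (pc j)) n]
  have hfin := key P.m le_rfl
  have hpcm : pc P.m = P.piece (Fin.last P.m) := by
    rw [hpc]; congr 1; ext; simp [Fin.last]
  have hb : F (pc P.m 1) = G b := by
    have h1 : G b = F (P.piece (Fin.last P.m) 1) := (congrArg G P.last).symm
    rw [h1]
    exact congrArg (fun f => F (f 1)) hpcm
  have hlen : ∑ j ∈ Finset.range (P.m+1), elen c (pc j) = P.len := by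
    rw [PiecewisePath.len, ← Fin.sum_univ_eq_sum_range (fun j => elen c (pc j)) (P.m+1)]
    refine Finset.sum_congr rfl fun i _ => ?_
    congr 1
    rw [hpc]
    congr 1
    ext
    simp [Nat.min_eq_left (Nat.lt_succ_iff.1 i.isLt)]
  rw [hb] at hfin
  rwa [hlen] at hfin

end GenLemmas

namespace HatAux

variable {X : Type*} [MetricSpace X] {S : Set X} {h : ℝ}

lemma preDist_self (w : PrePt S h) : preDist S h w w = 0 := by
  rcases w with x | p | p
  · simp [preDist]
  · simp [preDist, cylDist]
  · have h2 : (p.2 : ℝ) ≤ h + Metric.diam S := p.2.2.2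
    simp only [preDist, topDist]
    rw [ENNReal.ofReal_eq_zero]
    simp only [dist_self, sub_self, abs_zero, add_zero, zero_add]
    have : min 0 (h + Metric.diam S - ↑p.2 + (h + Metric.diam S - ↑p.2)) = 0 :=
      min_eq_left (by linarith)
    linarith [this.le]

/-- the height function on parts -/
def htF (S : Set X) (h : ℝ) : PrePt S h → ℝ
  | Sum.inl _ => 0
  | Sum.inr (Sum.inl q) => (q.2 : ℝ)
  | Sum.inr (Sum.inr q) => h + (q.2 : ℝ)

lemma htF_glue : ∀ p q, Glue S h p q → htF S h p = htF S h q := by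
  rintro p q (⟨s, t, ht⟩ | ⟨s, t, u, ht, hu⟩ | ⟨p, q, hp, hq⟩) <;> simp [htF, *]

noncomputable def HtQ (S : Set X) (h : ℝ) : GlueSp S h → ℝ :=
  Quot.lift (htF S h) htF_glue

lemma htF_lip : ∀ p q, ENNReal.ofReal |htF S h p - htF S h q| ≤ preDist S h p q := by
  rintro (x | p | p) (y | q | q) <;> simp only [preDist, htF] <;> try exact le_top
  · simp
  · apply ENNReal.ofReal_le_ofReal
    rw [cylDist]
    have := dist_nonneg (x := (p.1 : X)) (y := (q.1 : X))
    have := abs_sub_comm (p.2 : ℝ) (q.2 : ℝ)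
    calc |(p.2 : ℝ) - q.2| ≤ |(p.2:ℝ) - q.2| := le_rfl
      _ ≤ _ := by linarith [abs_nonneg ((p.2:ℝ) - q.2)]
  · apply ENNReal.ofReal_le_ofReal
    rw [topDist]
    have h1 : |h + (p.2:ℝ) - (h + q.2)| = |(p.2:ℝ) - q.2| := by ring_nf
    rw [h1]
    apply le_min
    · linarith [dist_nonneg (x := (p.1 : X)) (y := (q.1 : X))]
    · have hp2 : (p.2 : ℝ) ≤ h + Metric.diam S := p.2.2.2
      have hq2 : (q.2 : ℝ) ≤ h + Metric.diam S := q.2.2.2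
      rw [abs_le]
      constructor <;> [linarith; linarith]

lemma htF_nonneg (h0 : 0 ≤ h) (w : PrePt S h) : 0 ≤ htF S h w := by
  rcases w with x | p | p
  · simp [htF]
  · exact p.2.2.1
  · have := p.2.2.1; simp only [htF]; linarith

/-- the projection to `X` -/
noncomputable def projF (S : Set X) (h : ℝ) (s₀ : X) : PrePt S h → X
  | Sum.inl x => x
  | Sum.inr (Sum.inl q) => (q.1 : X)
  | Sum.inr (Sum.inr q) => if (q.2 : ℝ) = h + Metric.diam S then s₀ else (q.1 : X)

lemma projF_glue (s₀ : X) (hh : 0 < h) :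
    ∀ p q, Glue S h p q → projF S h s₀ p = projF S h s₀ q := by
  rintro p q (⟨s, t, ht⟩ | ⟨s, t, u, hu, ht⟩ | ⟨p, q, hp, hq⟩)
  · rfl
  · have : (u : ℝ) ≠ h + Metric.diam S := by
      rw [ht]
      have := Metric.diam_nonneg (s := S)
      intro hc; linarith
    simp [projF, this]
  · simp [projF, hp, hq]

noncomputable def projQ (S : Set X) (h : ℝ) (s₀ : X) (hh : 0 < h) : GlueSp S h → X :=
  Quot.lift (projF S h s₀) (projF_glue s₀ hh)

/-- the potential function -/
noncomputable def phiF (S : Set X) (h : ℝ) (y : X) : PrePt S h → ℝ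
  | Sum.inl x => dist x y
  | Sum.inr (Sum.inl q) => dist (q.1 : X) y + (q.2 : ℝ)
  | Sum.inr (Sum.inr q) => min (dist (q.1 : X) y + h + (q.2 : ℝ))
      (h + (h + Metric.diam S) + ((h + Metric.diam S) - (q.2 : ℝ)))

lemma phiF_glue (y : X) (hb : ∀ x x' : X, dist x x' ≤ h) :
    ∀ p q, Glue S h p q → phiF S h y p = phiF S h y q := by
  have h0 : 0 ≤ h := le_trans dist_nonneg (hb y y)
  have hd0 : 0 ≤ Metric.diam S := Metric.diam_nonneg
  rintro p q (⟨s, t, ht⟩ | ⟨s, t, u, ht, hu⟩ | ⟨p, q, hp, hq⟩)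
  · simp [phiF, ht]
  · have hds : dist (s : X) y ≤ h := hb _ _
    simp only [phiF, ht, hu]
    rw [min_eq_left (by linarith)]
    ring
  · simp only [phiF, hp, hq]
    rw [min_eq_right (by linarith [dist_nonneg (x := (p.1:X)) (y := y)]),
      min_eq_right (by linarith [dist_nonneg (x := (q.1:X)) (y := y)])]

noncomputable def phiQ (S : Set X) (h : ℝ) (y : X) (hb : ∀ x x' : X, dist x x' ≤ h) :
    GlueSp S h → ℝ :=
  Quot.lift (phiF S h y) (phiF_glue y hb)

lemma phiF_lip (y : X) : ∀ p q, ENNReal.ofReal |phiF S h y p - phiF S h y q| ≤ preDist S h p q := by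
  rintro (x | p | p) (x' | q | q) <;> simp only [preDist, phiF] <;> try exact le_top
  · exact ENNReal.ofReal_le_ofReal (abs_dist_sub_le _ _ _)
  · apply ENNReal.ofReal_le_ofReal
    rw [cylDist]
    have h1 : |dist (p.1:X) y - dist (q.1:X) y| ≤ dist (p.1:X) (q.1:X) := abs_dist_sub_le _ _ _
    have h2 : |(dist (p.1:X) y + (p.2:ℝ)) - (dist (q.1:X) y + (q.2:ℝ))|
        ≤ |dist (p.1:X) y - dist (q.1:X) y| + |(p.2:ℝ) - (q.2:ℝ)| := by
      have := abs_add_le (dist (p.1:X) y - dist (q.1:X) y) ((p.2:ℝ) - (q.2:ℝ))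
      rw [show (dist (p.1:X) y + (p.2:ℝ)) - (dist (q.1:X) y + (q.2:ℝ))
          = (dist (p.1:X) y - dist (q.1:X) y) + ((p.2:ℝ) - (q.2:ℝ)) by ring]
      exact this
    linarith
  · apply ENNReal.ofReal_le_ofReal
    rw [topDist]
    set H := h + Metric.diam S with hH
    have hp2 : (p.2 : ℝ) ≤ H := p.2.2.2
    have hq2 : (q.2 : ℝ) ≤ H := q.2.2.2
    have hp0 : 0 ≤ (p.2 : ℝ) := p.2.2.1
    have hq0 : 0 ≤ (q.2 : ℝ) := q.2.2.1
    have hd1 : |dist (p.1:X) y - dist (q.1:X) y| ≤ dist (p.1:X) (q.1:X) := abs_dist_sub_le _ _ _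
    apply le_min
    · -- Lipschitz wrt the first branch
      have b1 : |(dist (p.1:X) y + h + (p.2:ℝ)) - (dist (q.1:X) y + h + (q.2:ℝ))|
          ≤ dist (p.1:X) (q.1:X) + |(p.2:ℝ) - (q.2:ℝ)| := by
        have := abs_add_le (dist (p.1:X) y - dist (q.1:X) y) ((p.2:ℝ) - (q.2:ℝ))
        have he : (dist (p.1:X) y + h + (p.2:ℝ)) - (dist (q.1:X) y + h + (q.2:ℝ))
            = (dist (p.1:X) y - dist (q.1:X) y) + ((p.2:ℝ) - (q.2:ℝ)) := by ring
        rw [he]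
        linarith
      have b2 : |(h + H + (H - (p.2:ℝ))) - (h + H + (H - (q.2:ℝ)))|
          ≤ dist (p.1:X) (q.1:X) + |(p.2:ℝ) - (q.2:ℝ)| := by
        have he : (h + H + (H - (p.2:ℝ))) - (h + H + (H - (q.2:ℝ))) = (q.2:ℝ) - (p.2:ℝ) := by ring
        rw [he, abs_sub_comm]
        linarith [dist_nonneg (x := (p.1:X)) (y := (q.1:X))]
      calc |min (dist (p.1:X) y + h + (p.2:ℝ)) (h + H + (H - (p.2:ℝ)))
            - min (dist (q.1:X) y + h + (q.2:ℝ)) (h + H + (H - (q.2:ℝ)))|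
          ≤ max |(dist (p.1:X) y + h + (p.2:ℝ)) - (dist (q.1:X) y + h + (q.2:ℝ))|
              |(h + H + (H - (p.2:ℝ))) - (h + H + (H - (q.2:ℝ)))| := abs_min_sub_min_le_max _ _ _ _
        _ ≤ dist (p.1:X) (q.1:X) + |(p.2:ℝ) - (q.2:ℝ)| := max_le b1 b2
    · -- Lipschitz wrt the apex branch, via the sandwich
      have sp : h + (p.2:ℝ) ≤ min (dist (p.1:X) y + h + (p.2:ℝ)) (h + H + (H - (p.2:ℝ))) :=
        le_min (by linarith [dist_nonneg (x := (p.1:X)) (y := y)]) (by linarith)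
      have sp' : min (dist (p.1:X) y + h + (p.2:ℝ)) (h + H + (H - (p.2:ℝ)))
          ≤ h + H + (H - (p.2:ℝ)) := min_le_right _ _
      have sq : h + (q.2:ℝ) ≤ min (dist (q.1:X) y + h + (q.2:ℝ)) (h + H + (H - (q.2:ℝ))) :=
        le_min (by linarith [dist_nonneg (x := (q.1:X)) (y := y)]) (by linarith)
      have sq' : min (dist (q.1:X) y + h + (q.2:ℝ)) (h + H + (H - (q.2:ℝ)))
          ≤ h + H + (H - (q.2:ℝ)) := min_le_right _ _
      rw [abs_le]
      constructor <;> [linarith; linarith]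

lemma phiF_ge_htF (y : X) (w : PrePt S h) : htF S h w ≤ phiF S h y w := by
  rcases w with x | p | p
  · simpa [htF, phiF] using dist_nonneg
  · simp only [htF, phiF]
    linarith [dist_nonneg (x := (p.1:X)) (y := y)]
  · simp only [htF, phiF]
    have hp2 : (p.2 : ℝ) ≤ h + Metric.diam S := p.2.2.2
    exact le_min (by linarith [dist_nonneg (x := (p.1:X)) (y := y)]) (by linarith)

/-- the region formula: below height `h + M` the potential is distance-from-projection plus
height -/
lemma phiF_eq_region (y s₀ : X) {M : ℝ} (hM : 0 < M)
    (hd : ∀ x x' : X, dist x x' ≤ h - M) (w : PrePt S h)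
    (hw : htF S h w ≤ h + M) :
    phiF S h y w = dist (projF S h s₀ w) y + htF S h w := by
  have h0 : 0 ≤ h - M := le_trans dist_nonneg (hd y y)
  have hd0 : 0 ≤ Metric.diam S := Metric.diam_nonneg
  rcases w with x | p | p
  · simp [phiF, projF, htF]
  · simp [phiF, projF, htF]
  · have hu : (p.2 : ℝ) ≤ M := by
      simp only [htF] at hw; linarith
    have hp2 : (p.2 : ℝ) ≤ h + Metric.diam S := p.2.2.2
    by_cases hap : (p.2 : ℝ) = h + Metric.diam S
    · -- degenerate: only possible if h = M and diam S = 0; then all distances are 0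
      have hhM : h + Metric.diam S ≤ M := by rw [← hap]; exact hu
      have hdist0 : ∀ x x' : X, dist x x' = 0 := fun x x' =>
        le_antisymm (by linarith [hd x x']) dist_nonneg
      simp only [phiF, projF, if_pos hap, htF, hap]
      rw [if_pos trivial, hdist0 (p.1:X) y, hdist0 s₀ y]
      rw [min_eq_right (by linarith)]
      ring
    · simp only [phiF, projF, if_neg hap, htF]
      have hds : dist (p.1:X) y ≤ h - M := hd _ _
      rw [min_eq_left (by linarith)]
      ring

end HatAux

namespace HatAux

variable {X : Type*} [MetricSpace X] {S : Set X} {h : ℝ}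

/-- clamp to `[0,1]` -/
noncomputable def c01 (θ : ℝ) : ℝ := max 0 (min 1 θ)

lemma c01_mem (θ : ℝ) : c01 θ ∈ Set.Icc (0:ℝ) 1 :=
  ⟨le_max_left _ _, max_le zero_le_one (min_le_left _ _)⟩

lemma c01_mono : Monotone c01 := fun a b hab =>
  max_le_max le_rfl (min_le_min le_rfl hab)

@[simp] lemma c01_zero : c01 0 = 0 := by simp [c01]

@[simp] lemma c01_one : c01 1 = 1 := by simp [c01]

lemma c01_lip (a b : ℝ) : |c01 a - c01 b| ≤ |a - b| := by
  have h1 : |c01 a - c01 b| = |max (min 1 a) 0 - max (min 1 b) 0| := by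
    rw [c01, c01, max_comm (0:ℝ) _, max_comm (0:ℝ) _]
  rw [h1]
  refine le_trans (abs_max_sub_max_le_abs _ _ _) ?_
  refine le_trans (abs_min_sub_min_le_max 1 a 1 b) ?_
  simp

lemma convex_mem {lo hi a b l : ℝ} (ha : a ∈ Set.Icc lo hi) (hb : b ∈ Set.Icc lo hi)
    (hl0 : 0 ≤ l) (hl1 : l ≤ 1) : a + l * (b - a) ∈ Set.Icc lo hi := by
  constructor
  · nlinarith [mul_nonneg hl0 (sub_nonneg.2 hb.1), mul_nonneg (sub_nonneg.2 hl1) (sub_nonneg.2 ha.1)]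
  · nlinarith [mul_nonneg hl0 (sub_nonneg.2 hb.2), mul_nonneg (sub_nonneg.2 hl1) (sub_nonneg.2 ha.2)]

/-- a vertical segment inside the cylinder -/
noncomputable def cylSeg (s : ↥S) (t₀ t₁ : ↥(Set.Icc (0:ℝ) h)) : ℝ → PrePt S h :=
  fun θ => Sum.inr (Sum.inl (s, ⟨(t₀:ℝ) + c01 θ * ((t₁:ℝ) - (t₀:ℝ)),
    convex_mem t₀.2 t₁.2 (c01_mem θ).1 (c01_mem θ).2⟩))

lemma cylSeg_zero (s : ↥S) (t₀ t₁ : ↥(Set.Icc (0:ℝ) h)) :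
    cylSeg s t₀ t₁ 0 = Sum.inr (Sum.inl (s, t₀)) := by
  simp only [cylSeg, c01_zero, zero_mul, add_zero]

lemma cylSeg_one (s : ↥S) (t₀ t₁ : ↥(Set.Icc (0:ℝ) h)) :
    cylSeg s t₀ t₁ 1 = Sum.inr (Sum.inl (s, t₁)) :=
  congrArg (fun v : ↥(Set.Icc (0:ℝ) h) => (Sum.inr (Sum.inl (s, v)) : PrePt S h))
    (Subtype.ext (by show (t₀:ℝ) + c01 1 * ((t₁:ℝ) - (t₀:ℝ)) = t₁; rw [c01_one]; ring))

lemma cylSeg_cost (s : ↥S) (t₀ t₁ : ↥(Set.Icc (0:ℝ) h)) (θ θ' : ℝ) :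
    preDist S h (cylSeg s t₀ t₁ θ) (cylSeg s t₀ t₁ θ')
      = ENNReal.ofReal (|(t₁:ℝ) - (t₀:ℝ)| * |c01 θ' - c01 θ|) := by
  simp only [cylSeg, preDist, cylDist, dist_self, zero_add]
  congr 1
  rw [← abs_mul, abs_sub_comm]
  congr 1
  ring

lemma cylSeg_econt (s : ↥S) (t₀ t₁ : ↥(Set.Icc (0:ℝ) h)) :
    econt (preDist S h) (cylSeg s t₀ t₁) := by
  apply econt_of_lip (|(t₁:ℝ) - (t₀:ℝ)|)
  intro a _ b _
  rw [cylSeg_cost]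
  exact ENNReal.ofReal_le_ofReal
    (mul_le_mul_of_nonneg_left (c01_lip b a) (abs_nonneg _))

lemma cylSeg_elen (s : ↥S) (t₀ t₁ : ↥(Set.Icc (0:ℝ) h)) :
    elen (preDist S h) (cylSeg s t₀ t₁) ≤ ENNReal.ofReal |(t₁:ℝ) - (t₀:ℝ)| := by
  have := elen_le_of_mono (c := preDist S h) (p := cylSeg s t₀ t₁)
    (fun θ => |(t₁:ℝ) - (t₀:ℝ)| * c01 θ)
    (fun a _ b _ hab => mul_le_mul_of_nonneg_left (c01_mono hab) (abs_nonneg _))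
    (fun a ha b hb hab => by
      rw [cylSeg_cost]
      apply ENNReal.ofReal_le_ofReal
      rw [abs_of_nonneg (sub_nonneg.2 (c01_mono hab))]
      apply le_of_eq
      ring)
  simpa using this

/-- a vertical segment inside the top -/
noncomputable def topSeg (s : ↥S) (u₀ u₁ : ↥(Set.Icc (0:ℝ) (h + Metric.diam S))) :
    ℝ → PrePt S h :=
  fun θ => Sum.inr (Sum.inr (s, ⟨(u₀:ℝ) + c01 θ * ((u₁:ℝ) - (u₀:ℝ)),
    convex_mem u₀.2 u₁.2 (c01_mem θ).1 (c01_mem θ).2⟩))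

lemma topSeg_zero (s : ↥S) (u₀ u₁ : ↥(Set.Icc (0:ℝ) (h + Metric.diam S))) :
    topSeg s u₀ u₁ 0 = Sum.inr (Sum.inr (s, u₀)) := by
  simp only [topSeg, c01_zero, zero_mul, add_zero]

lemma topSeg_one (s : ↥S) (u₀ u₁ : ↥(Set.Icc (0:ℝ) (h + Metric.diam S))) :
    topSeg s u₀ u₁ 1 = Sum.inr (Sum.inr (s, u₁)) :=
  congrArg (fun v : ↥(Set.Icc (0:ℝ) (h + Metric.diam S)) => (Sum.inr (Sum.inr (s, v)) : PrePt S h))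
    (Subtype.ext (by show (u₀:ℝ) + c01 1 * ((u₁:ℝ) - (u₀:ℝ)) = u₁; rw [c01_one]; ring))

lemma topSeg_cost (s : ↥S) (u₀ u₁ : ↥(Set.Icc (0:ℝ) (h + Metric.diam S))) (θ θ' : ℝ) :
    preDist S h (topSeg s u₀ u₁ θ) (topSeg s u₀ u₁ θ')
      ≤ ENNReal.ofReal (|(u₁:ℝ) - (u₀:ℝ)| * |c01 θ' - c01 θ|) := by
  simp only [topSeg, preDist, topDist, dist_self, zero_add]
  refine le_trans (ENNReal.ofReal_le_ofReal (min_le_left _ _)) ?_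
  apply ENNReal.ofReal_le_ofReal
  rw [← abs_mul, abs_sub_comm]
  apply le_of_eq
  congr 1
  ring

lemma topSeg_econt (s : ↥S) (u₀ u₁ : ↥(Set.Icc (0:ℝ) (h + Metric.diam S))) :
    econt (preDist S h) (topSeg s u₀ u₁) := by
  apply econt_of_lip (|(u₁:ℝ) - (u₀:ℝ)|)
  intro a _ b _
  refine le_trans (topSeg_cost s u₀ u₁ a b) ?_
  exact ENNReal.ofReal_le_ofReal
    (mul_le_mul_of_nonneg_left (c01_lip b a) (abs_nonneg _))

lemma topSeg_elen (s : ↥S) (u₀ u₁ : ↥(Set.Icc (0:ℝ) (h + Metric.diam S))) :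
    elen (preDist S h) (topSeg s u₀ u₁) ≤ ENNReal.ofReal |(u₁:ℝ) - (u₀:ℝ)| := by
  have := elen_le_of_mono (c := preDist S h) (p := topSeg s u₀ u₁)
    (fun θ => |(u₁:ℝ) - (u₀:ℝ)| * c01 θ)
    (fun a _ b _ hab => mul_le_mul_of_nonneg_left (c01_mono hab) (abs_nonneg _))
    (fun a ha b hb hab => by
      refine le_trans (topSeg_cost s u₀ u₁ a b) ?_
      apply ENNReal.ofReal_le_ofReal
      rw [abs_of_nonneg (sub_nonneg.2 (c01_mono hab))]
      apply le_of_eq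
      ring)
  simpa using this

/-- lift of a geodesic of `X` -/
lemma inl_econt {p : ℝ → X} (hp : econt (fun a b => ENNReal.ofReal (dist a b)) p) :
    econt (preDist S h) (fun θ => (Sum.inl (p θ) : PrePt S h)) := by
  intro t ht ε hε
  obtain ⟨δ, hδ, hδ'⟩ := hp t ht ε hε
  exact ⟨δ, hδ, fun t' h1 h2 => hδ' t' h1 h2⟩

lemma inl_elen (p : ℝ → X) :
    elen (preDist S h) (fun θ => (Sum.inl (p θ) : PrePt S h))
      = elen (fun a b => ENNReal.ofReal (dist a b)) p := rfl

end HatAux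

namespace HatAux

variable {X : Type*} [MetricSpace X] {S : Set X} {h : ℝ}

lemma exists_down (h0 : 0 < h) (wa : PrePt S h) :
    ∃ (d0 d1 : ℝ → PrePt S h) (xa : X),
      econt (preDist S h) d0 ∧ econt (preDist S h) d1 ∧
      elen (preDist S h) d0 ≠ ⊤ ∧ elen (preDist S h) d1 ≠ ⊤ ∧
      Quot.mk (Glue S h) (d0 0) = Quot.mk (Glue S h) wa ∧
      Quot.mk (Glue S h) (d0 1) = Quot.mk (Glue S h) (d1 0) ∧
      Quot.mk (Glue S h) (d1 1) = Quot.mk (Glue S h) (Sum.inl xa) := by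
  have hH0 : (0:ℝ) ≤ h + Metric.diam S := by
    have := Metric.diam_nonneg (s := S); linarith
  set t0 : ↥(Set.Icc (0:ℝ) h) := ⟨0, le_rfl, h0.le⟩ with ht0
  set th : ↥(Set.Icc (0:ℝ) h) := ⟨h, h0.le, le_rfl⟩ with hth
  set v0 : ↥(Set.Icc (0:ℝ) (h + Metric.diam S)) := ⟨0, le_rfl, hH0⟩ with hv0
  rcases wa with x | ⟨s, t⟩ | ⟨s, u⟩
  · exact ⟨fun _ => Sum.inl x, fun _ => Sum.inl x, x,
      econt_const (preDist_self _), econt_const (preDist_self _),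
      by rw [elen_const (preDist_self _)]; exact ENNReal.zero_ne_top,
      by rw [elen_const (preDist_self _)]; exact ENNReal.zero_ne_top,
      rfl, rfl, rfl⟩
  · refine ⟨fun _ => Sum.inr (Sum.inl (s, t)), cylSeg s t t0, (s : X),
      econt_const (preDist_self _), cylSeg_econt s t t0,
      by rw [elen_const (preDist_self _)]; exact ENNReal.zero_ne_top,
      ne_top_of_le_ne_top ENNReal.ofReal_ne_top (cylSeg_elen s t t0),
      rfl, ?_, ?_⟩
    · rw [cylSeg_zero]
    · rw [cylSeg_one]
      exact (Quot.sound (Glue.base s t0 rfl)).symm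
  · refine ⟨topSeg s u v0, cylSeg s th t0, (s : X),
      topSeg_econt s u v0, cylSeg_econt s th t0,
      ne_top_of_le_ne_top ENNReal.ofReal_ne_top (topSeg_elen s u v0),
      ne_top_of_le_ne_top ENNReal.ofReal_ne_top (cylSeg_elen s th t0),
      by rw [topSeg_zero], ?_, ?_⟩
    · rw [topSeg_one, cylSeg_zero]
      exact (Quot.sound (Glue.mid s th v0 rfl rfl)).symm
    · rw [cylSeg_one]
      exact (Quot.sound (Glue.base s t0 rfl)).symm

lemma exists_up (h0 : 0 < h) (wb : PrePt S h) :
    ∃ (e0 e1 : ℝ → PrePt S h) (xb : X),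
      econt (preDist S h) e0 ∧ econt (preDist S h) e1 ∧
      elen (preDist S h) e0 ≠ ⊤ ∧ elen (preDist S h) e1 ≠ ⊤ ∧
      Quot.mk (Glue S h) (Sum.inl xb) = Quot.mk (Glue S h) (e0 0) ∧
      Quot.mk (Glue S h) (e0 1) = Quot.mk (Glue S h) (e1 0) ∧
      Quot.mk (Glue S h) (e1 1) = Quot.mk (Glue S h) wb := by
  have hH0 : (0:ℝ) ≤ h + Metric.diam S := by
    have := Metric.diam_nonneg (s := S); linarith
  set t0 : ↥(Set.Icc (0:ℝ) h) := ⟨0, le_rfl, h0.le⟩ with ht0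
  set th : ↥(Set.Icc (0:ℝ) h) := ⟨h, h0.le, le_rfl⟩ with hth
  set v0 : ↥(Set.Icc (0:ℝ) (h + Metric.diam S)) := ⟨0, le_rfl, hH0⟩ with hv0
  rcases wb with x | ⟨s, t⟩ | ⟨s, u⟩
  · exact ⟨fun _ => Sum.inl x, fun _ => Sum.inl x, x,
      econt_const (preDist_self _), econt_const (preDist_self _),
      by rw [elen_const (preDist_self _)]; exact ENNReal.zero_ne_top,
      by rw [elen_const (preDist_self _)]; exact ENNReal.zero_ne_top,
      rfl, rfl, rfl⟩
  · refine ⟨cylSeg s t0 t, fun _ => Sum.inr (Sum.inl (s, t)), (s : X),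
      cylSeg_econt s t0 t, econt_const (preDist_self _),
      ne_top_of_le_ne_top ENNReal.ofReal_ne_top (cylSeg_elen s t0 t),
      by rw [elen_const (preDist_self _)]; exact ENNReal.zero_ne_top,
      ?_, ?_, rfl⟩
    · rw [cylSeg_zero]
      exact Quot.sound (Glue.base s t0 rfl)
    · rw [cylSeg_one]
  · refine ⟨cylSeg s t0 th, topSeg s v0 u, (s : X),
      cylSeg_econt s t0 th, topSeg_econt s v0 u,
      ne_top_of_le_ne_top ENNReal.ofReal_ne_top (cylSeg_elen s t0 th),
      ne_top_of_le_ne_top ENNReal.ofReal_ne_top (topSeg_elen s v0 u),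
      ?_, ?_, by rw [topSeg_one]⟩
    · rw [cylSeg_zero]
      exact Quot.sound (Glue.base s t0 rfl)
    · rw [cylSeg_one, topSeg_zero]
      exact Quot.sound (Glue.mid s th v0 rfl rfl)

lemma exists_path_rep (h0 : 0 < h) (hgeo : IsGeodesicD X (fun x y => dist x y))
    (wa wb : PrePt S h) :
    ∃ P : PiecewisePath (preDist S h) (Glue S h) (Quot.mk _ wa) (Quot.mk _ wb),
      P.len ≠ ⊤ := by
  obtain ⟨d0, d1, xa, hc0, hc1, hl0, hl1, hm0, hm1, hm2⟩ := exists_down h0 wa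
  obtain ⟨e0, e1, xb, kc0, kc1, kl0, kl1, km0, km1, km2⟩ := exists_up h0 wb
  obtain ⟨p, hp, hp0, hp1, hpl⟩ := hgeo xa xb
  set pl : ℝ → PrePt S h := fun θ => Sum.inl (p θ) with hpl'
  refine ⟨⟨4, ![d0, d1, pl, e0, e1], ?_, ?_, ?_, ?_⟩, ?_⟩
  · intro i
    fin_cases i
    · exact hc0
    · exact hc1
    · exact inl_econt hp
    · exact kc0
    · exact kc1
  · simpa using hm0
  · simpa using km2
  · intro i
    fin_cases i
    · simpa using hm1
    · show Quot.mk _ (d1 1) = Quot.mk _ (pl 0)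
      rw [hm2]
      show _ = Quot.mk (Glue S h) (Sum.inl (p 0))
      rw [hp0]
    · show Quot.mk _ (pl 1) = Quot.mk _ (e0 0)
      rw [← km0]
      show Quot.mk (Glue S h) (Sum.inl (p 1)) = _
      rw [hp1]
    · simpa using km1
  · show (∑ i : Fin 5, elen (preDist S h) (![d0, d1, pl, e0, e1] i)) ≠ ⊤
    have hplen : elen (preDist S h) pl ≠ ⊤ := by
      rw [hpl', inl_elen, hpl]
      exact ENNReal.ofReal_ne_top
    rw [Fin.sum_univ_five]
    refine ENNReal.add_ne_top.2 ⟨ENNReal.add_ne_top.2 ⟨ENNReal.add_ne_top.2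
      ⟨ENNReal.add_ne_top.2 ⟨?_, ?_⟩, ?_⟩, ?_⟩, ?_⟩ <;> simpa

lemma hatDistE_ne_top (h0 : 0 < h) (hgeo : IsGeodesicD X (fun x y => dist x y))
    (a b : GlueSp S h) : hatDistE S h a b ≠ ⊤ := by
  obtain ⟨wa, rfl⟩ := Quot.exists_rep a
  obtain ⟨wb, rfl⟩ := Quot.exists_rep b
  obtain ⟨P, hP⟩ := exists_path_rep h0 hgeo wa wb
  exact ne_top_of_le_ne_top hP (glueDist_le_len P)

lemma hatDistE_iota_le (hgeo : IsGeodesicD X (fun x y => dist x y)) (x y : X) :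
    hatDistE S h (iotaX S h x) (iotaX S h y) ≤ ENNReal.ofReal (dist x y) := by
  obtain ⟨p, hp, hp0, hp1, hpl⟩ := hgeo x y
  have h1 : Quot.mk (Glue S h) (Sum.inl (p 0)) = iotaX S h x := by rw [hp0]; rfl
  have h2 : Quot.mk (Glue S h) (Sum.inl (p 1)) = iotaX S h y := by rw [hp1]; rfl
  refine le_trans (glueDist_le_len
    (PiecewisePath.single (fun θ => (Sum.inl (p θ) : PrePt S h)) (inl_econt hp) h1 h2)) ?_
  rw [PiecewisePath.single_len, inl_elen, hpl]

lemma hatDist_iota_le (hgeo : IsGeodesicD X (fun x y => dist x y)) (x y : X) :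
    hatDist S h (iotaX S h x) (iotaX S h y) ≤ dist x y :=
  ENNReal.toReal_le_of_le_ofReal dist_nonneg (hatDistE_iota_le hgeo x y)

lemma hatDist_self (a : GlueSp S h) : hatDist S h a a = 0 := by
  obtain ⟨w, rfl⟩ := Quot.exists_rep a
  have h1 : hatDistE S h (Quot.mk _ w) (Quot.mk _ w) ≤ 0 := by
    refine le_trans (glueDist_le_len
      (PiecewisePath.single (fun _ => w) (econt_const (preDist_self _)) rfl rfl)) ?_
    rw [PiecewisePath.single_len, elen_const (preDist_self _)]
  rw [hatDist, le_antisymm h1 zero_le]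
  rfl

end HatAux

namespace HatAux

variable {X : Type*} [MetricSpace X] {S : Set X} {h : ℝ}

lemma abs_HtQ_sub_le (h0 : 0 < h) (hgeo : IsGeodesicD X (fun x y => dist x y))
    (a b : GlueSp S h) : |HtQ S h a - HtQ S h b| ≤ hatDist S h a b := by
  have h1 := abs_lift_sub_le_glueDist (htF S h) htF_glue htF_lip a b
  exact (ENNReal.ofReal_le_iff_le_toReal (hatDistE_ne_top h0 hgeo a b)).1 h1

lemma abs_phiQ_sub_le (hb : ∀ x y : X, dist x y ≤ h) (h0 : 0 < h)
    (hgeo : IsGeodesicD X (fun x y => dist x y)) (y : X) (a b : GlueSp S h) :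
    |phiQ S h y hb a - phiQ S h y hb b| ≤ hatDist S h a b := by
  have h1 := abs_lift_sub_le_glueDist (phiF S h y) (phiF_glue y hb) (phiF_lip y) a b
  exact (ENNReal.ofReal_le_iff_le_toReal (hatDistE_ne_top h0 hgeo a b)).1 h1

lemma phiQ_ge_HtQ (hb : ∀ x y : X, dist x y ≤ h) (y : X) (a : GlueSp S h) :
    HtQ S h a ≤ phiQ S h y hb a := by
  obtain ⟨w, rfl⟩ := Quot.exists_rep a
  exact phiF_ge_htF y w

lemma HtQ_nonneg (h0 : 0 ≤ h) (a : GlueSp S h) : 0 ≤ HtQ S h a := by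
  obtain ⟨w, rfl⟩ := Quot.exists_rep a
  exact htF_nonneg h0 w

lemma phiQ_iota (hb : ∀ x y : X, dist x y ≤ h) (y x : X) :
    phiQ S h y hb (iotaX S h x) = dist x y := rfl

lemma HtQ_iota (x : X) : HtQ S h (iotaX S h x) = 0 := rfl

lemma projQ_iota (s₀ : X) (h0 : 0 < h) (x : X) : projQ S h s₀ h0 (iotaX S h x) = x := rfl

lemma phiQ_eq_region (hb : ∀ x y : X, dist x y ≤ h) (y s₀ : X) (h0 : 0 < h) {M : ℝ}
    (hM : 0 < M) (hdM : ∀ x x' : X, dist x x' ≤ h - M) {a : GlueSp S h}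
    (ha : HtQ S h a ≤ h + M) :
    phiQ S h y hb a = dist (projQ S h s₀ h0 a) y + HtQ S h a := by
  obtain ⟨w, rfl⟩ := Quot.exists_rep a
  exact phiF_eq_region y s₀ hM hdM w ha

/-- chasing along a geodesic -/
lemma chase_ex (hgeo : IsGeodesicD X (fun x y => dist x y)) (x y : X) {t : ℝ} (ht : 0 < t) :
    ∃ w : X, dist x w ≤ t ∧ dist w y ≤ max 0 (dist x y - t) := by
  rcases le_or_gt (dist x y) t with hle | hlt
  · exact ⟨y, hle, by simp⟩
  · obtain ⟨p, hp, hp0, hp1, hpl⟩ := hgeo x y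
    have hcont : ContinuousOn (fun θ => dist x (p θ)) (Set.Icc (0:ℝ) 1) := by
      intro θ hθ
      rw [Metric.continuousWithinAt_iff]
      intro ε hε
      obtain ⟨δ, hδ, hδ'⟩ := hp θ hθ (ENNReal.ofReal ε) (by simpa using hε)
      refine ⟨δ, hδ, fun {θ'} hθ' hd => ?_⟩
      have h1 : dist (p θ) (p θ') < ε := by
        have := hδ' θ' hθ' (by rwa [Real.dist_eq] at hd)
        rwa [ENNReal.ofReal_lt_ofReal_iff hε] at this
      have h2 : |dist x (p θ') - dist x (p θ)| ≤ dist (p θ) (p θ') := by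
        rw [dist_comm x (p θ'), dist_comm x (p θ)]
        exact le_trans (abs_dist_sub_le _ _ _) (by rw [dist_comm])
      rw [Real.dist_eq]
      exact lt_of_le_of_lt h2 h1
    have hmem : t ∈ Set.Icc (dist x (p 0)) (dist x (p 1)) := by
      rw [hp0, hp1, dist_self]
      exact ⟨ht.le, hlt.le⟩
    obtain ⟨θ₀, hθ₀, hfθ₀⟩ := intermediate_value_Icc zero_le_one hcont hmem
    have hf : dist x (p θ₀) = t := hfθ₀
    refine ⟨p θ₀, le_of_eq hf, ?_⟩
    have h2 := elen_ge_two (c := fun a b => ENNReal.ofReal (dist a b)) (p := p) hθ₀.1 hθ₀.2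
    rw [hpl, hp0, hp1] at h2
    have h3 : dist x (p θ₀) + dist (p θ₀) y ≤ dist x y := by
      rw [← ENNReal.ofReal_add dist_nonneg dist_nonneg] at h2
      exact (ENNReal.ofReal_le_ofReal_iff dist_nonneg).1 h2
    have h4 : dist (p θ₀) y ≤ dist x y - t := by linarith
    exact le_trans h4 (le_max_right _ _)

end HatAux

namespace HatAux

variable {X : Type*} [MetricSpace X] {S : Set X} {h : ℝ}

lemma shadow_step (hb : ∀ x y : X, dist x y ≤ h) {M : ℝ} (hM : 0 < M)
    (hdM : ∀ x y : X, dist x y ≤ h - M) (h0 : 0 < h)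
    (hgeo : IsGeodesicD X (fun x y => dist x y)) (s₀ : X)
    {a b : GlueSp S h} {sh sh' : X} {t : ℝ} (htM : t ≤ M)
    (hab : hatDist S h a b ≤ t)
    (hch : dist sh' (projQ S h s₀ h0 b) ≤ max 0 (dist sh (projQ S h s₀ h0 b) - t))
    (hJ : dist sh (projQ S h s₀ h0 a) ≤ HtQ S h a) :
    dist sh' (projQ S h s₀ h0 b) ≤ HtQ S h b := by
  have hHb0 : 0 ≤ HtQ S h b := HtQ_nonneg h0.le b
  rcases le_or_gt (h - M) (HtQ S h b) with hcase | hcase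
  · exact le_trans (hdM _ _) hcase
  · have habs := abs_HtQ_sub_le h0 hgeo a b
    have hHta : HtQ S h a ≤ HtQ S h b + t := by
      rw [abs_le] at habs; linarith
    have hHa : HtQ S h a ≤ h + M := by linarith
    have hHb : HtQ S h b ≤ h + M := by linarith
    have hpa := phiQ_eq_region hb (projQ S h s₀ h0 b) s₀ h0 hM hdM hHa
    have hpb := phiQ_eq_region hb (projQ S h s₀ h0 b) s₀ h0 hM hdM hHb
    have habs2 := abs_phiQ_sub_le hb h0 hgeo (projQ S h s₀ h0 b) a b
    rw [hpa, hpb, dist_self, zero_add, abs_le] at habs2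
    have hkey : dist (projQ S h s₀ h0 a) (projQ S h s₀ h0 b) + HtQ S h a - HtQ S h b ≤ t :=
      le_trans habs2.2 hab
    refine le_trans hch (max_le hHb0 ?_)
    have htr := dist_triangle sh (projQ S h s₀ h0 a) (projQ S h s₀ h0 b)
    linarith

lemma margin_lemma (hb : ∀ x y : X, dist x y ≤ h) {M : ℝ} (hM : 0 < M)
    (hdM : ∀ x y : X, dist x y ≤ h - M) (h0 : 0 < h)
    (hgeo : IsGeodesicD X (fun x y => dist x y)) (s₀ : X)
    {cpt : GlueSp S h} {r ch : X} {ε : ℝ} (hε : 0 < ε) (hεh : ε ≤ h)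
    (hJ : dist ch (projQ S h s₀ h0 cpt) ≤ HtQ S h cpt)
    (hm : ε < dist r ch) : ε / 3 < hatDist S h (iotaX S h r) cpt := by
  have hphi : phiQ S h r hb cpt ≤ hatDist S h (iotaX S h r) cpt := by
    have h1 := abs_phiQ_sub_le hb h0 hgeo r (iotaX S h r) cpt
    rw [phiQ_iota, dist_self, zero_sub, abs_neg,
      abs_of_nonneg (le_trans (HtQ_nonneg h0.le cpt) (phiQ_ge_HtQ hb r cpt))] at h1
    exact h1
  rcases le_or_gt (HtQ S h cpt) h with hlow | hhigh
  · have hreg := phiQ_eq_region hb r s₀ h0 hM hdM (a := cpt) (by linarith)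
    have htr := dist_triangle r (projQ S h s₀ h0 cpt) ch
    have h2 : dist r ch ≤ phiQ S h r hb cpt := by
      rw [hreg, dist_comm (projQ S h s₀ h0 cpt) r]
      linarith [dist_comm (projQ S h s₀ h0 cpt) ch]
    linarith
  · have := phiQ_ge_HtQ hb r cpt
    linarith

end HatAux

namespace HatAux

variable {Y : Type*} {k : ℕ}

/-- prefix of the mutual play of a robber strategy against a cop strategy -/
noncomputable def mutPre (r0 : Y) (c0 : Fin k → Y)
    (ρ : (n : ℕ) → (Fin (n + 1) → Fin k → Y) → Y)
    (σ : (n : ℕ) → (Fin (n + 2) → Y) → Fin k → Y) :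
    (n : ℕ) → Fin (n + 1) → Y × (Fin k → Y)
  | 0 => fun _ => (r0, c0)
  | n + 1 => fun j =>
    if h : (j : ℕ) ≤ n then mutPre r0 c0 ρ σ n ⟨j, by omega⟩
    else
      let r' := ρ n (fun i : Fin (n + 1) => (mutPre r0 c0 ρ σ n i).2)
      (r', σ n (fun i : Fin (n + 2) =>
        if h2 : (i : ℕ) ≤ n then (mutPre r0 c0 ρ σ n ⟨i, by omega⟩).1 else r'))

lemma mutPre_coh (r0 : Y) (c0 : Fin k → Y) (ρ) (σ) :
    ∀ (n : ℕ) (j : Fin (n + 1)),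
      mutPre r0 c0 ρ σ n j = mutPre r0 c0 ρ σ (j : ℕ) (Fin.last (j : ℕ)) := by
  intro n
  induction n with
  | zero =>
    intro j
    obtain ⟨jv, hjv⟩ := j
    have : jv = 0 := by omega
    subst this
    rfl
  | succ n ih =>
    intro j
    rcases le_or_gt (j : ℕ) n with hj | hj
    · simp only [mutPre]
      rw [dif_pos hj]
      exact ih ⟨j, by omega⟩
    · have hj' : (j : ℕ) = n + 1 := by omega
      have hje : j = Fin.last (n + 1) := by
        apply Fin.ext
        simpa [Fin.last] using hj'
      rw [hje]
      rfl

noncomputable def mutR (r0 : Y) (c0 : Fin k → Y)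
    (ρ : (n : ℕ) → (Fin (n + 1) → Fin k → Y) → Y)
    (σ : (n : ℕ) → (Fin (n + 2) → Y) → Fin k → Y) (n : ℕ) : Y :=
  (mutPre r0 c0 ρ σ n (Fin.last n)).1

noncomputable def mutC (r0 : Y) (c0 : Fin k → Y)
    (ρ : (n : ℕ) → (Fin (n + 1) → Fin k → Y) → Y)
    (σ : (n : ℕ) → (Fin (n + 2) → Y) → Fin k → Y) (n : ℕ) : Fin k → Y :=
  (mutPre r0 c0 ρ σ n (Fin.last n)).2

lemma mutR_succ (r0 : Y) (c0 : Fin k → Y)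
    (ρ : (n : ℕ) → (Fin (n + 1) → Fin k → Y) → Y)
    (σ : (n : ℕ) → (Fin (n + 2) → Y) → Fin k → Y) (n : ℕ) :
    mutR r0 c0 ρ σ (n + 1) = ρ n (fun j : Fin (n + 1) => mutC r0 c0 ρ σ (j : ℕ)) := by
  rw [mutR]
  simp only [mutPre]
  rw [dif_neg (by simp [Fin.last])]
  show ρ n (fun i : Fin (n + 1) => (mutPre r0 c0 ρ σ n i).2) = _
  congr 1
  funext i
  rw [mutPre_coh]
  rfl

lemma mutC_succ (r0 : Y) (c0 : Fin k → Y)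
    (ρ : (n : ℕ) → (Fin (n + 1) → Fin k → Y) → Y)
    (σ : (n : ℕ) → (Fin (n + 2) → Y) → Fin k → Y) (n : ℕ) :
    mutC r0 c0 ρ σ (n + 1) = σ n (fun j : Fin (n + 2) =>
      if (j : ℕ) ≤ n then mutR r0 c0 ρ σ (j : ℕ) else mutR r0 c0 ρ σ (n + 1)) := by
  rw [mutC]
  simp only [mutPre]
  rw [dif_neg (by simp [Fin.last])]
  show σ n (fun i : Fin (n + 2) => if h2 : (i : ℕ) ≤ n
      then (mutPre r0 c0 ρ σ n ⟨(i : ℕ), by omega⟩).1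
      else ρ n (fun i : Fin (n + 1) => (mutPre r0 c0 ρ σ n i).2)) = _
  have hfg : (fun i : Fin (n + 2) => if h2 : (i : ℕ) ≤ n
      then (mutPre r0 c0 ρ σ n ⟨(i : ℕ), by omega⟩).1
      else ρ n (fun i : Fin (n + 1) => (mutPre r0 c0 ρ σ n i).2))
      = (fun j : Fin (n + 2) => if (j : ℕ) ≤ n then mutR r0 c0 ρ σ (j : ℕ)
        else mutR r0 c0 ρ σ (n + 1)) := by
    funext i
    by_cases h2 : (i : ℕ) ≤ n
    · rw [dif_pos h2, if_pos h2, mutPre_coh]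
      rfl
    · rw [dif_neg h2, if_neg h2, mutR_succ]
      show ρ n (fun i : Fin (n + 1) => (mutPre r0 c0 ρ σ n i).2) = _
      congr 1
      funext j
      rw [mutPre_coh]
      rfl
  rw [hfg]

lemma robberWins_no_cops (d : Y → Y → ℝ) (τ : ℕ → ℝ) (ε : ℝ)
    (hτ : IsAgility τ) (hε : 0 < ε) (hd0 : ∀ y, d y y ≤ 0)
    (hrw : RobberWins Y d k τ ε) : ¬ CopsWinWith Y d k := by
  intro hcw
  obtain ⟨r0, c0, ρ, hρ⟩ := hrw
  obtain ⟨σ, hσ⟩ := hcw τ hτ r0 c0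
  set r : ℕ → Y := mutR r0 c0 ρ σ with hrdef
  set c : ℕ → Fin k → Y := mutC r0 c0 ρ σ with hcdef
  have hr0 : r 0 = r0 := rfl
  have hc0 : c 0 = c0 := rfl
  have hrs : ∀ n, r (n + 1) = ρ n (fun j : Fin (n + 1) => c (j : ℕ)) :=
    fun n => mutR_succ r0 c0 ρ σ n
  have hcs : ∀ n, c (n + 1) = σ n (fun j : Fin (n + 2) =>
      if (j : ℕ) ≤ n then r (j : ℕ) else r (n + 1)) :=
    fun n => mutC_succ r0 c0 ρ σ n
  -- robTraj applied to any cop trajectory agreeing with c up to n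
  have hrob_eq : ∀ (c' : ℕ → Fin k → Y) (m : ℕ), (∀ l ≤ m, c' l = c l) →
      ∀ l ≤ m + 1, robTraj r0 ρ c' l = r l := by
    intro c' m hagree l hl
    cases l with
    | zero => rfl
    | succ l =>
      show ρ l (fun i : Fin (l + 1) => c' (i : ℕ)) = r (l + 1)
      rw [hrs l]
      congr 1
      funext i
      exact hagree (i : ℕ) (by omega)
  have hcop_eq : ∀ (r' : ℕ → Y) (m : ℕ), (∀ l ≤ m, r' l = r l) →
      ∀ l ≤ m, copTraj c0 σ r' l = c l := by
    intro r' m hagree l hl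
    cases l with
    | zero => rfl
    | succ l =>
      show σ l (fun i : Fin (l + 2) => r' (i : ℕ)) = c (l + 1)
      rw [hcs l]
      have hfn : (fun i : Fin (l + 2) => r' (i : ℕ))
          = (fun j : Fin (l + 2) => if (j : ℕ) ≤ l then r (j : ℕ) else r (l + 1)) := by
        funext i
        rcases le_or_gt (i : ℕ) l with h2 | h2
        · rw [if_pos h2]; exact hagree _ (by omega)
        · rw [if_neg (by omega)]
          have hi : (i : ℕ) = l + 1 := by omega
          rw [hi]
          exact hagree _ (by omega)
      rw [hfn]
  -- legality by strong induction
  have hleg : ∀ n, (∀ m < n, d (r m) (r (m + 1)) ≤ τ (m + 1)) ∧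
      (∀ m < n, ∀ i, d (c m i) (c (m + 1) i) ≤ τ (m + 1)) := by
    intro n
    induction n with
    | zero => exact ⟨fun m hm => absurd hm (Nat.not_lt_zero m), fun m hm => absurd hm (Nat.not_lt_zero m)⟩
    | succ n ih =>
      -- robber step at n
      have hrstep : d (r n) (r (n + 1)) ≤ τ (n + 1) := by
        set c' : ℕ → Fin k → Y := fun m => c (min m n) with hc'
        have hagree : ∀ l ≤ n, c' l = c l := fun l hl => by
          simp [hc', Nat.min_eq_left hl]
        have hc'leg : ∀ m i, d (c' m i) (c' (m + 1) i) ≤ τ (m + 1) := by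
          intro m i
          rcases lt_or_ge m n with hm | hm
          · have h1 : c' m = c m := hagree m hm.le
            have h2 : c' (m + 1) = c (m + 1) := hagree (m + 1) hm
            rw [h1, h2]
            exact ih.2 m hm i
          · have h1 : c' m = c n := by simp [hc', Nat.min_eq_right hm]
            have h2 : c' (m + 1) = c n := by simp [hc', Nat.min_eq_right (by omega : n ≤ m + 1)]
            rw [h1, h2]
            exact le_trans (hd0 _) (hτ.1 (m + 1)).le
        have hc'0 : c' 0 = c0 := by
          have := hagree 0 (Nat.zero_le n); rw [this, hc0]
        obtain ⟨hrleg, _⟩ := hρ c' hc'0 hc'leg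
        have e1 := hrob_eq c' n hagree n (by omega)
        have e2 := hrob_eq c' n hagree (n + 1) le_rfl
        rw [← e1, ← e2]
        exact hrleg n
      -- cop step at n
      have hcstep : ∀ i, d (c n i) (c (n + 1) i) ≤ τ (n + 1) := by
        set r'' : ℕ → Y := fun m => r (min m (n + 1)) with hr''
        have hagree : ∀ l ≤ n + 1, r'' l = r l := fun l hl => by
          simp [hr'', Nat.min_eq_left hl]
        have hr''leg : ∀ m, d (r'' m) (r'' (m + 1)) ≤ τ (m + 1) := by
          intro m
          rcases lt_or_ge m (n + 1) with hm | hm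
          · have h1 : r'' m = r m := hagree m hm.le
            have h2 : r'' (m + 1) = r (m + 1) := hagree (m + 1) hm
            rw [h1, h2]
            rcases lt_or_ge m n with hm2 | hm2
            · exact ih.1 m hm2
            · have : m = n := by omega
              rw [this]; exact hrstep
          · have h1 : r'' m = r (n + 1) := by simp [hr'', Nat.min_eq_right hm]
            have h2 : r'' (m + 1) = r (n + 1) := by simp [hr'', Nat.min_eq_right (by omega : n + 1 ≤ m + 1)]
            rw [h1, h2]
            exact le_trans (hd0 _) (hτ.1 (m + 1)).le
        have hr''0 : r'' 0 = r0 := by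
          have := hagree 0 (Nat.zero_le _); rw [this, hr0]
        obtain ⟨hcleg, _⟩ := hσ r'' hr''0 hr''leg
        intro i
        have e1 := hcop_eq r'' (n + 1) hagree n (by omega)
        have e2 := hcop_eq r'' (n + 1) hagree (n + 1) le_rfl
        rw [← e1, ← e2]
        exact hcleg n i
      refine ⟨fun m hm => ?_, fun m hm i => ?_⟩
      · rcases lt_or_ge m n with h2 | h2
        · exact ih.1 m h2
        · have : m = n := by omega
          rw [this]; exact hrstep
      · rcases lt_or_ge m n with h2 | h2
        · exact ih.2 m h2 i
        · have : m = n := by omega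
          rw [this]; exact hcstep i
  have hrleg : ∀ n, d (r n) (r (n + 1)) ≤ τ (n + 1) := fun n => (hleg (n + 1)).1 n (by omega)
  have hcleg : ∀ n i, d (c n i) (c (n + 1) i) ≤ τ (n + 1) := fun n i => (hleg (n + 1)).2 n (by omega) i
  -- play the two guarantees against each other
  have hrtraj : ∀ n, robTraj r0 ρ c n = r n := by
    intro n
    cases n with
    | zero => rfl
    | succ n =>
      show ρ n (fun i : Fin (n + 1) => c (i : ℕ)) = r (n + 1)
      rw [hrs n]
  have hctraj : ∀ n, copTraj c0 σ r n = c n := by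
    intro n
    exact hcop_eq r n (fun l _ => rfl) n le_rfl
  obtain ⟨_, hmarg⟩ := hρ c hc0 hcleg
  obtain ⟨_, hcapt⟩ := hσ r hr0 hrleg
  obtain ⟨n, i, hni⟩ := hcapt ε hε
  have h1 := hmarg n i
  rw [hrtraj n] at h1
  rw [hctraj n] at hni
  linarith

end HatAux

namespace HatAux

variable {X : Type*} [MetricSpace X] {S : Set X} {h : ℝ}

lemma dist_le_diam_of_compactD (hc : CompactD X (fun x y => dist x y)) (x y : X) :
    dist x y ≤ Metric.diam (Set.univ : Set X) := by
  have hseq : SeqCompactSpace X := by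
    constructor
    intro u _
    obtain ⟨a, φ, hφ, hten⟩ := hc u
    exact ⟨a, Set.mem_univ a, φ, hφ, tendsto_iff_dist_tendsto_zero.2 hten⟩
  have : CompactSpace X := compactSpace_iff_seqCompactSpace.2 hseq
  exact Metric.dist_le_diam_of_mem Metric.isBounded_of_compactSpace
    (Set.mem_univ x) (Set.mem_univ y)

noncomputable def chasePt (hgeo : IsGeodesicD X (fun x y => dist x y)) (x y : X) (t : ℝ)
    (ht : 0 < t) : X := (chase_ex hgeo x y ht).choose

lemma chasePt_le (hgeo : IsGeodesicD X (fun x y => dist x y)) (x y : X) (t : ℝ) (ht : 0 < t) :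
    dist x (chasePt hgeo x y t ht) ≤ t := (chase_ex hgeo x y ht).choose_spec.1

lemma chasePt_close (hgeo : IsGeodesicD X (fun x y => dist x y)) (x y : X) (t : ℝ)
    (ht : 0 < t) : dist (chasePt hgeo x y t ht) y ≤ max 0 (dist x y - t) :=
  (chase_ex hgeo x y ht).choose_spec.2

noncomputable def shadow {k : ℕ} (S : Set X) (h : ℝ) (s₀ : X) (h0 : 0 < h)
    (hgeo : IsGeodesicD X (fun x y => dist x y)) (τ : ℕ → ℝ) (hτ : ∀ n, 0 < τ n)
    (c0X : Fin k → X) :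
    (n : ℕ) → (Fin (n + 1) → Fin k → GlueSp S h) → Fin k → X
  | 0, _, i => c0X i
  | n + 1, hist, i =>
    chasePt hgeo (shadow S h s₀ h0 hgeo τ hτ c0X n (fun j => hist j.castSucc) i)
      (projQ S h s₀ h0 (hist (Fin.last (n + 1)) i)) (τ (n + 1)) (hτ (n + 1))

lemma robberWins_hat_aux {k : ℕ} {M ε : ℝ} (hM : 0 < M) (hε : 0 < ε) (hεh : ε ≤ h)
    (hdM : ∀ x y : X, dist x y ≤ h - M) (hgeo : IsGeodesicD X (fun x y => dist x y))
    (s₀ : X) (τ : ℕ → ℝ) (hτp : ∀ n, 0 < τ n) (hτM : ∀ n, τ n ≤ M)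
    (hrob : RobberWins X (fun x y => dist x y) k τ ε) :
    RobberWins (GlueSp S h) (hatDist S h) k τ (ε / 3) := by
  have h0 : 0 < h := by
    have h1 := dist_nonneg (x := s₀) (y := s₀)
    have h2 := hdM s₀ s₀
    linarith
  have hb : ∀ x y : X, dist x y ≤ h := fun x y => by
    have := hdM x y
    have := hM
    linarith
  obtain ⟨r0X, c0X, ρX, hρX⟩ := hrob
  refine ⟨iotaX S h r0X, fun i => iotaX S h (c0X i),
    fun n hist => iotaX S h (ρX n (fun j i => shadow S h s₀ h0 hgeo τ hτp c0X (j : ℕ)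
      (fun l : Fin ((j : ℕ) + 1) =>
        hist ⟨(l : ℕ), by have := l.isLt; have := j.isLt; omega⟩) i)), ?_⟩
  intro c hc0 hcleg
  set csh : ℕ → Fin k → X := fun n => shadow S h s₀ h0 hgeo τ hτp c0X n (fun j => c (j : ℕ))
    with hcsh
  have hcsh0 : csh 0 = c0X := rfl
  have hcshsucc : ∀ n i, csh (n + 1) i
      = chasePt hgeo (csh n i) (projQ S h s₀ h0 (c (n + 1) i)) (τ (n + 1)) (hτp (n + 1)) :=
    fun n i => rfl
  have hcshleg : ∀ n i, dist (csh n i) (csh (n + 1) i) ≤ τ (n + 1) := by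
    intro n i
    rw [hcshsucc n i]
    exact chasePt_le hgeo _ _ _ _
  obtain ⟨hrXleg, hmargX⟩ := hρX csh hcsh0 hcshleg
  set rX : ℕ → X := robTraj r0X ρX csh with hrX
  have hr'eq : ∀ n, robTraj (iotaX S h r0X)
      (fun n hist => iotaX S h (ρX n (fun j i => shadow S h s₀ h0 hgeo τ hτp c0X (j : ℕ)
        (fun l : Fin ((j : ℕ) + 1) =>
          hist ⟨(l : ℕ), by have := l.isLt; have := j.isLt; omega⟩) i))) c n
      = iotaX S h (rX n) := by
    intro n
    cases n with
    | zero => rfl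
    | succ n => rfl
  have hinv : ∀ n i, dist (csh n i) (projQ S h s₀ h0 (c n i)) ≤ HtQ S h (c n i) := by
    intro n
    induction n with
    | zero =>
      intro i
      have hce : c 0 i = iotaX S h (c0X i) := by rw [hc0]
      rw [hce]
      have e1 : projQ S h s₀ h0 (iotaX S h (c0X i)) = c0X i := rfl
      have e2 : HtQ S h (iotaX S h (c0X i)) = 0 := rfl
      rw [e1, e2, hcsh0]
      simp
    | succ n ih =>
      intro i
      refine shadow_step hb hM hdM h0 hgeo s₀ (hτM (n + 1)) (hcleg n i) ?_ (ih i)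
      rw [hcshsucc n i]
      exact chasePt_close hgeo _ _ _ _
  constructor
  · intro n
    rw [hr'eq n, hr'eq (n + 1)]
    exact le_trans (hatDist_iota_le hgeo _ _) (hrXleg n)
  · intro n i
    rw [hr'eq n]
    exact margin_lemma hb hM hdM h0 hgeo s₀ hε hεh (hinv n i) (hmargX n i)

end HatAux

/-- Let `(X,d)` be a game space, `S ⊆ X` a nonempty compact subset,
`k ∈ ℕ`, `M > 0`, `ε ∈ (0,h]` with `h ≥ M + diam X`. If the robber has a strategy against
`k` cops on `X` with agility function `τ ≤ M` (divergent, positive) guaranteeing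
`d(rⁿ,cⁿᵢ) > ε` against every cop play, then he has a strategy against `k` cops on
`X_{h,S}` with the same agility function guaranteeing `d'(rⁿ,cⁿᵢ) > ε/3`; in particular
`k` cops do not have a winning strategy on `X_{h,S}`. -/
theorem robberWins_hat {X : Type*} [MetricSpace X]
    (hX : GameSpaceD X (fun x y => dist x y)) (S : Set X) (hS : IsCompact S)
    (hSne : S.Nonempty) (k : ℕ) (M ε h : ℝ) (hM : 0 < M) (hε : 0 < ε) (hεh : ε ≤ h)
    (hh : M + Metric.diam (Set.univ : Set X) ≤ h) (τ : ℕ → ℝ) (hτ : IsAgility τ)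
    (hτM : ∀ n, τ n ≤ M) (hrob : RobberWins X (fun x y => dist x y) k τ ε) :
    RobberWins (GlueSp S h) (hatDist S h) k τ (ε / 3) ∧
      ¬ CopsWinWith (GlueSp S h) (hatDist S h) k := by
  obtain ⟨hne, hmet, hcomp, hgeo⟩ := hX
  have hdM : ∀ x y : X, dist x y ≤ h - M := fun x y => by
    have h1 := HatAux.dist_le_diam_of_compactD hcomp x y
    linarith
  have hRW := HatAux.robberWins_hat_aux (S := S) hM hε hεh hdM hgeo hSne.some τ hτ.1 hτM hrob
  exact ⟨hRW, HatAux.robberWins_no_cops _ τ (ε / 3) hτ (by linarith)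
    (fun a => le_of_eq (HatAux.hatDist_self a)) hRW⟩
end

section
/- Let (X,d) be a game space, S ⊆ X a nonempty compact subset, and h > 0. Then for every point x of X ∪ cyl(h,S) ⊆ X_{h,S}, the distance from x to its trace equals its height: d'(x, π(x)) = hei(x). -/
/-!
Game of Cops and Robber on metric spaces, following Mohar, formalized relative to an
explicit distance function `d : Y → Y → ℝ`.
-/

open Set Filter Topology

section Trace

variable {X : Type*} [MetricSpace X]

/-- Points of the subset `X ∪ cyl(h,S)` of `X_{h,S}` (before gluing). -/
abbrev BasePt (S : Set X) (h : ℝ) : Type _ := X ⊕ CylPt S h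

/-- The trace `π` of a point of `X ∪ cyl(h,S)`: `π(x) = x` for `x ∈ X` and `π((s,t)) = s`
for cylinder points. -/
def trace {S : Set X} {h : ℝ} : BasePt S h → X
  | Sum.inl x => x
  | Sum.inr p => (p.1 : X)

/-- The height of a point of `X ∪ cyl(h,S)`: `0` on `X`, and `t` at a cylinder point
`(s,t)`. -/
def height {S : Set X} {h : ℝ} : BasePt S h → ℝ
  | Sum.inl _ => 0
  | Sum.inr p => (p.2 : ℝ)

/-- The canonical inclusion `X ∪ cyl(h,S) → X_{h,S}`. -/
def baseEmb {S : Set X} {h : ℝ} : BasePt S h → GlueSp S h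
  | Sum.inl x => Quot.mk _ (Sum.inl x)
  | Sum.inr p => Quot.mk _ (Sum.inr (Sum.inl p))

end Trace

section Proof5

variable {X : Type*} [MetricSpace X] {S : Set X} {h : ℝ}

/-- The height function on the disjoint union. -/
noncomputable def Hgt (S : Set X) (h : ℝ) : PrePt S h → ℝ
  | Sum.inl _ => 0
  | Sum.inr (Sum.inl p) => (p.2 : ℝ)
  | Sum.inr (Sum.inr p) => h + (p.2 : ℝ)

lemma Hgt_glue : ∀ a b : PrePt S h, Glue S h a b → Hgt S h a = Hgt S h b := by
  intro a b g
  cases g with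
  | base s t ht => simp [Hgt, ht]
  | mid s t u ht hu => simp [Hgt, ht, hu]
  | apex p q hp hq => simp [Hgt, hp, hq]

/-- The height function descends to the glued space. -/
noncomputable def HgtQ (S : Set X) (h : ℝ) : GlueSp S h → ℝ :=
  Quot.lift (Hgt S h) (Hgt_glue)

lemma hgt_lip (a b : PrePt S h) :
    ENNReal.ofReal |Hgt S h a - Hgt S h b| ≤ preDist S h a b := by
  rcases a with x | p | p <;> rcases b with y | q | q <;>
    simp only [preDist, Hgt, le_top] <;> apply ENNReal.ofReal_le_ofReal
  · simp [dist_nonneg]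
  · have := dist_nonneg (x := (p.1 : X)) (y := (q.1 : X))
    rw [cylDist]
    have := abs_sub_comm ((p.2 : ℝ)) ((q.2 : ℝ))
    have h1 : |(p.2 : ℝ) - (q.2 : ℝ)| ≤ dist (p.1 : X) (q.1 : X) + |(p.2 : ℝ) - (q.2 : ℝ)| := by
      linarith [dist_nonneg (x := (p.1 : X)) (y := (q.1 : X))]
    linarith [h1]
  · rw [topDist]
    have hp2 := p.2.2.2
    have hq2 := q.2.2.2
    have h1 : |(h + (p.2 : ℝ)) - (h + (q.2 : ℝ))| = |(p.2 : ℝ) - (q.2 : ℝ)| := by ring_nf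
    rw [h1]
    refine le_min ?_ ?_
    · linarith [dist_nonneg (x := (p.1 : X)) (y := (q.1 : X)), le_abs_self ((p.2:ℝ) - (q.2:ℝ))]
    · rw [abs_sub_le_iff]; constructor <;> linarith

lemma piece_bound (p : ℝ → PrePt S h) :
    ENNReal.ofReal |Hgt S h (p 0) - Hgt S h (p 1)| ≤ elen (preDist S h) p := by
  refine le_trans (hgt_lip _ _) ?_
  have hmono : Monotone (fun i : ℕ => if i = 0 then (0 : ℝ) else 1) := by
    intro i j hij
    dsimp only
    split_ifs with h1 h2 h2 <;> norm_num
    omega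
  have hmem : ∀ i : ℕ, (if i = 0 then (0 : ℝ) else 1) ∈ Set.Icc (0 : ℝ) 1 := by
    intro i; split_ifs <;> simp
  have := le_iSup
    (fun q : ℕ × {u : ℕ → ℝ // Monotone u ∧ ∀ i, u i ∈ Set.Icc (0 : ℝ) 1} =>
      ∑ i ∈ Finset.range q.1, preDist S h (p (q.2.1 i)) (p (q.2.1 (i + 1))))
    (⟨1, ⟨fun i => if i = 0 then (0 : ℝ) else 1, hmono, hmem⟩⟩)
  simpa [elen] using this

lemma len_lower {a b : GlueSp S h}
    (P : PiecewisePath (preDist S h) (Glue S h) a b) :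
    ENNReal.ofReal |HgtQ S h a - HgtQ S h b| ≤ P.len := by
  have key : ∀ n (hn : n ≤ P.m),
      ENNReal.ofReal |Hgt S h (P.piece 0 0) - Hgt S h (P.piece ⟨n, Nat.lt_succ_of_le hn⟩ 1)| ≤
        ∑ i ∈ Finset.range (n + 1),
          elen (preDist S h) (P.piece ⟨min i P.m, by omega⟩) := by
    intro n
    induction n with
    | zero =>
      intro hn
      have h0 : (⟨min 0 P.m, by omega⟩ : Fin (P.m + 1)) = 0 := by
        apply Fin.ext; simp
      simpa [h0] using piece_bound (P.piece 0)
    | succ n ih =>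
      intro hn
      have hn' : n ≤ P.m := by omega
      have hlink := P.link ⟨n, hn⟩
      have heq : Hgt S h (P.piece ⟨n, Nat.lt_succ_of_le hn'⟩ 1) =
          Hgt S h (P.piece ⟨n + 1, Nat.lt_succ_of_le hn⟩ 0) := by
        have h2 := congrArg (HgtQ S h) hlink
        have hc : (Fin.castSucc ⟨n, hn⟩ : Fin (P.m + 1)) = ⟨n, Nat.lt_succ_of_le hn'⟩ := by
          apply Fin.ext; simp
        have hs : (Fin.succ ⟨n, hn⟩ : Fin (P.m + 1)) = ⟨n + 1, Nat.lt_succ_of_le hn⟩ := by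
          apply Fin.ext; simp
        rw [hc, hs] at h2
        exact h2
      have tri : |Hgt S h (P.piece 0 0) - Hgt S h (P.piece ⟨n + 1, Nat.lt_succ_of_le hn⟩ 1)| ≤
          |Hgt S h (P.piece 0 0) - Hgt S h (P.piece ⟨n, Nat.lt_succ_of_le hn'⟩ 1)| +
          |Hgt S h (P.piece ⟨n + 1, Nat.lt_succ_of_le hn⟩ 0) -
            Hgt S h (P.piece ⟨n + 1, Nat.lt_succ_of_le hn⟩ 1)| := by
        rw [heq]
        exact abs_sub_le _ _ _
      calc ENNReal.ofReal |Hgt S h (P.piece 0 0) -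
              Hgt S h (P.piece ⟨n + 1, Nat.lt_succ_of_le hn⟩ 1)|
          ≤ ENNReal.ofReal (|Hgt S h (P.piece 0 0) -
              Hgt S h (P.piece ⟨n, Nat.lt_succ_of_le hn'⟩ 1)| +
            |Hgt S h (P.piece ⟨n + 1, Nat.lt_succ_of_le hn⟩ 0) -
              Hgt S h (P.piece ⟨n + 1, Nat.lt_succ_of_le hn⟩ 1)|) :=
            ENNReal.ofReal_le_ofReal tri
        _ ≤ ENNReal.ofReal |Hgt S h (P.piece 0 0) -
              Hgt S h (P.piece ⟨n, Nat.lt_succ_of_le hn'⟩ 1)| +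
            ENNReal.ofReal |Hgt S h (P.piece ⟨n + 1, Nat.lt_succ_of_le hn⟩ 0) -
              Hgt S h (P.piece ⟨n + 1, Nat.lt_succ_of_le hn⟩ 1)| := ENNReal.ofReal_add_le
        _ ≤ (∑ i ∈ Finset.range (n + 1),
              elen (preDist S h) (P.piece ⟨min i P.m, by omega⟩)) +
            elen (preDist S h) (P.piece ⟨n + 1, Nat.lt_succ_of_le hn⟩) :=
            add_le_add (ih hn') (piece_bound _)
        _ = ∑ i ∈ Finset.range (n + 2),
              elen (preDist S h) (P.piece ⟨min i P.m, by omega⟩) := by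
            rw [Finset.sum_range_succ _ (n + 1)]
            have hi : (⟨min (n + 1) P.m, by omega⟩ : Fin (P.m + 1)) =
                ⟨n + 1, Nat.lt_succ_of_le hn⟩ := Fin.ext (by simp [min_eq_left hn])
            rw [hi]
  have hfin := key P.m le_rfl
  have ha : HgtQ S h a = Hgt S h (P.piece 0 0) := (congrArg (HgtQ S h) P.first).symm
  have hb : HgtQ S h b = Hgt S h (P.piece (Fin.last P.m) 1) := (congrArg (HgtQ S h) P.last).symm
  have hlast : (⟨P.m, Nat.lt_succ_of_le le_rfl⟩ : Fin (P.m + 1)) = Fin.last P.m := rfl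
  rw [hlast] at hfin
  rw [ha, hb]
  refine hfin.trans (le_of_eq ?_)
  rw [PiecewisePath.len, ← Fin.sum_univ_eq_sum_range
    (fun i => elen (preDist S h) (P.piece ⟨min i P.m, by omega⟩)) (P.m + 1)]
  refine Finset.sum_congr rfl fun i _ => ?_
  have hi : (⟨min (i : ℕ) P.m, by omega⟩ : Fin (P.m + 1)) = i :=
    Fin.ext (by simp [Nat.min_eq_left (Nat.lt_succ_iff.mp i.isLt)])
  rw [hi]

lemma elen_zero {Y : Type*} {c : Y → Y → ENNReal} {p : ℝ → Y}
    (hc : ∀ a b : ℝ, c (p a) (p b) = 0) : elen c p = 0 := by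
  refine le_antisymm ?_ (zero_le)
  refine iSup_le fun q => le_of_eq ?_
  exact Finset.sum_eq_zero fun i _ => hc _ _

end Proof5

section Proof5b

variable {X : Type*} [MetricSpace X]

/-- Clamp to `[0,1]`. -/
noncomputable def clR (u : ℝ) : ℝ := (Set.projIcc (0 : ℝ) 1 zero_le_one u : ℝ)

lemma clR_mem (u : ℝ) : clR u ∈ Set.Icc (0 : ℝ) 1 := (Set.projIcc (0 : ℝ) 1 zero_le_one u).2

lemma clR_zero : clR 0 = 0 := by simp [clR]

lemma clR_one : clR 1 = 1 := by simp [clR]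

lemma clR_lip (u u' : ℝ) : |clR u - clR u'| ≤ |u - u'| := by
  have := (LipschitzWith.projIcc (zero_le_one (α := ℝ))).dist_le_mul u u'
  simpa [clR, Subtype.dist_eq, Real.dist_eq] using this

lemma clR_mono : Monotone clR := fun a b hab => Set.monotone_projIcc zero_le_one hab

/-- The vertical coordinate of the descending path in the cylinder. -/
noncomputable def vv (h : ℝ) (t : ↥(Set.Icc (0 : ℝ) h)) (u : ℝ) : ℝ := (t : ℝ) * (1 - clR u)

lemma vv_mem (h : ℝ) (t : ↥(Set.Icc (0 : ℝ) h)) (u : ℝ) : vv h t u ∈ Set.Icc (0 : ℝ) h := by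
  have ht0 := t.2.1
  have hth := t.2.2
  have h1 := (clR_mem u).1
  have h2 := (clR_mem u).2
  constructor
  · exact mul_nonneg ht0 (by linarith)
  · unfold vv; nlinarith

lemma vv_le (h : ℝ) (t : ↥(Set.Icc (0 : ℝ) h)) (u : ℝ) : vv h t u ≤ (t : ℝ) := by
  have ht0 := t.2.1
  have h1 := (clR_mem u).1
  unfold vv
  nlinarith [mul_nonneg ht0 h1]

lemma vv_nonneg (h : ℝ) (t : ↥(Set.Icc (0 : ℝ) h)) (u : ℝ) : 0 ≤ vv h t u :=
  (vv_mem h t u).1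

lemma vv_zero (h : ℝ) (t : ↥(Set.Icc (0 : ℝ) h)) : vv h t 0 = (t : ℝ) := by
  simp [vv, clR_zero]

lemma vv_one (h : ℝ) (t : ↥(Set.Icc (0 : ℝ) h)) : vv h t 1 = 0 := by
  simp [vv, clR_one]

lemma vv_anti (h : ℝ) (t : ↥(Set.Icc (0 : ℝ) h)) : Antitone (vv h t) := by
  intro a b hab
  have := clR_mono hab
  have ht0 := t.2.1
  unfold vv
  nlinarith

lemma vv_lip (h : ℝ) (t : ↥(Set.Icc (0 : ℝ) h)) (u u' : ℝ) :
    |vv h t u - vv h t u'| ≤ (t : ℝ) * |u - u'| := by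
  have ht0 := t.2.1
  have : vv h t u - vv h t u' = (t : ℝ) * (clR u' - clR u) := by unfold vv; ring
  rw [this, abs_mul, abs_of_nonneg ht0, abs_sub_comm]
  exact mul_le_mul_of_nonneg_left (clR_lip u u') ht0

lemma exists_ofReal_le {ε : ENNReal} (hε : 0 < ε) :
    ∃ e : ℝ, 0 < e ∧ ENNReal.ofReal e ≤ ε := by
  rcases eq_or_ne ε ⊤ with rfl | hne
  · exact ⟨1, one_pos, le_top⟩
  · exact ⟨ε.toReal, ENNReal.toReal_pos hε.ne' hne, (ENNReal.ofReal_toReal hne).le⟩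

/-- The descending path in the cylinder from `(s,t)` to `(s,0)`. -/
noncomputable def cylPath (S : Set X) (h : ℝ) (s : ↥S) (t : ↥(Set.Icc (0 : ℝ) h)) :
    ℝ → PrePt S h := fun u => Sum.inr (Sum.inl (s, ⟨vv h t u, vv_mem h t u⟩))

lemma cylPath_dist (S : Set X) (h : ℝ) (s : ↥S) (t : ↥(Set.Icc (0 : ℝ) h)) (u u' : ℝ) :
    preDist S h (cylPath S h s t u) (cylPath S h s t u') =
      ENNReal.ofReal |vv h t u - vv h t u'| := by
  simp [cylPath, preDist, cylDist]

lemma cylPath_cont (S : Set X) (h : ℝ) (s : ↥S) (t : ↥(Set.Icc (0 : ℝ) h)) :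
    econt (preDist S h) (cylPath S h s t) := by
  intro u _ ε hε
  obtain ⟨e, he0, hee⟩ := exists_ofReal_le hε
  have htpos : (0 : ℝ) < (t : ℝ) + 1 := by have := t.2.1; linarith
  refine ⟨e / ((t : ℝ) + 1), div_pos he0 htpos, fun u' _ hu' => ?_⟩
  rw [cylPath_dist]
  refine lt_of_lt_of_le ?_ hee
  rw [ENNReal.ofReal_lt_ofReal_iff he0]
  have h1 : |vv h t u - vv h t u'| ≤ (t : ℝ) * |u' - u| := by
    rw [abs_sub_comm u' u]
    exact vv_lip h t u u'
  have h2 : (t : ℝ) * |u' - u| ≤ (t : ℝ) * (e / ((t : ℝ) + 1)) :=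
    mul_le_mul_of_nonneg_left hu'.le t.2.1
  have h3 : (t : ℝ) * (e / ((t : ℝ) + 1)) < e := by
    rw [mul_div_assoc']
    rw [div_lt_iff₀ htpos]
    nlinarith [t.2.1]
  linarith

lemma cylPath_elen (S : Set X) (h : ℝ) (s : ↥S) (t : ↥(Set.Icc (0 : ℝ) h)) :
    elen (preDist S h) (cylPath S h s t) ≤ ENNReal.ofReal (t : ℝ) := by
  refine iSup_le fun q => ?_
  obtain ⟨n, u, humono, humem⟩ := q
  dsimp only
  have hterm : ∀ i ∈ Finset.range n,
      preDist S h (cylPath S h s t (u i)) (cylPath S h s t (u (i + 1))) =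
        ENNReal.ofReal (vv h t (u i) - vv h t (u (i + 1))) := by
    intro i _
    rw [cylPath_dist]
    congr 1
    exact abs_of_nonneg (by linarith [vv_anti h t (humono (Nat.le_succ i))])
  rw [Finset.sum_congr rfl hterm,
    ← ENNReal.ofReal_sum_of_nonneg (fun i _ => by linarith [vv_anti h t (humono (Nat.le_succ i))]),
    Finset.sum_range_sub' (fun i => vv h t (u i))]
  exact ENNReal.ofReal_le_ofReal (by linarith [vv_le h t (u 0), vv_nonneg h t (u n)])

end Proof5b

/-- equation (hei) of the paper. In `X_{h,S}`, every point `x` of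
`X ∪ cyl(h,S)` satisfies `d'(x, π(x)) = hei(x)`. -/
theorem dist_trace_eq_height {X : Type*} [MetricSpace X]
    (hX : GameSpaceD X (fun x y => dist x y)) (S : Set X) (hS : IsCompact S)
    (hSne : S.Nonempty) (h : ℝ) (hh : 0 < h) :
    ∀ w : BasePt S h, hatDist S h (baseEmb w) (iotaX S h (trace w)) = height w := by
  intro w
  cases w with
  | inl x =>
    have hE : hatDistE S h (baseEmb (Sum.inl x : BasePt S h)) (iotaX S h (trace (Sum.inl x : BasePt S h))) = 0 := by
      refine le_antisymm ?_ (zero_le)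
      let P : PiecewisePath (preDist S h) (Glue S h)
          (baseEmb (Sum.inl x : BasePt S h)) (iotaX S h (trace (Sum.inl x : BasePt S h))) :=
        { m := 0
          piece := fun _ _ => Sum.inl x
          cont := by
            intro i u hu ε hε
            exact ⟨1, one_pos, fun u' _ _ => by simpa [preDist] using hε⟩
          first := rfl
          last := rfl
          link := fun i => i.elim0 }
      have hlen : P.len = 0 := by
        rw [PiecewisePath.len]
        apply Finset.sum_eq_zero
        intro i _
        refine elen_zero fun a b => ?_
        show preDist S h (Sum.inl x) (Sum.inl x) = 0
        simp [preDist]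
      calc hatDistE S h (baseEmb (Sum.inl x : BasePt S h)) (iotaX S h (trace (Sum.inl x : BasePt S h)))
          ≤ P.len := iInf_le _ P
        _ = 0 := hlen
    simp [hatDist, hE, height]
  | inr p =>
    obtain ⟨s, t⟩ := p
    have hE : hatDistE S h (baseEmb (Sum.inr (s, t) : BasePt S h)) (iotaX S h (trace (Sum.inr (s, t) : BasePt S h))) =
        ENNReal.ofReal (t : ℝ) := by
      refine le_antisymm ?_ ?_
      · -- upper bound: explicit path down the cylinder
        let P : PiecewisePath (preDist S h) (Glue S h)
            (baseEmb (Sum.inr (s, t) : BasePt S h)) (iotaX S h (trace (Sum.inr (s, t) : BasePt S h))) :=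
          { m := 1
            piece := ![cylPath S h s t, fun _ => Sum.inl (s : X)]
            cont := by
              intro i
              fin_cases i
              · simpa using cylPath_cont S h s t
              · intro u hu ε hε
                exact ⟨1, one_pos, fun u' _ _ => by simpa [preDist] using hε⟩
            first := by
              show Quot.mk _ (cylPath S h s t 0) = _
              have : (⟨vv h t 0, vv_mem h t 0⟩ : ↥(Set.Icc (0 : ℝ) h)) = t :=
                Subtype.ext (vv_zero h t)
              show Quot.mk _ (Sum.inr (Sum.inl (s, ⟨vv h t 0, vv_mem h t 0⟩))) =
                Quot.mk _ (Sum.inr (Sum.inl (s, t)))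
              rw [this]
            last := rfl
            link := by
              intro i
              fin_cases i
              show Quot.mk _ (cylPath S h s t 1) = Quot.mk _ (Sum.inl (s : X))
              exact (Quot.sound (Glue.base s ⟨vv h t 1, vv_mem h t 1⟩ (vv_one h t))).symm }
        have hlen : P.len ≤ ENNReal.ofReal (t : ℝ) := by
          rw [PiecewisePath.len]
          have h0 : elen (preDist S h) (P.piece 0) ≤ ENNReal.ofReal (t : ℝ) := by
            show elen (preDist S h) (![cylPath S h s t, fun _ => Sum.inl (s : X)] 0) ≤ _
            simpa using cylPath_elen S h s t
          have h1 : elen (preDist S h) (P.piece 1) = 0 := by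
            show elen (preDist S h) (![cylPath S h s t, fun _ => Sum.inl (s : X)] 1) = 0
            refine elen_zero fun a b => ?_
            simp [preDist]
          calc ∑ i : Fin (P.m + 1), elen (preDist S h) (P.piece i)
              = elen (preDist S h) (P.piece 0) + elen (preDist S h) (P.piece 1) :=
                Fin.sum_univ_two _
            _ ≤ ENNReal.ofReal (t : ℝ) + 0 := add_le_add h0 h1.le
            _ = ENNReal.ofReal (t : ℝ) := add_zero _
        exact le_trans (iInf_le _ P) hlen
      · -- lower bound via the height function
        refine le_iInf fun P => ?_
        have := len_lower P
        have ha : HgtQ S h (baseEmb (Sum.inr (s, t) : BasePt S h)) = (t : ℝ) := rfl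
        have hb : HgtQ S h (iotaX S h (trace (Sum.inr (s, t) : BasePt S h))) = 0 := rfl
        rw [ha, hb, sub_zero, abs_of_nonneg t.2.1] at this
        exact this
    show (hatDistE S h _ _).toReal = _
    rw [hE, ENNReal.toReal_ofReal t.2.1]
    rfl
end
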